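/- arXiv:2208.00307 — 6 statements merged into one kernel-verified Lean document; each statement's English description precedes it below -/
import Mathlib

section
/- Let H, U, Y be complex Hilbert spaces and A : H → H, B : U → H, C : H → Y bounded linear operators such that (A,C) is exponentially detectable. Then there exists a constant M > 0 such that for every T > 0, every u ∈ L²([0,T],U) and every x₀ ∈ H, the mild solution x(t) = exp(tA)x₀ + ∫₀ᵗ exp((t−s)A) B u(s) ds satisfies ‖x(T)‖² ≤ M ( ∫₀^T (‖C x(t)‖² + ‖u(t)‖²) dt + ‖x₀‖² ). -/
open MeasureTheory ContinuousLinearMap NormedSpace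
open scoped InnerProductSpace

set_option maxHeartbeats 1000000

noncomputable section

variable {H U Y : Type*}
  [NormedAddCommGroup H] [InnerProductSpace ℂ H] [CompleteSpace H]
  [NormedAddCommGroup U] [InnerProductSpace ℂ U] [CompleteSpace U]
  [NormedAddCommGroup Y] [InnerProductSpace ℂ Y] [CompleteSpace Y]

/-- A bounded operator `G` generates an exponentially stable (uniformly continuous)
semigroup `t ↦ exp (t • G)`. -/
def ExpStable (G : H →L[ℂ] H) : Prop :=
  ∃ m > 0, ∃ ω > 0, ∀ t : ℝ, 0 ≤ t →
    ‖NormedSpace.exp (t • G)‖ ≤ m * Real.exp (-ω * t)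

/-- Mild solution of `ẋ = A x + B u`, `x 0 = x₀`:
`x t = exp (t A) x₀ + ∫₀ᵗ exp ((t - s) A) (B (u s)) ds`. -/
def mildSol (A : H →L[ℂ] H) (B : U →L[ℂ] H) (u : ℝ → U) (x₀ : H) (t : ℝ) : H :=
  NormedSpace.exp (t • A) x₀ +
    ∫ s in (0:ℝ)..t, NormedSpace.exp ((t - s) • A) (B (u s))

/-- Generalized linear-quadratic running cost
`ℓ(x,u) = ‖Cx‖² + ‖Ku‖² + 2 Re⟨z,x⟩ + 2 Re⟨v,u⟩`. -/
def runCost (C : H →L[ℂ] Y) (K : U →L[ℂ] U) (z : H) (v : U) (x : H) (u : U) : ℝ :=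
  ‖C x‖ ^ 2 + ‖K u‖ ^ 2 + 2 * (⟪z, x⟫_ℂ).re + 2 * (⟪v, u⟫_ℂ).re

/-- The cost functional `J_T(u) = ∫₀ᵀ ℓ(x(t), u(t)) dt` along the mild solution
with initial state `x₀`. -/
def costJ (A : H →L[ℂ] H) (B : U →L[ℂ] H) (C : H →L[ℂ] Y) (K : U →L[ℂ] U)
    (z : H) (v : U) (T : ℝ) (x₀ : H) (u : ℝ → U) : ℝ :=
  ∫ t in (0:ℝ)..T, runCost C K z v (mildSol A B u x₀ t) (u t)

instance instNormedAlgebraRatCLM : NormedAlgebra ℚ (H →L[ℂ] H) :=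
  NormedAlgebra.restrictScalars ℚ ℂ (H →L[ℂ] H)

lemma exp_smul_continuous (P : H →L[ℂ] H) : Continuous fun t : ℝ => exp (t • P) :=
  exp_continuous.comp (continuous_id.smul continuous_const)

lemma exp_bound_compact (P : H →L[ℂ] H) (T : ℝ) :
    ∃ K > 0, ∀ τ : ℝ, |τ| ≤ T → ‖exp (τ • P)‖ ≤ K := by
  obtain ⟨C, hC⟩ := isCompact_Icc.exists_bound_of_continuousOn
    (f := fun τ : ℝ => exp (τ • P)) (exp_smul_continuous P).continuousOn (s := Set.Icc (-T) T)
  refine ⟨max C 1, lt_of_lt_of_le one_pos (le_max_right _ _), fun τ hτ => ?_⟩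
  exact le_trans (hC τ (Set.mem_Icc.mpr (abs_le.mp hτ))) (le_max_left _ _)

lemma aesm_apply {α : Type*} [MeasurableSpace α] [TopologicalSpace α] [OpensMeasurableSpace α] [SecondCountableTopology α] {μ : Measure α}
    (Φ : α → (H →L[ℂ] H)) (hΦ : Continuous Φ) {ψ : α → H}
    (hψ : AEStronglyMeasurable ψ μ) :
    AEStronglyMeasurable (fun a => Φ a (ψ a)) μ :=
  haveI : SecondCountableTopologyEither α (H →L[ℂ] H) :=
    ⟨Or.inl inferInstance⟩
  (isBoundedBilinearMap_apply (𝕜 := ℂ) (E := H) (F := H)).continuous.comp_aestronglyMeasurable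
    (hΦ.stronglyMeasurable.aestronglyMeasurable.prodMk hψ)

/-- generic integrability of `s ↦ Φ s (B (u s))` on `[0,T]`. -/
lemma integrableOn_op_apply_u {T : ℝ} (Φ : ℝ → (H →L[ℂ] H)) (hΦ : Continuous Φ)
    (B : U →L[ℂ] H) {u : ℝ → U}
    (hum : AEStronglyMeasurable u (volume.restrict (Set.Icc 0 T)))
    (huI : IntegrableOn u (Set.Icc 0 T)) :
    IntegrableOn (fun s => Φ s (B (u s))) (Set.Icc 0 T) := by
  obtain ⟨K, hK⟩ := isCompact_Icc.exists_bound_of_continuousOn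
    (f := Φ) hΦ.continuousOn (s := Set.Icc (0:ℝ) T)
  refine Integrable.mono' ((huI.norm.const_mul (K * ‖B‖))) ?_ ?_
  · exact aesm_apply Φ hΦ (B.continuous.comp_aestronglyMeasurable hum)
  · refine (ae_restrict_mem measurableSet_Icc).mono fun s hs => ?_
    calc ‖Φ s (B (u s))‖ ≤ ‖Φ s‖ * ‖B (u s)‖ := (Φ s).le_opNorm _
      _ ≤ ‖Φ s‖ * (‖B‖ * ‖u s‖) := by
          exact mul_le_mul_of_nonneg_left (B.le_opNorm _) (norm_nonneg _)
      _ ≤ K * (‖B‖ * ‖u s‖) := by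
          refine mul_le_mul_of_nonneg_right (hK s hs) (by positivity)
      _ = K * ‖B‖ * ‖u s‖ := by ring

lemma mildSol_eq_factored (A : H →L[ℂ] H) (B : U →L[ℂ] H) (u : ℝ → U) (x₀ : H) (t : ℝ)
    (hw : IntervalIntegrable (fun s => exp ((-s) • A) (B (u s))) volume 0 t) :
    mildSol A B u x₀ t = exp (t • A) (x₀ + ∫ s in (0:ℝ)..t, exp ((-s) • A) (B (u s))) := by
  unfold mildSol
  rw [map_add]
  congr 1
  rw [← ContinuousLinearMap.intervalIntegral_comp_comm _ hw]
  refine intervalIntegral.integral_congr fun s _ => ?_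
  have h1 : (t - s) • A = t • A + (-s) • A := by rw [← add_smul]; ring_nf
  have h2 : Commute (t • A) ((-s) • A) := ((Commute.refl A).smul_left t).smul_right (-s)
  rw [h1, exp_add_of_commute h2]
  rfl

lemma mildSol_continuousOn (A : H →L[ℂ] H) (B : U →L[ℂ] H) (u : ℝ → U) (x₀ : H) {T : ℝ}
    (hT : 0 ≤ T)
    (hum : AEStronglyMeasurable u (volume.restrict (Set.Icc 0 T)))
    (huI : IntegrableOn u (Set.Icc 0 T)) :
    ContinuousOn (mildSol A B u x₀) (Set.Icc 0 T) := by
  have hwint : IntegrableOn (fun s => exp ((-s) • A) (B (u s))) (Set.Icc 0 T) :=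
    integrableOn_op_apply_u (fun s => exp ((-s) • A))
      ((exp_smul_continuous A).comp continuous_neg) B hum huI
  have hC : ContinuousOn
      (fun t => exp (t • A) (x₀ + ∫ s in (0:ℝ)..t, exp ((-s) • A) (B (u s))))
      (Set.Icc 0 T) := by
    refine ContinuousOn.clm_apply (exp_smul_continuous A).continuousOn ?_
    refine continuousOn_const.add ?_
    have := intervalIntegral.continuousOn_primitive_interval
      (a := 0) (b := T) (μ := volume) (f := fun s => exp ((-s) • A) (B (u s))) ?_
    · rwa [Set.uIcc_of_le hT] at this
    · rwa [Set.uIcc_of_le hT]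
  refine hC.congr fun t ht => ?_
  refine mildSol_eq_factored A B u x₀ t ?_
  refine (hwint.mono_set ?_).intervalIntegrable
  rw [Set.uIcc_of_le ht.1]
  exact Set.Icc_subset_Icc le_rfl ht.2

lemma exp_comm_op (P : H →L[ℂ] H) (τ : ℝ) :
    P * exp (τ • P) = exp (τ • P) * P := by
  exact ((hasDerivAt_exp_smul_const' (𝕂 := ℝ) P τ).unique
    (hasDerivAt_exp_smul_const (𝕂 := ℝ) P τ))

lemma exp_perturb (P Q : H →L[ℂ] H) (t : ℝ) :
    exp (t • P) - exp (t • Q) =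
      ∫ s in (0:ℝ)..t, exp ((t - s) • P) * ((P - Q) * exp (s • Q)) := by
  have hconte : Continuous fun τ : ℝ => exp (τ • P) := by
    exact exp_smul_continuous P
  have hcontq : Continuous fun τ : ℝ => exp (τ • Q) := by
    exact exp_smul_continuous Q
  have hderiv : ∀ s ∈ Set.uIcc (0:ℝ) t,
      HasDerivAt (fun s : ℝ => exp ((t - s) • P) * exp (s • Q))
        (exp ((t - s) • P) * ((Q - P) * exp (s • Q))) s := by
    intro s _
    have hsub : HasDerivAt (fun s : ℝ => t - s) (-1 : ℝ) s := by
      simpa using (hasDerivAt_id s).const_sub t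
    have h1 : HasDerivAt (fun s : ℝ => exp ((t - s) • P))
        ((-1 : ℝ) • (P * exp ((t - s) • P))) s :=
      (hasDerivAt_exp_smul_const' (𝕂 := ℝ) P ((t : ℝ) - s)).scomp s hsub
    have h2 : HasDerivAt (fun s : ℝ => exp (s • Q)) (exp (s • Q) * Q) s :=
      hasDerivAt_exp_smul_const (𝕂 := ℝ) Q s
    have h3 := h1.mul h2
    have hcomm : exp (s • Q) * Q = Q * exp (s • Q) :=
      (hasDerivAt_exp_smul_const (𝕂 := ℝ) Q s).unique (hasDerivAt_exp_smul_const' (𝕂 := ℝ) Q s)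
    have hcommP : P * exp ((t - s) • P) = exp ((t - s) • P) * P := by
      have h5 := exp_comm_op P (t - s); exact h5
    rw [hcomm] at h3
    have heq : (-1 : ℝ) • (P * exp ((t - s) • P)) * exp (s • Q) +
        exp ((t - s) • P) * (Q * exp (s • Q)) =
        exp ((t - s) • P) * ((Q - P) * exp (s • Q)) := by
      rw [neg_one_smul, neg_mul, hcommP]; noncomm_ring
    exact heq ▸ h3
  have hint : IntervalIntegrable
      (fun s : ℝ => exp ((t - s) • P) * ((Q - P) * exp (s • Q))) volume 0 t := by
    apply Continuous.intervalIntegrable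
    exact (hconte.comp (continuous_const.sub continuous_id)).mul
      (continuous_const.mul (hcontq.comp continuous_id))
  have key := intervalIntegral.integral_eq_sub_of_hasDerivAt hderiv hint
  simp only [sub_self, zero_smul, exp_zero, one_mul, mul_one, sub_zero] at key
  calc exp (t • P) - exp (t • Q)
      = -(exp (t • Q) - exp (t • P)) := by abel
    _ = -∫ s in (0:ℝ)..t, exp ((t - s) • P) * ((Q - P) * exp (s • Q)) := by rw [key]
    _ = ∫ s in (0:ℝ)..t, exp ((t - s) • P) * ((P - Q) * exp (s • Q)) := by
        rw [← intervalIntegral.integral_neg]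
        congr 1
        funext s
        noncomm_ring

lemma integral_swap_triangle {E : Type*} [NormedAddCommGroup E] [NormedSpace ℝ E]
    [CompleteSpace E] {T : ℝ} (hT : 0 ≤ T) (f : ℝ → ℝ → E)
    (hf : Integrable (fun p : ℝ × ℝ => f p.1 p.2)
      ((volume.restrict (Set.Ioc 0 T)).prod (volume.restrict (Set.Ioc 0 T)))) :
    (∫ s in (0:ℝ)..T, ∫ r in (0:ℝ)..s, f s r) = ∫ r in (0:ℝ)..T, ∫ s in r..T, f s r := by
  set μ := volume.restrict (Set.Ioc (0:ℝ) T) with hμ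
  set g : ℝ × ℝ → E := fun p => Set.indicator {q : ℝ × ℝ | q.2 ≤ q.1} (fun q => f q.1 q.2) p
    with hgdef
  have hmeas_set : MeasurableSet {q : ℝ × ℝ | q.2 ≤ q.1} :=
    measurableSet_le measurable_snd measurable_fst
  have hg : Integrable g (μ.prod μ) := hf.indicator hmeas_set
  have hswap : (∫ s, ∫ r, g (s, r) ∂μ ∂μ) = ∫ r, ∫ s, g (s, r) ∂μ ∂μ :=
    integral_integral_swap hg
  have hL : (∫ s in (0:ℝ)..T, ∫ r in (0:ℝ)..s, f s r) = ∫ s, ∫ r, g (s, r) ∂μ ∂μ := by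
    rw [intervalIntegral.integral_of_le hT, hμ]
    refine setIntegral_congr_fun measurableSet_Ioc fun s hs => ?_
    have h1 : (∫ r, g (s, r) ∂μ) = ∫ r, Set.indicator (Set.Iic s) (fun r => f s r) r ∂μ := by
      refine integral_congr_ae (Filter.Eventually.of_forall fun r => ?_)
      simp [hgdef, Set.indicator_apply, Set.mem_Iic]
    rw [h1, integral_indicator measurableSet_Iic, hμ, Measure.restrict_restrict measurableSet_Iic]
    have h2 : Set.Iic s ∩ Set.Ioc 0 T = Set.Ioc 0 s := by
      ext r
      simp only [Set.mem_inter_iff, Set.mem_Iic, Set.mem_Ioc]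
      exact ⟨fun h => ⟨h.2.1, h.1⟩, fun h => ⟨h.2, h.1, h.2.trans hs.2⟩⟩
    rw [h2, intervalIntegral.integral_of_le hs.1.le]
  have hR : (∫ r in (0:ℝ)..T, ∫ s in r..T, f s r) = ∫ r, ∫ s, g (s, r) ∂μ ∂μ := by
    rw [intervalIntegral.integral_of_le hT, hμ]
    refine setIntegral_congr_fun measurableSet_Ioc fun r hr => ?_
    have h1 : (∫ s, g (s, r) ∂μ) = ∫ s, Set.indicator (Set.Ici r) (fun s => f s r) s ∂μ := by
      refine integral_congr_ae (Filter.Eventually.of_forall fun s => ?_)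
      simp [hgdef, Set.indicator_apply, Set.mem_Ici]
    rw [h1, integral_indicator measurableSet_Ici, hμ, Measure.restrict_restrict measurableSet_Ici]
    have h2 : Set.Ici r ∩ Set.Ioc 0 T = Set.Icc r T := by
      ext s
      simp only [Set.mem_inter_iff, Set.mem_Ici, Set.mem_Icc, Set.mem_Ioc]
      exact ⟨fun h => ⟨h.1, h.2.2⟩, fun h => ⟨h.1, hr.1.trans_le h.1, h.2⟩⟩
    rw [h2, integral_Icc_eq_integral_Ioc, intervalIntegral.integral_of_le hr.2]
  rw [hL, hR, hswap]

lemma mildSol_rep (A : H →L[ℂ] H) (B : U →L[ℂ] H) (LC : H →L[ℂ] H)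
    (u : ℝ → U) (x₀ : H) {T : ℝ} (hT : 0 ≤ T)
    (hum : AEStronglyMeasurable u (volume.restrict (Set.Icc 0 T)))
    (huI : IntegrableOn u (Set.Icc 0 T)) :
    mildSol A B u x₀ T =
      exp (T • (A + LC)) x₀
        + (∫ s in (0:ℝ)..T, exp ((T - s) • (A + LC)) (B (u s)))
        - ∫ s in (0:ℝ)..T, exp ((T - s) • (A + LC)) (LC (mildSol A B u x₀ s)) := by
  set P : H →L[ℂ] H := A + LC with hPdef
  have hPA : P - A = LC := add_sub_cancel_left A LC
  set x : ℝ → H := mildSol A B u x₀ with hxdef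
  have hx_cont : ContinuousOn x (Set.Icc 0 T) := mildSol_continuousOn A B u x₀ hT hum huI
  have hexpP : Continuous fun s : ℝ => exp ((T - s) • P) :=
    (exp_smul_continuous P).comp (continuous_const.sub continuous_id)
  -- integrability of the full feedback integrand
  have hfull : IntervalIntegrable (fun s => exp ((T - s) • P) (LC (x s))) volume 0 T := by
    apply ContinuousOn.intervalIntegrable
    rw [Set.uIcc_of_le hT]
    exact ContinuousOn.clm_apply hexpP.continuousOn (LC.continuous.comp_continuousOn hx_cont)
  set g₁ : ℝ → H := fun s => exp ((T - s) • P) (LC (exp (s • A) x₀)) with hg₁def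
  set g₂ : ℝ → H := fun s =>
    exp ((T - s) • P) (LC (∫ r in (0:ℝ)..s, exp ((s - r) • A) (B (u r)))) with hg₂def
  have h1 : IntervalIntegrable g₁ volume 0 T := by
    apply Continuous.intervalIntegrable
    exact hexpP.clm_apply (LC.continuous.comp
      ((exp_smul_continuous A).clm_apply continuous_const))
  have hX : ∀ s, x s - exp (s • A) x₀ = ∫ r in (0:ℝ)..s, exp ((s - r) • A) (B (u r)) := by
    intro s
    simp only [hxdef, mildSol]
    abel
  have hg₂eq : g₂ = fun s => exp ((T - s) • P) (LC (x s)) - g₁ s := by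
    funext s
    rw [hg₂def, hg₁def]
    simp only [← hX s, map_sub]
  have h2 : IntervalIntegrable g₂ volume 0 T := by
    rw [hg₂eq]; exact hfull.sub h1
  have hsplit : (∫ s in (0:ℝ)..T, exp ((T - s) • P) (LC (x s)))
      = (∫ s in (0:ℝ)..T, g₁ s) + ∫ s in (0:ℝ)..T, g₂ s := by
    rw [← intervalIntegral.integral_add h1 h2]
    refine intervalIntegral.integral_congr fun s _ => ?_
    rw [hg₂eq]
    simp
  -- Step C : the x₀ part
  have hI₁ : (∫ s in (0:ℝ)..T, g₁ s) = (exp (T • P) - exp (T • A)) x₀ := by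
    have hop1 : IntervalIntegrable
        (fun s => exp ((T - s) • P) * (LC * exp (s • A))) volume 0 T := by
      apply Continuous.intervalIntegrable
      exact hexpP.mul (continuous_const.mul (exp_smul_continuous A))
    calc (∫ s in (0:ℝ)..T, g₁ s)
        = ∫ s in (0:ℝ)..T, (ContinuousLinearMap.apply ℂ H x₀)
            (exp ((T - s) • P) * (LC * exp (s • A))) := by
          refine intervalIntegral.integral_congr fun s _ => ?_
          simp [hg₁def, ContinuousLinearMap.apply_apply, ContinuousLinearMap.mul_apply]
      _ = (ContinuousLinearMap.apply ℂ H x₀)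
            (∫ s in (0:ℝ)..T, exp ((T - s) • P) * (LC * exp (s • A))) :=
          ContinuousLinearMap.intervalIntegral_comp_comm _ hop1
      _ = (exp (T • P) - exp (T • A)) x₀ := by
          rw [← hPA, ← exp_perturb P A T]
          simp [ContinuousLinearMap.apply_apply]
  -- Step D : double integral form of the convolution part
  set f : ℝ → ℝ → H := fun s r => exp ((T - s) • P) (LC (exp ((s - r) • A) (B (u r))))
    with hfdef
  have hD : (∫ s in (0:ℝ)..T, g₂ s) = ∫ s in (0:ℝ)..T, ∫ r in (0:ℝ)..s, f s r := by
    refine intervalIntegral.integral_congr fun s hs => ?_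
    rw [Set.uIcc_of_le hT] at hs
    have hwint : IntervalIntegrable (fun r => exp ((s - r) • A) (B (u r))) volume 0 s := by
      refine ((integrableOn_op_apply_u (fun r => exp ((s - r) • A))
        ((exp_smul_continuous A).comp (continuous_const.sub continuous_id)) B hum huI).mono_set
          ?_).intervalIntegrable
      rw [Set.uIcc_of_le hs.1]
      exact Set.Icc_subset_Icc le_rfl hs.2
    calc g₂ s = (exp ((T - s) • P) ∘L LC)
          (∫ r in (0:ℝ)..s, exp ((s - r) • A) (B (u r))) := by
            rw [hg₂def]; rw [ContinuousLinearMap.comp_apply]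
      _ = ∫ r in (0:ℝ)..s, (exp ((T - s) • P) ∘L LC) (exp ((s - r) • A) (B (u r))) :=
          (ContinuousLinearMap.intervalIntegral_comp_comm _ hwint).symm
      _ = ∫ r in (0:ℝ)..s, f s r := by
          refine intervalIntegral.integral_congr fun r _ => ?_
          rw [hfdef, ContinuousLinearMap.comp_apply]
  -- Step E : swap the order of integration
  set μ : Measure ℝ := volume.restrict (Set.Ioc (0:ℝ) T) with hμdef
  haveI : IsFiniteMeasure μ := by
    constructor
    rw [hμdef, Measure.restrict_apply_univ]
    exact measure_Ioc_lt_top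
  have hum' : AEStronglyMeasurable u μ :=
    hum.mono_measure (Measure.restrict_mono Set.Ioc_subset_Icc_self le_rfl)
  obtain ⟨K₁, hK₁pos, hK₁⟩ := exp_bound_compact P T
  obtain ⟨K₂, hK₂pos, hK₂⟩ := exp_bound_compact A T
  have hfm : AEStronglyMeasurable (fun p : ℝ × ℝ => f p.1 p.2) (μ.prod μ) := by
    have hΨ : Continuous fun q : ℝ × ℝ × U =>
        exp ((T - q.1) • P) (LC (exp ((q.1 - q.2.1) • A) (B q.2.2))) := by
      refine Continuous.clm_apply ((exp_smul_continuous P).comp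
        (continuous_const.sub continuous_fst)) ?_
      exact LC.continuous.comp (Continuous.clm_apply ((exp_smul_continuous A).comp
        (continuous_fst.sub (continuous_fst.comp continuous_snd)))
        (B.continuous.comp (continuous_snd.comp continuous_snd)))
    have hq : AEStronglyMeasurable (fun p : ℝ × ℝ => (p.1, (p.2, u p.2))) (μ.prod μ) :=
      continuous_fst.aestronglyMeasurable.prodMk
        (continuous_snd.aestronglyMeasurable.prodMk hum'.comp_snd)
    refine (hΨ.comp_aestronglyMeasurable hq).congr
      (Filter.Eventually.of_forall fun p => ?_)
    rw [hfdef]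
  have hbd : ∀ᵐ p ∂(μ.prod μ), ‖f p.1 p.2‖ ≤ K₁ * ‖LC‖ * K₂ * ‖B‖ * ‖u p.2‖ := by
    rw [hμdef, Measure.prod_restrict]
    refine (ae_restrict_mem (measurableSet_Ioc.prod measurableSet_Ioc)).mono fun p hp => ?_
    obtain ⟨hp1, hp2⟩ := hp
    have ht1 : |T - p.1| ≤ T := by
      rw [abs_le]; constructor <;> [linarith [hp1.1, hp1.2]; linarith [hp1.1, hp1.2]]
    have ht2 : |p.1 - p.2| ≤ T := by
      rw [abs_le]
      constructor
      · linarith [hp1.1, hp1.2, hp2.1, hp2.2]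
      · linarith [hp1.1, hp1.2, hp2.1, hp2.2]
    calc ‖f p.1 p.2‖
        ≤ ‖exp ((T - p.1) • P)‖ * ‖LC (exp ((p.1 - p.2) • A) (B (u p.2)))‖ :=
          le_opNorm _ _
      _ ≤ K₁ * (‖LC‖ * (K₂ * (‖B‖ * ‖u p.2‖))) := by
          refine mul_le_mul (hK₁ _ ht1) ?_ (norm_nonneg _) hK₁pos.le
          refine le_trans (le_opNorm _ _) ?_
          refine mul_le_mul_of_nonneg_left ?_ (norm_nonneg _)
          refine le_trans (le_opNorm _ _) ?_
          exact mul_le_mul (hK₂ _ ht2) (le_opNorm _ _) (norm_nonneg _) hK₂pos.le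
      _ = K₁ * ‖LC‖ * K₂ * ‖B‖ * ‖u p.2‖ := by ring
  have hdom : Integrable (fun p : ℝ × ℝ => K₁ * ‖LC‖ * K₂ * ‖B‖ * ‖u p.2‖) (μ.prod μ) := by
    have hμu : Integrable (fun r => K₁ * ‖LC‖ * K₂ * ‖B‖ * ‖u r‖) μ := by
      have : IntegrableOn u (Set.Ioc 0 T) := huI.mono_set Set.Ioc_subset_Icc_self
      exact (this.norm.const_mul _)
    have := (integrable_const (1 : ℝ) (μ := μ)).smul_prod hμu
    simpa using this
  have hprod : Integrable (fun p : ℝ × ℝ => f p.1 p.2) (μ.prod μ) :=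
    Integrable.mono' hdom hfm hbd
  have hE : (∫ s in (0:ℝ)..T, ∫ r in (0:ℝ)..s, f s r)
      = ∫ r in (0:ℝ)..T, ∫ s in r..T, f s r := integral_swap_triangle hT f hprod
  -- Step F : compute the inner integral
  have hF : ∀ r ∈ Set.uIcc (0:ℝ) T,
      (∫ s in r..T, f s r) = (exp ((T - r) • P) - exp ((T - r) • A)) (B (u r)) := by
    intro r hr
    rw [Set.uIcc_of_le hT] at hr
    have hopc : IntervalIntegrable
        (fun s => exp ((T - s) • P) * (LC * exp ((s - r) • A))) volume r T := by
      apply Continuous.intervalIntegrable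
      exact hexpP.mul (continuous_const.mul
        ((exp_smul_continuous A).comp (continuous_id.sub continuous_const)))
    have hop : (∫ s in r..T, exp ((T - s) • P) * (LC * exp ((s - r) • A)))
        = exp ((T - r) • P) - exp ((T - r) • A) := by
      have hsubst := intervalIntegral.integral_comp_sub_right (a := r) (b := T)
        (fun σ => exp (((T - r) - σ) • P) * (LC * exp (σ • A))) r
      have hcongr : (∫ s in r..T, exp ((T - s) • P) * (LC * exp ((s - r) • A)))
          = ∫ s in r..T, exp (((T - r) - (s - r)) • P) * (LC * exp ((s - r) • A)) := by
        refine intervalIntegral.integral_congr fun s _ => ?_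
        congr 2
        ring
      rw [hcongr, hsubst, sub_self]
      rw [← hPA, ← exp_perturb P A (T - r)]
    calc (∫ s in r..T, f s r)
        = ∫ s in r..T, (ContinuousLinearMap.apply ℂ H (B (u r)))
            (exp ((T - s) • P) * (LC * exp ((s - r) • A))) := by
          refine intervalIntegral.integral_congr fun s _ => ?_
          simp [hfdef, ContinuousLinearMap.apply_apply, ContinuousLinearMap.mul_apply]
      _ = (ContinuousLinearMap.apply ℂ H (B (u r)))
            (∫ s in r..T, exp ((T - s) • P) * (LC * exp ((s - r) • A))) :=
          ContinuousLinearMap.intervalIntegral_comp_comm _ hopc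
      _ = (exp ((T - r) • P) - exp ((T - r) • A)) (B (u r)) := by
          rw [hop, ContinuousLinearMap.apply_apply]
  -- Step G : split the resulting integral
  have hiFB : IntervalIntegrable (fun r => exp ((T - r) • P) (B (u r))) volume 0 T := by
    have := integrableOn_op_apply_u (fun r => exp ((T - r) • P))
      hexpP B hum huI
    exact (this.mono_set (by rw [Set.uIcc_of_le hT])).intervalIntegrable
  have hiEB : IntervalIntegrable (fun r => exp ((T - r) • A) (B (u r))) volume 0 T := by
    have := integrableOn_op_apply_u (fun r => exp ((T - r) • A))
      ((exp_smul_continuous A).comp (continuous_const.sub continuous_id)) B hum huI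
    exact (this.mono_set (by rw [Set.uIcc_of_le hT])).intervalIntegrable
  have hG : (∫ r in (0:ℝ)..T, (exp ((T - r) • P) - exp ((T - r) • A)) (B (u r)))
      = (∫ r in (0:ℝ)..T, exp ((T - r) • P) (B (u r)))
        - ∫ r in (0:ℝ)..T, exp ((T - r) • A) (B (u r)) := by
    rw [← intervalIntegral.integral_sub hiFB hiEB]
    refine intervalIntegral.integral_congr fun r _ => ?_
    simp [ContinuousLinearMap.sub_apply]
  -- assemble everything
  have hthird : (∫ s in (0:ℝ)..T, exp ((T - s) • P) (LC (x s)))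
      = (exp (T • P) - exp (T • A)) x₀
        + ((∫ r in (0:ℝ)..T, exp ((T - r) • P) (B (u r)))
          - ∫ r in (0:ℝ)..T, exp ((T - r) • A) (B (u r))) := by
    rw [hsplit, hI₁, hD, hE, intervalIntegral.integral_congr hF, hG]
  show x T = exp (T • P) x₀ + (∫ s in (0:ℝ)..T, exp ((T - s) • P) (B (u s)))
      - ∫ s in (0:ℝ)..T, exp ((T - s) • P) (LC (x s))
  rw [hthird]
  have hxT : x T = exp (T • A) x₀ + ∫ r in (0:ℝ)..T, exp ((T - r) • A) (B (u r)) := by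
    rw [hxdef]; simp only [mildSol]
  rw [hxT, ContinuousLinearMap.sub_apply]
  abel

lemma exp_decay_sq_integral_le {ω T : ℝ} (hω : 0 < ω) (hT : 0 ≤ T) :
    (∫ s in (0:ℝ)..T, Real.exp (-ω * (T - s)) ^ 2) ≤ 1 / (2 * ω) := by
  have h1 : ∀ s : ℝ, Real.exp (-ω * (T - s)) ^ 2 = Real.exp ((-(2*ω)) * (T - s)) := by
    intro s
    rw [← Real.exp_nat_mul]
    congr 1
    push_cast
    ring
  have h2 : (∫ s in (0:ℝ)..T, Real.exp (-ω * (T - s)) ^ 2)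
      = ∫ s in (0:ℝ)..T, Real.exp ((-(2*ω)) * (T - s)) := by
    simp only [h1]
  rw [h2]
  have h3 : (∫ s in (0:ℝ)..T, Real.exp ((-(2*ω)) * (T - s)))
      = ∫ τ in (0:ℝ)..T, Real.exp ((-(2*ω)) * τ) := by
    have := intervalIntegral.integral_comp_sub_left (a := 0) (b := T)
      (fun τ => Real.exp ((-(2*ω)) * τ)) T
    simpa using this
  rw [h3]
  have hc : (-(2*ω)) ≠ 0 := by
    have : (0:ℝ) < 2*ω := by positivity
    linarith
  have h4 : (∫ τ in (0:ℝ)..T, Real.exp ((-(2*ω)) * τ))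
      = (-(2*ω))⁻¹ • ∫ x in ((-(2*ω)) * 0)..((-(2*ω)) * T), Real.exp x :=
    intervalIntegral.integral_comp_mul_left Real.exp hc
  rw [h4, mul_zero, integral_exp, Real.exp_zero, smul_eq_mul]
  have hepos := Real.exp_pos ((-(2*ω))*T)
  rw [div_eq_inv_mul]
  have h2ω : (0:ℝ) < 2*ω := by positivity
  have : (-(2*ω))⁻¹ * (Real.exp ((-(2*ω))*T) - 1)
      = (2*ω)⁻¹ * (1 - Real.exp ((-(2*ω))*T)) := by
    field_simp
    ring
  rw [this]
  have hinv : (0:ℝ) ≤ (2*ω)⁻¹ := by positivity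
  nlinarith [hepos, hinv]

lemma cs_exp_decay {ω T : ℝ} (hω : 0 < ω) (hT : 0 ≤ T) (g : ℝ → ℝ)
    (hg0 : ∀ s, 0 ≤ g s) (hg : MemLp g 2 (volume.restrict (Set.Ioc 0 T))) :
    (∫ s in (0:ℝ)..T, Real.exp (-ω * (T - s)) * g s)
      ≤ Real.sqrt (1 / (2 * ω)) * Real.sqrt (∫ s in (0:ℝ)..T, (g s) ^ 2) := by
  set μ : Measure ℝ := volume.restrict (Set.Ioc 0 T) with hμdef
  haveI : IsFiniteMeasure μ := by
    constructor
    rw [hμdef, Measure.restrict_apply_univ]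
    exact measure_Ioc_lt_top
  have hpq : Real.HolderConjugate 2 2 := Real.HolderConjugate.two_two
  have hecont : Continuous fun s : ℝ => Real.exp (-ω * (T - s)) :=
    Real.continuous_exp.comp (continuous_const.mul (continuous_const.sub continuous_id))
  have hf : MemLp (fun s => Real.exp (-ω * (T - s))) (ENNReal.ofReal 2) μ := by
    rw [ENNReal.ofReal_ofNat]
    refine MemLp.of_bound hecont.aestronglyMeasurable 1 ?_
    refine (ae_restrict_mem measurableSet_Ioc).mono fun s hs => ?_
    rw [Real.norm_eq_abs, abs_of_pos (Real.exp_pos _)]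
    rw [Real.exp_le_one_iff]
    have := hs.2
    nlinarith
  have hgL : MemLp g (ENNReal.ofReal 2) μ := by rw [ENNReal.ofReal_ofNat]; exact hg
  have hcs := integral_mul_le_Lp_mul_Lq_of_nonneg (μ := μ) hpq
    (Filter.Eventually.of_forall fun s => (Real.exp_pos _).le)
    (Filter.Eventually.of_forall fun s => hg0 s) hf hgL
  have hA0 : (0:ℝ) ≤ ∫ s, Real.exp (-ω * (T - s)) ^ (2:ℝ) ∂μ :=
    integral_nonneg fun s => Real.rpow_nonneg (Real.exp_pos _).le _
  have hB0 : (0:ℝ) ≤ ∫ s, g s ^ (2:ℝ) ∂μ :=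
    integral_nonneg fun s => Real.rpow_nonneg (hg0 s) _
  have hrp : ∀ (a : ℝ), 0 ≤ a → a ^ (2:ℝ) = a ^ (2:ℕ) := by
    intro a _
    rw [← Real.rpow_natCast a 2]
    norm_num
  -- convert both rpow-2 integrals to pow-2 interval integrals
  have hAeq : (∫ s, Real.exp (-ω * (T - s)) ^ (2:ℝ) ∂μ)
      = ∫ s in (0:ℝ)..T, Real.exp (-ω * (T - s)) ^ 2 := by
    rw [intervalIntegral.integral_of_le hT, ← hμdef]
    exact integral_congr_ae (Filter.Eventually.of_forall fun s =>
      hrp _ (Real.exp_pos _).le)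
  have hBeq : (∫ s, g s ^ (2:ℝ) ∂μ) = ∫ s in (0:ℝ)..T, g s ^ 2 := by
    rw [intervalIntegral.integral_of_le hT, ← hμdef]
    exact integral_congr_ae (Filter.Eventually.of_forall fun s => hrp _ (hg0 s))
  have hsq : ∀ a : ℝ, 0 ≤ a → a ^ (1/(2:ℝ)) = Real.sqrt a := fun a _ =>
    (Real.sqrt_eq_rpow a).symm
  calc (∫ s in (0:ℝ)..T, Real.exp (-ω * (T - s)) * g s)
      = ∫ s, Real.exp (-ω * (T - s)) * g s ∂μ := by
        rw [intervalIntegral.integral_of_le hT, ← hμdef]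
    _ ≤ (∫ s, Real.exp (-ω * (T - s)) ^ (2:ℝ) ∂μ) ^ (1/(2:ℝ))
        * (∫ s, g s ^ (2:ℝ) ∂μ) ^ (1/(2:ℝ)) := hcs
    _ = Real.sqrt (∫ s in (0:ℝ)..T, Real.exp (-ω * (T - s)) ^ 2)
        * Real.sqrt (∫ s in (0:ℝ)..T, g s ^ 2) := by
        rw [hsq _ hA0, hsq _ hB0, hAeq, hBeq]
    _ ≤ Real.sqrt (1 / (2 * ω)) * Real.sqrt (∫ s in (0:ℝ)..T, g s ^ 2) := by
        refine mul_le_mul_of_nonneg_right ?_ (Real.sqrt_nonneg _)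
        exact Real.sqrt_le_sqrt (exp_decay_sq_integral_le hω hT)

lemma norm_int_exp_le {P : H →L[ℂ] H} {m ω : ℝ} (hm : 0 ≤ m)
    (hst : ∀ τ : ℝ, 0 ≤ τ → ‖exp (τ • P)‖ ≤ m * Real.exp (-ω * τ))
    {T : ℝ} (hT : 0 ≤ T) {v : ℝ → H} {b : ℝ → ℝ}
    (hb0 : ∀ s, 0 ≤ b s)
    (hvb : ∀ s ∈ Set.Ioc (0:ℝ) T, ‖v s‖ ≤ b s)
    (hbI : IntervalIntegrable (fun s => Real.exp (-ω * (T - s)) * b s) volume 0 T) :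
    ‖∫ s in (0:ℝ)..T, exp ((T - s) • P) (v s)‖
      ≤ m * ∫ s in (0:ℝ)..T, Real.exp (-ω * (T - s)) * b s := by
  have hgI : IntervalIntegrable (fun s => m * (Real.exp (-ω * (T - s)) * b s)) volume 0 T :=
    hbI.const_mul m
  have hae : ∀ᵐ t ∂(volume.restrict (Set.uIoc 0 T)),
      ‖exp ((T - t) • P) (v t)‖ ≤ m * (Real.exp (-ω * (T - t)) * b t) := by
    rw [Set.uIoc_of_le hT]
    refine (ae_restrict_mem measurableSet_Ioc).mono fun t ht => ?_
    calc ‖exp ((T - t) • P) (v t)‖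
        ≤ ‖exp ((T - t) • P)‖ * ‖v t‖ := le_opNorm _ _
      _ ≤ (m * Real.exp (-ω * (T - t))) * b t := by
          refine mul_le_mul (hst (T - t) (by linarith [ht.2])) (hvb t ht)
            (norm_nonneg _) (by positivity)
      _ = m * (Real.exp (-ω * (T - t)) * b t) := by ring
  have hkey := intervalIntegral.norm_integral_le_of_norm_le hT
    (by rw [Set.uIoc_of_le hT] at hae; exact (ae_restrict_iff' measurableSet_Ioc).mp hae) hgI
  rw [intervalIntegral.integral_const_mul] at hkey
  exact hkey


/-- the final-state estimate following from exponential detectability of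
`(A, C)`: `‖x(T)‖² ≤ M (∫₀ᵀ (‖Cx(t)‖² + ‖u(t)‖²) dt + ‖x₀‖²)` along mild solutions. -/
theorem detectability_estimate
    (A : H →L[ℂ] H) (B : U →L[ℂ] H) (C : H →L[ℂ] Y)
    (hdet : ∃ L : Y →L[ℂ] H, ExpStable (A + L ∘L C)) :
    ∃ M > 0, ∀ T > 0, ∀ u : ℝ → U, ∀ x₀ : H,
      MemLp u 2 (volume.restrict (Set.Icc 0 T)) →
      ‖mildSol A B u x₀ T‖ ^ 2 ≤
        M * ((∫ t in (0:ℝ)..T, (‖C (mildSol A B u x₀ t)‖ ^ 2 + ‖u t‖ ^ 2)) + ‖x₀‖ ^ 2) := by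
  obtain ⟨L, m, hm, ω, hω, hst⟩ := hdet
  set q : ℝ := Real.sqrt (1 / (2 * ω)) with hqdef
  have hq0 : 0 ≤ q := Real.sqrt_nonneg _
  set c : ℝ := m * (1 + ‖B‖ * q + ‖L‖ * q) with hcdef
  have hc0 : 0 < c := mul_pos hm (by positivity)
  refine ⟨3 * c ^ 2 + 1, by positivity, ?_⟩
  intro T hTpos u x₀ hu
  have hT : 0 ≤ T := hTpos.le
  haveI hfinIcc : IsFiniteMeasure (volume.restrict (Set.Icc (0:ℝ) T)) := by
    constructor
    rw [Measure.restrict_apply_univ]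
    exact measure_Icc_lt_top
  haveI hfinIoc : IsFiniteMeasure (volume.restrict (Set.Ioc (0:ℝ) T)) := by
    constructor
    rw [Measure.restrict_apply_univ]
    exact measure_Ioc_lt_top
  have hum := hu.aestronglyMeasurable
  have huI : IntegrableOn u (Set.Icc 0 T) := hu.integrable one_le_two
  have hx_cont : ContinuousOn (mildSol A B u x₀) (Set.Icc 0 T) :=
    mildSol_continuousOn A B u x₀ hT hum huI
  set x : ℝ → H := mildSol A B u x₀ with hxdef
  obtain ⟨R, hR⟩ := isCompact_Icc.exists_bound_of_continuousOn hx_cont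
  have hR0 : 0 ≤ R := le_trans (norm_nonneg _) (hR 0 ⟨le_rfl, hT⟩)
  have hrep := mildSol_rep A B (L ∘L C) u x₀ hT hum huI
  rw [← hxdef] at hrep
  set Ju : ℝ := ∫ s in (0:ℝ)..T, ‖u s‖ ^ 2 with hJudef
  set Jc : ℝ := ∫ s in (0:ℝ)..T, ‖C (x s)‖ ^ 2 with hJcdef
  have hJu0 : 0 ≤ Ju :=
    intervalIntegral.integral_nonneg hT fun s _ => sq_nonneg _
  have hJc0 : 0 ≤ Jc :=
    intervalIntegral.integral_nonneg hT fun s _ => sq_nonneg _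
  -- measurability on (0,T]
  have hum' : AEStronglyMeasurable u (volume.restrict (Set.Ioc 0 T)) :=
    hum.mono_measure (Measure.restrict_mono Set.Ioc_subset_Icc_self le_rfl)
  have hu2 : MemLp (fun s => ‖u s‖) 2 (volume.restrict (Set.Ioc 0 T)) :=
    (hu.norm).mono_measure (Measure.restrict_mono Set.Ioc_subset_Icc_self le_rfl)
  have hCx_aesm : AEStronglyMeasurable (fun s => ‖C (x s)‖)
      (volume.restrict (Set.Ioc 0 T)) := by
    refine ContinuousOn.aestronglyMeasurable ?_ measurableSet_Ioc
    exact (C.continuous.comp_continuousOn (hx_cont.mono Set.Ioc_subset_Icc_self)).norm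
  have hCx2 : MemLp (fun s => ‖C (x s)‖) 2 (volume.restrict (Set.Ioc 0 T)) := by
    refine MemLp.of_bound hCx_aesm (‖C‖ * R) ?_
    refine (ae_restrict_mem measurableSet_Ioc).mono fun s hs => ?_
    rw [norm_norm]
    calc ‖C (x s)‖ ≤ ‖C‖ * ‖x s‖ := le_opNorm _ _
      _ ≤ ‖C‖ * R := mul_le_mul_of_nonneg_left
          (hR s ⟨hs.1.le, hs.2⟩) (norm_nonneg _)
  -- integrability of the squares
  have hIu2 : IntervalIntegrable (fun s => ‖u s‖ ^ 2) volume 0 T := by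
    have h'' := hu.integrable_norm_rpow (by norm_num) (by norm_num)
    have heq : (fun s => ‖u s‖ ^ (2:ENNReal).toReal) = fun s : ℝ => ‖u s‖ ^ 2 := by
      funext s
      rw [ENNReal.toReal_ofNat, ← Real.rpow_natCast ‖u s‖ 2]
      norm_num
    have h3 : IntegrableOn (fun s => ‖u s‖ ^ 2) (Set.Icc 0 T) := heq ▸ h''
    exact (h3.mono_set (by rw [Set.uIcc_of_le hT])).intervalIntegrable
  have hIc2 : IntervalIntegrable (fun s => ‖C (x s)‖ ^ 2) volume 0 T := by
    apply ContinuousOn.intervalIntegrable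
    rw [Set.uIcc_of_le hT]
    exact ((C.continuous.comp_continuousOn hx_cont).norm).pow 2
  have hIsum : (∫ t in (0:ℝ)..T, (‖C (x t)‖ ^ 2 + ‖u t‖ ^ 2)) = Jc + Ju :=
    intervalIntegral.integral_add hIc2 hIu2
  -- term 1
  have n1 : ‖exp (T • (A + L ∘L C)) x₀‖ ≤ m * ‖x₀‖ := by
    calc ‖exp (T • (A + L ∘L C)) x₀‖
        ≤ ‖exp (T • (A + L ∘L C))‖ * ‖x₀‖ := le_opNorm _ _
      _ ≤ (m * Real.exp (-ω * T)) * ‖x₀‖ :=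
          mul_le_mul_of_nonneg_right (hst T hT) (norm_nonneg _)
      _ ≤ m * 1 * ‖x₀‖ := by
          refine mul_le_mul_of_nonneg_right ?_ (norm_nonneg _)
          refine mul_le_mul_of_nonneg_left ?_ hm.le
          rw [Real.exp_le_one_iff]
          nlinarith
      _ = m * ‖x₀‖ := by ring
  -- integrability of exponential-weighted bounds
  have hecont : Continuous fun s : ℝ => Real.exp (-ω * (T - s)) :=
    Real.continuous_exp.comp (continuous_const.mul (continuous_const.sub continuous_id))
  have hbIu : IntervalIntegrable
      (fun s => Real.exp (-ω * (T - s)) * (‖B‖ * ‖u s‖)) volume 0 T := by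
    have hInt : IntegrableOn (fun s => Real.exp (-ω * (T - s)) * (‖B‖ * ‖u s‖))
        (Set.Icc 0 T) := by
      refine Integrable.mono' ((huI.norm.const_mul ‖B‖)) ?_ ?_
      · exact hecont.aestronglyMeasurable.mul (hum.norm.const_mul ‖B‖)
      · refine (ae_restrict_mem measurableSet_Icc).mono fun s hs => ?_
        have he1 : Real.exp (-ω * (T - s)) ≤ 1 := by
          rw [Real.exp_le_one_iff]; nlinarith [hs.1, hs.2]
        rw [Real.norm_eq_abs, abs_of_nonneg (by positivity : (0:ℝ) ≤
          Real.exp (-ω * (T - s)) * (‖B‖ * ‖u s‖))]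
        nlinarith [he1, mul_nonneg (norm_nonneg B) (norm_nonneg (u s)),
          Real.exp_pos (-ω * (T - s))]
    exact (hInt.mono_set (by rw [Set.uIcc_of_le hT])).intervalIntegrable
  have hbIc : IntervalIntegrable
      (fun s => Real.exp (-ω * (T - s)) * (‖L‖ * ‖C (x s)‖)) volume 0 T := by
    apply ContinuousOn.intervalIntegrable
    rw [Set.uIcc_of_le hT]
    exact (hecont.continuousOn).mul
      (((C.continuous.comp_continuousOn hx_cont).norm).const_smul ‖L‖)
  -- term 2
  have n2 : ‖∫ s in (0:ℝ)..T, exp ((T - s) • (A + L ∘L C)) (B (u s))‖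
      ≤ m * ∫ s in (0:ℝ)..T, Real.exp (-ω * (T - s)) * (‖B‖ * ‖u s‖) := by
    refine norm_int_exp_le hm.le hst hT (fun s => by positivity) (fun s _ => ?_) hbIu
    exact B.le_opNorm _
  -- term 3
  have n3 : ‖∫ s in (0:ℝ)..T, exp ((T - s) • (A + L ∘L C)) ((L ∘L C) (x s))‖
      ≤ m * ∫ s in (0:ℝ)..T, Real.exp (-ω * (T - s)) * (‖L‖ * ‖C (x s)‖) := by
    refine norm_int_exp_le hm.le hst hT (fun s => by positivity) (fun s _ => ?_) hbIc
    rw [ContinuousLinearMap.comp_apply]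
    exact L.le_opNorm _
  -- Cauchy-Schwarz on the two integrals
  have cs2 : (∫ s in (0:ℝ)..T, Real.exp (-ω * (T - s)) * (‖B‖ * ‖u s‖))
      ≤ q * (‖B‖ * Real.sqrt Ju) := by
    have := cs_exp_decay hω hT (fun s => ‖B‖ * ‖u s‖) (fun s => by positivity)
      (hu2.const_mul ‖B‖)
    refine this.trans ?_
    rw [hqdef]
    refine mul_le_mul_of_nonneg_left ?_ (Real.sqrt_nonneg _)
    have heq : (∫ s in (0:ℝ)..T, (‖B‖ * ‖u s‖) ^ 2) = ‖B‖ ^ 2 * Ju := by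
      rw [hJudef, ← intervalIntegral.integral_const_mul]
      refine intervalIntegral.integral_congr fun s _ => ?_
      ring
    rw [heq, Real.sqrt_mul (sq_nonneg _), Real.sqrt_sq (norm_nonneg _)]
  have cs3 : (∫ s in (0:ℝ)..T, Real.exp (-ω * (T - s)) * (‖L‖ * ‖C (x s)‖))
      ≤ q * (‖L‖ * Real.sqrt Jc) := by
    have := cs_exp_decay hω hT (fun s => ‖L‖ * ‖C (x s)‖) (fun s => by positivity)
      (hCx2.const_mul ‖L‖)
    refine this.trans ?_
    rw [hqdef]
    refine mul_le_mul_of_nonneg_left ?_ (Real.sqrt_nonneg _)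
    have heq : (∫ s in (0:ℝ)..T, (‖L‖ * ‖C (x s)‖) ^ 2) = ‖L‖ ^ 2 * Jc := by
      rw [hJcdef, ← intervalIntegral.integral_const_mul]
      refine intervalIntegral.integral_congr fun s _ => ?_
      ring
    rw [heq, Real.sqrt_mul (sq_nonneg _), Real.sqrt_sq (norm_nonneg _)]
  -- assemble
  have s1 : ‖x T‖ ≤ ‖exp (T • (A + L ∘L C)) x₀‖
      + ‖∫ s in (0:ℝ)..T, exp ((T - s) • (A + L ∘L C)) (B (u s))‖
      + ‖∫ s in (0:ℝ)..T, exp ((T - s) • (A + L ∘L C)) ((L ∘L C) (x s))‖ := by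
    rw [hrep]
    exact (norm_sub_le _ _).trans (add_le_add_left (norm_add_le _ _) _)
  set a : ℝ := ‖x₀‖ with hadef
  set su : ℝ := Real.sqrt Ju with hsudef
  set sc : ℝ := Real.sqrt Jc with hscdef
  have hsu0 : 0 ≤ su := Real.sqrt_nonneg _
  have hsc0 : 0 ≤ sc := Real.sqrt_nonneg _
  have ha0 : 0 ≤ a := norm_nonneg _
  have hsu2 : su ^ 2 = Ju := Real.sq_sqrt hJu0
  have hsc2 : sc ^ 2 = Jc := Real.sq_sqrt hJc0
  have hX : ‖x T‖ ≤ c * a + c * su + c * sc := by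
    have t2 : ‖∫ s in (0:ℝ)..T, exp ((T - s) • (A + L ∘L C)) (B (u s))‖
        ≤ m * (q * (‖B‖ * su)) :=
      n2.trans (mul_le_mul_of_nonneg_left cs2 hm.le)
    have t3 : ‖∫ s in (0:ℝ)..T, exp ((T - s) • (A + L ∘L C)) ((L ∘L C) (x s))‖
        ≤ m * (q * (‖L‖ * sc)) :=
      n3.trans (mul_le_mul_of_nonneg_left cs3 hm.le)
    have hbq : 0 ≤ ‖B‖ * q := mul_nonneg (norm_nonneg _) hq0
    have hlq : 0 ≤ ‖L‖ * q := mul_nonneg (norm_nonneg _) hq0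
    have hcoef1 : m * a ≤ c * a := by
      refine mul_le_mul_of_nonneg_right ?_ ha0
      rw [hcdef]
      nlinarith [mul_nonneg hm.le hbq, mul_nonneg hm.le hlq]
    have hcoef2 : m * (q * (‖B‖ * su)) ≤ c * su := by
      have hcc : m * (q * ‖B‖) ≤ c := by
        rw [hcdef]
        nlinarith [mul_nonneg hm.le hlq, hm.le]
      calc m * (q * (‖B‖ * su)) = (m * (q * ‖B‖)) * su := by ring
        _ ≤ c * su := mul_le_mul_of_nonneg_right hcc hsu0
    have hcoef3 : m * (q * (‖L‖ * sc)) ≤ c * sc := by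
      have hcc : m * (q * ‖L‖) ≤ c := by
        rw [hcdef]
        nlinarith [mul_nonneg hm.le hbq, hm.le]
      calc m * (q * (‖L‖ * sc)) = (m * (q * ‖L‖)) * sc := by ring
        _ ≤ c * sc := mul_le_mul_of_nonneg_right hcc hsc0
    calc ‖x T‖ ≤ _ := s1
      _ ≤ m * a + m * (q * (‖B‖ * su)) + m * (q * (‖L‖ * sc)) :=
          add_le_add (add_le_add n1 t2) t3
      _ ≤ c * a + c * su + c * sc := add_le_add (add_le_add hcoef1 hcoef2) hcoef3
  rw [hIsum]
  have hXsq : ‖x T‖ ^ 2 ≤ (c * a + c * su + c * sc) ^ 2 :=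
    pow_le_pow_left₀ (norm_nonneg _) hX 2
  have h3 : (c * a + c * su + c * sc) ^ 2 ≤ 3 * c ^ 2 * (a ^ 2 + su ^ 2 + sc ^ 2) := by
    nlinarith [sq_nonneg (c * a - c * su), sq_nonneg (c * su - c * sc),
      sq_nonneg (c * a - c * sc)]
  have hfin : 3 * c ^ 2 * (a ^ 2 + su ^ 2 + sc ^ 2)
      ≤ (3 * c ^ 2 + 1) * ((Jc + Ju) + a ^ 2) := by
    rw [hsu2, hsc2]
    nlinarith [hJu0, hJc0, sq_nonneg a, sq_nonneg c]
  calc ‖x T‖ ^ 2 ≤ _ := hXsq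
    _ ≤ _ := h3
    _ ≤ _ := hfin
end
end

section
/- Let H and U be complex Hilbert spaces and A : H → H, B : U → H bounded linear operators such that (A,B) is exponentially stabilizable. Then the range of the continuous linear map [A B] : H × U → H, (x,u) ↦ Ax + Bu, is a closed subspace of H. -/
open MeasureTheory ContinuousLinearMap
open scoped InnerProductSpace

noncomputable section

variable {H U Y : Type*}
  [NormedAddCommGroup H] [InnerProductSpace ℂ H] [CompleteSpace H]
  [NormedAddCommGroup U] [InnerProductSpace ℂ U] [CompleteSpace U]
  [NormedAddCommGroup Y] [InnerProductSpace ℂ Y] [CompleteSpace Y]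

private lemma expStable_surjective (G : H →L[ℂ] H)
    (h : ∃ m > 0, ∃ ω > 0, ∀ t : ℝ, 0 ≤ t →
      ‖NormedSpace.exp (t • G)‖ ≤ m * Real.exp (-ω * t)) :
    Function.Surjective G := by
  obtain ⟨m, hm, ω, hω, hb⟩ := h
  intro y
  set f : ℝ → H := fun t => NormedSpace.exp (t • G) y with hf
  have hexp : (NormedSpace.exp : (H →L[ℂ] H) → _) = NormedSpace.exp :=
    rfl
  have hderiv : ∀ t : ℝ, HasDerivAt f (G (f t)) t := by
    intro t
    have h1 : HasDerivAt (fun u : ℝ => NormedSpace.exp (u • G))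
        (G * NormedSpace.exp (t • G)) t := hasDerivAt_exp_smul_const' (𝕂 := ℝ) G t
    have h2 := ((ContinuousLinearMap.apply ℂ H y).restrictScalars ℝ).hasFDerivAt.comp_hasDerivAt t h1
    exact h2.congr_deriv (by simp [hf, hexp, ContinuousLinearMap.mul_apply])
  have hcontf : Continuous f :=
    continuous_iff_continuousAt.2 fun t => (hderiv t).continuousAt
  have hbound : ∀ t : ℝ, 0 ≤ t → ‖f t‖ ≤ m * ‖y‖ * Real.exp (-ω * t) := by
    intro t ht
    calc ‖f t‖ ≤ ‖NormedSpace.exp (t • G)‖ * ‖y‖ := le_opNorm _ _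
    _ ≤ m * Real.exp (-ω * t) * ‖y‖ :=
        mul_le_mul_of_nonneg_right (hb t ht) (norm_nonneg y)
    _ = m * ‖y‖ * Real.exp (-ω * t) := by ring
  have hgint : IntegrableOn (fun t : ℝ => m * ‖y‖ * Real.exp (-ω * t)) (Set.Ioi 0) :=
    (exp_neg_integrableOn_Ioi 0 hω).const_mul _
  have hfint : IntegrableOn f (Set.Ioi 0) := by
    refine hgint.mono' (hcontf.aestronglyMeasurable.restrict) ?_
    filter_upwards [ae_restrict_mem measurableSet_Ioi] with t ht
    exact hbound t (le_of_lt ht)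
  have hf'int : IntegrableOn (fun t => G (f t)) (Set.Ioi 0) := by
    refine (hgint.const_mul ‖G‖).mono'
      ((G.continuous.comp hcontf).aestronglyMeasurable.restrict) ?_
    filter_upwards [ae_restrict_mem measurableSet_Ioi] with t ht
    calc ‖G (f t)‖ ≤ ‖G‖ * ‖f t‖ := le_opNorm _ _
    _ ≤ ‖G‖ * (m * ‖y‖ * Real.exp (-ω * t)) :=
        mul_le_mul_of_nonneg_left (hbound t (le_of_lt ht)) (norm_nonneg _)
  have htend : Filter.Tendsto f Filter.atTop (nhds 0) := by
    refine squeeze_zero_norm' (a := fun t => m * ‖y‖ * Real.exp (-ω * t)) ?_ ?_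
    · filter_upwards [Filter.eventually_ge_atTop (0:ℝ)] with t ht
      exact hbound t ht
    · have h1 : Filter.Tendsto (fun t : ℝ => Real.exp (-ω * t)) Filter.atTop (nhds 0) := by
        apply Real.tendsto_exp_atBot.comp
        exact Filter.tendsto_id.const_mul_atTop_of_neg (neg_neg_iff_pos.2 hω)
      simpa using h1.const_mul (m * ‖y‖)
  have key : ∫ t in Set.Ioi (0:ℝ), G (f t) = 0 - f 0 :=
    integral_Ioi_of_hasDerivAt_of_tendsto' (fun t _ => hderiv t) hf'int htend
  have hf0 : f 0 = y := by simp [hf]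
  refine ⟨-(∫ t in Set.Ioi (0:ℝ), f t), ?_⟩
  rw [map_neg, ← G.integral_comp_comm hfint, key, hf0, zero_sub, neg_neg]


/-- closed range test: if `(A, B)` is exponentially stabilizable, then the
range of `[A B] : H × U → H`, `(x, u) ↦ A x + B u`, is closed. -/
theorem closed_range_test
    (A : H →L[ℂ] H) (B : U →L[ℂ] H)
    (hstab : ∃ F : H →L[ℂ] U, ExpStable (A + B ∘L F)) :
    IsClosed (Set.range (A.coprod B)) := by
  obtain ⟨F, hF⟩ := hstab
  have hsurj := expStable_surjective _ hF
  have hrange : Set.range (A.coprod B) = Set.univ := by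
    rw [Set.eq_univ_iff_forall]
    intro y
    obtain ⟨x, hx⟩ := hsurj y
    exact ⟨(x, F x), by simpa [ContinuousLinearMap.coprod_apply] using hx⟩
  rw [hrange]
  exact isClosed_univ
end
end

section
/- Let H, U, Y be complex Hilbert spaces, A : H → H, B : U → H, C : H → Y, K : U → U bounded linear operators with (A,B) exponentially stabilizable, and z ∈ H, v ∈ U. Let (x_e, u_e) ∈ H × U satisfy Ax_e + Bu_e = 0 and suppose the pair (z + C*C x_e, v + K*K u_e) ∈ H × U is orthogonal to the kernel of the map (x,u) ↦ Ax + Bu (the optimality condition for the optimal steady state problem). Then there exists w ∈ H with A*w = z + C*C x_e and B*w = v + K*K u_e. -/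
open MeasureTheory ContinuousLinearMap
open scoped InnerProductSpace

noncomputable section

variable {H U Y : Type*}
  [NormedAddCommGroup H] [InnerProductSpace ℂ H] [CompleteSpace H]
  [NormedAddCommGroup U] [InnerProductSpace ℂ U] [CompleteSpace U]
  [NormedAddCommGroup Y] [InnerProductSpace ℂ Y] [CompleteSpace Y]

/-- An exponentially stable bounded operator is invertible. -/
lemma isUnit_of_expStable (G : H →L[ℂ] H) (h : ExpStable G) : IsUnit G := by
  rcases subsingleton_or_nontrivial H with hs | hn
  · exact ⟨1, Subsingleton.elim _ _⟩
  obtain ⟨m, hm, ω, hω, hb⟩ := h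
  set t : ℝ := max 1 ((Real.log m + 1) / ω) with htdef
  have ht1 : (1:ℝ) ≤ t := le_max_left _ _
  have ht0 : 0 ≤ t := zero_le_one.trans ht1
  have htne : t ≠ 0 := by positivity
  have hlt : m * Real.exp (-ω * t) < 1 := by
    have h1 : Real.log m + 1 ≤ ω * t := by
      have := le_max_right 1 ((Real.log m + 1) / ω)
      calc Real.log m + 1 = ((Real.log m + 1) / ω) * ω := by field_simp
        _ ≤ t * ω := by nlinarith
        _ = ω * t := mul_comm _ _
    have h2 : Real.log m - ω * t < 0 := by linarith
    calc m * Real.exp (-ω * t) = Real.exp (Real.log m + -ω * t) := by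
          rw [Real.exp_add, Real.exp_log hm]
      _ < 1 := by rw [← Real.exp_zero]; apply Real.exp_lt_exp.mpr; linarith
  by_contra hnu
  have h0 : (0:ℂ) ∈ spectrum ℂ ((t:ℂ) • G) := by
    rw [spectrum.mem_iff, map_zero, zero_sub, IsUnit.neg_iff]
    intro hu
    apply hnu
    have htc : (t:ℂ) ≠ 0 := Complex.ofReal_ne_zero.mpr htne
    have h1 : IsUnit ((t:ℂ) • (1 : H →L[ℂ] H)) := by
      refine ⟨⟨(t:ℂ) • 1, ((t:ℂ))⁻¹ • 1, ?_, ?_⟩, rfl⟩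
      · rw [smul_mul_smul_comm, mul_inv_cancel₀ htc, one_mul, one_smul]
      · rw [smul_mul_smul_comm, inv_mul_cancel₀ htc, one_mul, one_smul]
    have h2 : (t:ℂ) • G = ((t:ℂ) • (1 : H →L[ℂ] H)) * G := by
      rw [smul_mul_assoc, one_mul]
    have h4 := (h1.unit⁻¹ * hu.unit).isUnit
    have h3 : (↑(h1.unit⁻¹ * hu.unit) : H →L[ℂ] H) = G := by
      push_cast
      rw [IsUnit.unit_spec, h2, ← mul_assoc, IsUnit.val_inv_mul, one_mul]
    rwa [h3] at h4
  have h1 := spectrum.exp_mem_exp ((t:ℂ) • G) h0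
  rw [NormedSpace.exp_zero] at h1
  have hle := spectrum.norm_le_norm_of_mem h1
  rw [norm_one] at hle
  have hcast : (t:ℂ) • G = t • G := by
    rw [← algebraMap_smul ℂ t G]; norm_num
  rw [hcast] at hle
  exact absurd (hle.trans (hb t ht0)) (not_le.mpr hlt)

/-- if `(A,B)` is exponentially stabilizable and the optimality condition of
the optimal steady state problem holds, i.e. `(z + C*C x_e, v + K*K u_e)` is orthogonal to
`ker [A B]`, then there exists an adjoint steady state `w` with `A* w = z + C*C x_e` and
`B* w = v + K*K u_e`. -/
theorem adjoint_steady_state_exists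
    (A : H →L[ℂ] H) (B : U →L[ℂ] H) (C : H →L[ℂ] Y) (K : U →L[ℂ] U) (z : H) (v : U)
    (hstab : ∃ F : H →L[ℂ] U, ExpStable (A + B ∘L F))
    (xe : H) (ue : U) (heq : A xe + B ue = 0)
    (horth : ∀ x : H, ∀ u : U, A x + B u = 0 →
      ⟪x, z + adjoint C (C xe)⟫_ℂ + ⟪u, v + adjoint K (K ue)⟫_ℂ = 0) :
    ∃ w : H, adjoint A w = z + adjoint C (C xe) ∧ adjoint B w = v + adjoint K (K ue) := by
  set p := z + adjoint C (C xe) with hp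
  set q := v + adjoint K (K ue) with hq
  obtain ⟨F, hF⟩ := hstab
  obtain ⟨g, hg⟩ := isUnit_of_expStable _ hF
  set Ginv : H →L[ℂ] H := ↑g⁻¹ with hGinvdef
  have hGinv : ∀ y, (A + B ∘L F) (Ginv y) = y := by
    intro y
    have h1 : (A + B ∘L F) * Ginv = 1 := by rw [← hg, hGinvdef]; exact g.mul_inv
    calc (A + B ∘L F) (Ginv y) = ((A + B ∘L F) * Ginv) y := rfl
      _ = y := by rw [h1]; rfl
  set f : H →L[ℂ] ℂ := (innerSL ℂ p).comp Ginv + (innerSL ℂ q).comp (F.comp Ginv) with hf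
  set w : H := (InnerProductSpace.toDual ℂ H).symm f with hw
  have hwf : ∀ y : H, ⟪w, y⟫_ℂ = f y := fun y =>
    InnerProductSpace.toDual_symm_apply
  have key : ∀ (x : H) (u : U), ⟪w, A x + B u⟫_ℂ = ⟪p, x⟫_ℂ + ⟪q, u⟫_ℂ := by
    intro x u
    set y : H := A x + B u with hy
    set x' : H := Ginv y with hx'
    set u' : U := F x' with hu'
    have hyx' : A x' + B u' = y := by
      have := hGinv y
      simpa [hx', hu'] using this
    have h0 : A (x - x') + B (u - u') = 0 := by
      calc A (x - x') + B (u - u') = (A x + B u) - (A x' + B u') := by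
            rw [map_sub, map_sub]; abel
        _ = 0 := by rw [hyx', ← hy, sub_self]
    have horth' := horth (x - x') (u - u') h0
    have hconj : ⟪p, x - x'⟫_ℂ + ⟪q, u - u'⟫_ℂ = 0 := by
      have := congrArg (starRingEnd ℂ) horth'
      simpa [inner_conj_symm] using this
    have hsum : ⟪p, x⟫_ℂ + ⟪q, u⟫_ℂ = ⟪p, x'⟫_ℂ + ⟪q, u'⟫_ℂ := by
      rw [inner_sub_right, inner_sub_right] at hconj
      linear_combination hconj
    rw [hwf y, hf]
    simp only [ContinuousLinearMap.add_apply, ContinuousLinearMap.comp_apply, innerSL_apply_apply]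
    rw [hsum]
  refine ⟨w, ?_, ?_⟩
  · refine ext_inner_left ℂ fun x => ?_
    rw [adjoint_inner_right]
    have := key x 0
    simp only [map_zero, add_zero, inner_zero_right] at this
    have h2 := congrArg (starRingEnd ℂ) this
    simpa [inner_conj_symm] using h2
  · refine ext_inner_left ℂ fun u => ?_
    rw [adjoint_inner_right]
    have := key 0 u
    simp only [map_zero, zero_add, inner_zero_right] at this
    have h2 := congrArg (starRingEnd ℂ) this
    simpa [inner_conj_symm] using h2
end
end

section
/- Let H, U be complex Hilbert spaces, A : H → H and B : U → H bounded linear operators, P : [0,∞) → L(H) a map of bounded operators, and P_min ∈ L(H). Assume A − BB*P_min is exponentially stable and there exist M₀, μ > 0 with ‖P(t) − P_min‖ ≤ M₀ e^{−μt} for all t ≥ 0. Then there exist constants M, k > 0, independent of T, τ, such that for every 0 ≤ τ ≤ t ≤ T and every differentiable function x : [τ,T] → H satisfying x′(s) = (A − B B* P(T−s)) x(s) for all s ∈ [τ,T], one has ‖x(t)‖ ≤ M e^{−k(t−τ)} ‖x(τ)‖ (exponential decay of the evolution operator U_T(t,τ) of the closed-loop nonautonomous system). -/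
open MeasureTheory ContinuousLinearMap
open scoped InnerProductSpace

noncomputable section

variable {H U Y : Type*}
  [NormedAddCommGroup H] [InnerProductSpace ℂ H] [CompleteSpace H]
  [NormedAddCommGroup U] [InnerProductSpace ℂ U] [CompleteSpace U]
  [NormedAddCommGroup Y] [InnerProductSpace ℂ Y] [CompleteSpace Y]

/-- Integral form of Gronwall's inequality. -/
lemma gronwall_int {φ h : ℝ → ℝ} {a τ b : ℝ}
    (hφ : Continuous φ) (hh : Continuous h) (hh0 : ∀ s, 0 ≤ h s)
    (hineq : ∀ t ∈ Set.Icc τ b, φ t ≤ a + ∫ s in τ..t, h s * φ s) :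
    ∀ t ∈ Set.Icc τ b, φ t ≤ a * Real.exp (∫ s in τ..t, h s) := by
  set ψ : ℝ → ℝ := fun t => ∫ s in τ..t, h s * φ s with hψdef
  set Φ : ℝ → ℝ := fun t => ∫ s in τ..t, h s with hΦdef
  have hhφc : Continuous fun s => h s * φ s := hh.mul hφ
  have hψ : ∀ t, HasDerivAt ψ (h t * φ t) t := fun t =>
    intervalIntegral.integral_hasDerivAt_right (hhφc.intervalIntegrable _ _)
      (hhφc.stronglyMeasurableAtFilter _ _) hhφc.continuousAt
  have hΦ : ∀ t, HasDerivAt Φ (h t) t := fun t =>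
    intervalIntegral.integral_hasDerivAt_right (hh.intervalIntegrable _ _)
      (hh.stronglyMeasurableAtFilter _ _) hh.continuousAt
  set F : ℝ → ℝ := fun t => (a + ψ t) * Real.exp (-Φ t) with hFdef
  have hF : ∀ t, HasDerivAt F
      ((h t * φ t) * Real.exp (-Φ t) + (a + ψ t) * (Real.exp (-Φ t) * -(h t))) t := fun t =>
    ((hψ t).const_add a).mul ((hΦ t).neg.exp)
  have hψc : Continuous ψ := continuous_iff_continuousAt.2 fun t => (hψ t).continuousAt
  have hΦc : Continuous Φ := continuous_iff_continuousAt.2 fun t => (hΦ t).continuousAt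
  have hFc : Continuous F := (continuous_const.add hψc).mul (Real.continuous_exp.comp hΦc.neg)
  have hFanti : AntitoneOn F (Set.Icc τ b) := by
    apply antitoneOn_of_deriv_nonpos (convex_Icc τ b) hFc.continuousOn
      (fun t _ => (hF t).differentiableAt.differentiableWithinAt)
    intro t ht
    rw [interior_Icc] at ht
    rw [(hF t).deriv]
    have h1 : φ t ≤ a + ψ t := hineq t (Set.mem_Icc_of_Ioo ht)
    have h2 : (0:ℝ) < Real.exp (-Φ t) := Real.exp_pos _
    nlinarith [mul_nonneg (mul_nonneg (hh0 t) h2.le) (sub_nonneg.2 h1)]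
  intro t ht
  have hτmem : τ ∈ Set.Icc τ b := ⟨le_refl _, ht.1.trans ht.2⟩
  have h3 : F t ≤ F τ := hFanti hτmem ht ht.1
  have hFτ : F τ = a := by
    simp [hFdef, hψdef, hΦdef, intervalIntegral.integral_same]
  rw [hFτ] at h3
  have h4 : a + ψ t ≤ a * Real.exp (Φ t) := by
    have h5 := mul_le_mul_of_nonneg_right h3 (Real.exp_pos (Φ t)).le
    have h6 : F t * Real.exp (Φ t) = a + ψ t := by
      rw [hFdef]
      simp only []
      rw [mul_assoc, ← Real.exp_add, neg_add_cancel, Real.exp_zero, mul_one]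
    rwa [h6] at h5
  exact (hineq t ht).trans h4

lemma hasDerivAt_exp_real (G : H →L[ℂ] H) (r : ℝ) :
    HasDerivAt (fun u : ℝ => NormedSpace.exp (u • G)) (NormedSpace.exp (r • G) * G) r := by
  have h := hasDerivAt_exp_smul_const (𝕂 := ℝ) G r
  exact h

lemma hasDerivAt_exp_sub (G : H →L[ℂ] H) (t s : ℝ) :
    HasDerivAt (fun r : ℝ => NormedSpace.exp ((t - r) • G))
      (-(NormedSpace.exp ((t - s) • G) * G)) s := by
  have h1 := hasDerivAt_exp_real G (t - s)
  have h2 : HasDerivAt (fun r : ℝ => t - r) (-1 : ℝ) s := by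
    simpa using (hasDerivAt_id s).const_sub t
  exact (h1.scomp s h2).congr_deriv (by simp)

/-- Real-parameter derivative of `r ↦ exp((t-r)•G)` as a real-linear operator family. -/
lemma hasDerivAt_exp_sub_real (G : H →L[ℂ] H) (t s : ℝ) :
    HasDerivAt (fun r : ℝ => (NormedSpace.exp ((t - r) • G)).restrictScalars ℝ)
      ((-(NormedSpace.exp ((t - s) • G) * G)).restrictScalars ℝ) s :=
  (ContinuousLinearMap.restrictScalarsL ℂ H H ℝ ℝ).hasFDerivAt.comp_hasDerivAt s
    (hasDerivAt_exp_sub G t s)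

/-- Variation of constants for `x' = (G + D s) x` on `[τ, T]`. -/
lemma var_const (G : H →L[ℂ] H) (D : ℝ → (H →L[ℂ] H)) {x : ℝ → H} {τ T : ℝ}
    {c Cx : ℝ}
    (hx' : ∀ s ∈ Set.Icc τ T, HasDerivAt x (G (x s) + D s (x s)) s)
    (hxc : ContinuousOn x (Set.Icc τ T))
    (hD : ∀ s ∈ Set.Icc τ T, ‖D s‖ ≤ c)
    (hCx : ∀ s ∈ Set.Icc τ T, ‖x s‖ ≤ Cx) :
    ∀ t ∈ Set.Icc τ T, x t = NormedSpace.exp ((t - τ) • G) (x τ) +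
      ∫ s in τ..t, NormedSpace.exp ((t - s) • G) (D s (x s)) := by
  haveI : SecondCountableTopologyEither ℝ H := ⟨Or.inl inferInstance⟩
  haveI : SecondCountableTopologyEither ℝ (H →L[ℝ] H) := ⟨Or.inl inferInstance⟩
  intro t ht
  set F : ℝ → H := fun s => NormedSpace.exp ((t - s) • G) (D s (x s)) with hFdef
  have hsub : Set.Icc τ t ⊆ Set.Icc τ T := Set.Icc_subset_Icc le_rfl ht.2
  have hg : ∀ s ∈ Set.uIcc τ t,
      HasDerivAt (fun r => NormedSpace.exp ((t - r) • G) (x r)) (F s) s := by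
    intro s hs
    rw [Set.uIcc_of_le ht.1] at hs
    have hsT : s ∈ Set.Icc τ T := hsub hs
    have hd := (hasDerivAt_exp_sub_real G t s).clm_apply (hx' s hsT)
    have heq : (fun r => (NormedSpace.exp ((t - r) • G)).restrictScalars ℝ (x r)) =
        fun r => NormedSpace.exp ((t - r) • G) (x r) := rfl
    rw [heq] at hd
    convert hd using 1
    simp only [hFdef, ContinuousLinearMap.coe_restrictScalars',
      ContinuousLinearMap.neg_apply, ContinuousLinearMap.mul_apply, map_add]
    abel
  have hEc : Continuous (fun s : ℝ => NormedSpace.exp ((t - s) • G)) :=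
    continuous_iff_continuousAt.2 fun s => (hasDerivAt_exp_sub G t s).continuousAt
  have hErc : Continuous (fun s : ℝ => (NormedSpace.exp ((t - s) • G)).restrictScalars ℝ) :=
    (ContinuousLinearMap.continuous_restrictScalars (𝕜' := ℝ)).comp hEc
  obtain ⟨CE, hCE⟩ := isCompact_Icc.exists_bound_of_continuousOn
    (hEc.continuousOn : ContinuousOn _ (Set.Icc τ t))
  have hint : IntervalIntegrable F volume τ t := by
    rw [intervalIntegrable_iff_integrableOn_Ioc_of_le ht.1]
    have hIoc : Set.Ioc τ t ⊆ Set.Icc τ T := fun s hs => hsub ⟨hs.1.le, hs.2⟩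
    constructor
    · -- a.e. strong measurability
      have hxm : AEStronglyMeasurable x (volume.restrict (Set.Ioc τ t)) :=
        (hxc.mono hIoc).aestronglyMeasurable measurableSet_Ioc
      have hdx : AEStronglyMeasurable (deriv x) (volume.restrict (Set.Ioc τ t)) :=
        (stronglyMeasurable_deriv x).aestronglyMeasurable
      have hv : AEStronglyMeasurable (fun s => deriv x s - G (x s))
          (volume.restrict (Set.Ioc τ t)) :=
        hdx.sub (G.continuous.comp_aestronglyMeasurable hxm)
      have hF' : AEStronglyMeasurable
          (fun s => NormedSpace.exp ((t - s) • G) (deriv x s - G (x s)))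
          (volume.restrict (Set.Ioc τ t)) := by
        have := ((ContinuousLinearMap.apply ℝ H).flip).aestronglyMeasurable_comp₂
          hErc.aestronglyMeasurable hv
        simpa using this
      refine hF'.congr ((ae_restrict_iff' measurableSet_Ioc).2 (ae_of_all _ fun s hs => ?_))
      have hsT : s ∈ Set.Icc τ T := hIoc hs
      show NormedSpace.exp ((t - s) • G) (deriv x s - G (x s)) = F s
      rw [(hx' s hsT).deriv]
      simp only [hFdef]
      congr 1
      abel
    · -- finite integral
      apply HasFiniteIntegral.restrict_of_bounded (C := CE * (c * Cx)) measure_Ioc_lt_top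
      refine (ae_restrict_iff' measurableSet_Ioc).2 (ae_of_all _ fun s hs => ?_)
      have hsT : s ∈ Set.Icc τ T := hIoc hs
      have hs' : s ∈ Set.Icc τ t := ⟨hs.1.le, hs.2⟩
      have h1 : ‖NormedSpace.exp ((t - s) • G)‖ ≤ CE := hCE _ hs'
      have h2 : ‖D s (x s)‖ ≤ c * Cx := by
        have hc0 : (0:ℝ) ≤ c := (norm_nonneg _).trans (hD s hsT)
        calc ‖D s (x s)‖ ≤ ‖D s‖ * ‖x s‖ := le_opNorm _ _
          _ ≤ c * Cx := mul_le_mul (hD s hsT) (hCx s hsT) (norm_nonneg _) hc0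
      calc ‖F s‖ ≤ ‖NormedSpace.exp ((t - s) • G)‖ * ‖D s (x s)‖ := le_opNorm _ _
        _ ≤ CE * (c * Cx) := mul_le_mul h1 h2 (norm_nonneg _) ((norm_nonneg _).trans h1)
  have hFTC := intervalIntegral.integral_eq_sub_of_hasDerivAt hg hint
  have hgt : NormedSpace.exp ((t - t) • G) (x t) = x t := by
    simp [NormedSpace.exp_zero]
  rw [hgt] at hFTC
  rw [← sub_eq_iff_eq_add']
  exact hFTC.symm

/-- exponential decay, uniformly in `T` and `τ`, of solutions of the
closed-loop nonautonomous system `x′(s) = (A − B B* P(T − s)) x(s)`, assuming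
`A − B B* P_min` is exponentially stable and `‖P(t) − P_min‖ ≤ M₀ e^{−μ t}`. -/
theorem closed_loop_evolution_decay
    (A : H →L[ℂ] H) (B : U →L[ℂ] H) (P : ℝ → (H →L[ℂ] H)) (Pmin : H →L[ℂ] H)
    (hstabmin : ExpStable (A - B ∘L (adjoint B) ∘L Pmin))
    (hconv : ∃ M₀ > 0, ∃ μ > 0, ∀ t : ℝ, 0 ≤ t →
      ‖P t - Pmin‖ ≤ M₀ * Real.exp (-μ * t)) :
    ∃ M > 0, ∃ k > 0, ∀ T τ t : ℝ, 0 ≤ τ → τ ≤ t → t ≤ T →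
      ∀ x : ℝ → H,
        (∀ s ∈ Set.Icc τ T, HasDerivAt x ((A - B ∘L (adjoint B) ∘L (P (T - s))) (x s)) s) →
        ‖x t‖ ≤ M * Real.exp (-k * (t - τ)) * ‖x τ‖ := by
  obtain ⟨m, hm, ω, hω, hstab⟩ := hstabmin
  obtain ⟨M₀, hM₀, μ, hμ, hP⟩ := hconv
  set G : H →L[ℂ] H := A - B ∘L (adjoint B) ∘L Pmin with hGdef
  set c : ℝ := ‖B ∘L adjoint B‖ * M₀ with hcdef
  have hc0 : 0 ≤ c := mul_nonneg (norm_nonneg _) hM₀.le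
  refine ⟨m * Real.exp (m * c / μ), by positivity, ω, hω, ?_⟩
  intro T τ t₀ hτ0 hτt ht₀T x hx
  have hτT : τ ≤ T := hτt.trans ht₀T
  set D : ℝ → (H →L[ℂ] H) := fun s => (B ∘L adjoint B) ∘L (Pmin - P (T - s)) with hDdef
  -- norm bound on the perturbation
  have hDnorm : ∀ s ∈ Set.Icc τ T, ‖D s‖ ≤ c * Real.exp (-μ * (T - s)) := by
    intro s hs
    have hTs : (0:ℝ) ≤ T - s := by linarith [hs.2]
    calc ‖D s‖ ≤ ‖B ∘L adjoint B‖ * ‖Pmin - P (T - s)‖ := opNorm_comp_le _ _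
      _ ≤ ‖B ∘L adjoint B‖ * (M₀ * Real.exp (-μ * (T - s))) := by
          gcongr
          rw [norm_sub_rev]; exact hP (T - s) hTs
      _ = c * Real.exp (-μ * (T - s)) := by rw [hcdef]; ring
  have hexp_le_one : ∀ s ∈ Set.Icc τ T, Real.exp (-μ * (T - s)) ≤ 1 := by
    intro s hs
    have : -μ * (T - s) ≤ 0 := by nlinarith [hs.2]
    calc Real.exp (-μ * (T - s)) ≤ Real.exp 0 := Real.exp_le_exp.2 this
      _ = 1 := Real.exp_zero
  have hDnorm' : ∀ s ∈ Set.Icc τ T, ‖D s‖ ≤ c := by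
    intro s hs
    refine (hDnorm s hs).trans ?_
    nlinarith [hexp_le_one s hs, Real.exp_pos (-μ * (T - s))]
  -- rewrite the ODE
  have hx' : ∀ s ∈ Set.Icc τ T, HasDerivAt x (G (x s) + D s (x s)) s := by
    intro s hs
    convert hx s hs using 1
    simp only [hGdef, hDdef, ContinuousLinearMap.sub_apply, ContinuousLinearMap.comp_apply,
      map_sub]
    abel
  have hxc : ContinuousOn x (Set.Icc τ T) := fun s hs =>
    ((hx s hs).continuousAt).continuousWithinAt
  obtain ⟨Cx, hCx⟩ := isCompact_Icc.exists_bound_of_continuousOn hxc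
  -- variation of constants
  have hkey := var_const G D hx' hxc hDnorm' hCx
  -- norm inequality
  have hnorm : ∀ t ∈ Set.Icc τ T, ‖x t‖ ≤ m * Real.exp (-ω * (t - τ)) * ‖x τ‖ +
      ∫ s in τ..t, m * Real.exp (-ω * (t - s)) * (c * Real.exp (-μ * (T - s))) * ‖x s‖ := by
    intro t ht
    set b : ℝ → ℝ :=
      fun s => m * Real.exp (-ω * (t - s)) * (c * Real.exp (-μ * (T - s))) * ‖x s‖ with hbdef
    have hsub : Set.Icc τ t ⊆ Set.Icc τ T := Set.Icc_subset_Icc le_rfl ht.2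
    have hbcont : ContinuousOn b (Set.Icc τ t) := by
      apply ContinuousOn.mul
      · exact (Continuous.mul (by fun_prop) (by fun_prop)).continuousOn
      · exact ((hxc.mono hsub).norm)
    have hbint : IntervalIntegrable b volume τ t := by
      apply ContinuousOn.intervalIntegrable
      rwa [Set.uIcc_of_le ht.1]
    have hb0 : ∀ s ∈ Set.Icc τ t, 0 ≤ b s := fun s _ => by
      apply mul_nonneg (mul_nonneg (mul_nonneg hm.le (Real.exp_pos _).le) _) (norm_nonneg _)
      exact mul_nonneg hc0 (Real.exp_pos _).le
    have hbd : ∀ s ∈ Set.Ioc τ t,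
        ‖NormedSpace.exp ((t - s) • G) (D s (x s))‖ ≤ b s := by
      intro s hs
      have hsT : s ∈ Set.Icc τ T := hsub ⟨hs.1.le, hs.2⟩
      have h1 : ‖NormedSpace.exp ((t - s) • G)‖ ≤ m * Real.exp (-ω * (t - s)) :=
        hstab (t - s) (by linarith [hs.2])
      have h2 : ‖D s (x s)‖ ≤ c * Real.exp (-μ * (T - s)) * ‖x s‖ := by
        calc ‖D s (x s)‖ ≤ ‖D s‖ * ‖x s‖ := le_opNorm _ _
          _ ≤ c * Real.exp (-μ * (T - s)) * ‖x s‖ :=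
            mul_le_mul_of_nonneg_right (hDnorm s hsT) (norm_nonneg _)
      calc ‖NormedSpace.exp ((t - s) • G) (D s (x s))‖
          ≤ ‖NormedSpace.exp ((t - s) • G)‖ * ‖D s (x s)‖ := le_opNorm _ _
        _ ≤ m * Real.exp (-ω * (t - s)) * (c * Real.exp (-μ * (T - s)) * ‖x s‖) := by
            apply mul_le_mul h1 h2 (norm_nonneg _)
            exact mul_nonneg hm.le (Real.exp_pos _).le
        _ = b s := by rw [hbdef]; ring
    have hI : ‖∫ s in τ..t, NormedSpace.exp ((t - s) • G) (D s (x s))‖ ≤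
        ∫ s in τ..t, b s := by
      have h3 := intervalIntegral.norm_integral_le_of_norm_le (μ := volume)
        (f := fun s => NormedSpace.exp ((t - s) • G) (D s (x s))) (g := b)
        ht.1 (ae_of_all _ fun s hs => hbd s hs) hbint
      have h4 : (0:ℝ) ≤ ∫ s in τ..t, b s :=
        intervalIntegral.integral_nonneg ht.1 hb0
      exact h3
    have hE1 : ‖NormedSpace.exp ((t - τ) • G) (x τ)‖ ≤
        m * Real.exp (-ω * (t - τ)) * ‖x τ‖ := by
      calc ‖NormedSpace.exp ((t - τ) • G) (x τ)‖
          ≤ ‖NormedSpace.exp ((t - τ) • G)‖ * ‖x τ‖ := le_opNorm _ _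
        _ ≤ m * Real.exp (-ω * (t - τ)) * ‖x τ‖ :=
            mul_le_mul_of_nonneg_right (hstab (t - τ) (by linarith [ht.1]))
              (norm_nonneg _)
    calc ‖x t‖ = ‖NormedSpace.exp ((t - τ) • G) (x τ) +
        ∫ s in τ..t, NormedSpace.exp ((t - s) • G) (D s (x s))‖ := by rw [← hkey t ht]
      _ ≤ ‖NormedSpace.exp ((t - τ) • G) (x τ)‖ +
          ‖∫ s in τ..t, NormedSpace.exp ((t - s) • G) (D s (x s))‖ := norm_add_le _ _
      _ ≤ m * Real.exp (-ω * (t - τ)) * ‖x τ‖ + ∫ s in τ..t, b s := add_le_add hE1 hI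
  -- Gronwall setup
  set cl : ℝ → ℝ := fun s => max τ (min s t₀) with hcldef
  have hclc : Continuous cl := continuous_const.max (continuous_id.min continuous_const)
  have hclmem : ∀ s, cl s ∈ Set.Icc τ T := fun s =>
    ⟨le_max_left _ _, max_le hτT (le_trans (min_le_right _ _) ht₀T)⟩
  have hcleq : ∀ s ∈ Set.Icc τ t₀, cl s = s := by
    intro s hs
    rw [hcldef]
    simp only []
    rw [min_eq_left hs.2, max_eq_right hs.1]
  set φ : ℝ → ℝ := fun s => Real.exp (ω * (cl s - τ)) * ‖x (cl s)‖ with hφdef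
  have hφc : Continuous φ := by
    have hxcl : Continuous fun s => x (cl s) := hxc.comp_continuous hclc hclmem
    exact (Real.continuous_exp.comp
      (continuous_const.mul (hclc.sub continuous_const))).mul hxcl.norm
  set h : ℝ → ℝ := fun s => m * c * Real.exp (-μ * (T - s)) with hhdef
  have hhc : Continuous h := continuous_const.mul
    (Real.continuous_exp.comp (continuous_const.mul (continuous_const.sub continuous_id)))
  have hh0 : ∀ s, 0 ≤ h s := fun s => mul_nonneg (mul_nonneg hm.le hc0) (Real.exp_pos _).le
  have hφeq : ∀ s ∈ Set.Icc τ t₀, φ s = Real.exp (ω * (s - τ)) * ‖x s‖ := by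
    intro s hs; rw [hφdef]; simp only []; rw [hcleq s hs]
  have hineq : ∀ t ∈ Set.Icc τ t₀, φ t ≤ m * ‖x τ‖ + ∫ s in τ..t, h s * φ s := by
    intro t ht
    have htT : t ∈ Set.Icc τ T := ⟨ht.1, ht.2.trans ht₀T⟩
    have hstep := mul_le_mul_of_nonneg_left (hnorm t htT) (Real.exp_pos (ω * (t - τ))).le
    rw [hφeq t ht]
    have e1 : Real.exp (ω * (t - τ)) * (m * Real.exp (-ω * (t - τ)) * ‖x τ‖) = m * ‖x τ‖ := by
      rw [show Real.exp (ω * (t - τ)) * (m * Real.exp (-ω * (t - τ)) * ‖x τ‖)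
          = m * (Real.exp (ω * (t - τ)) * Real.exp (-ω * (t - τ))) * ‖x τ‖ by ring,
        ← Real.exp_add, show ω * (t - τ) + -ω * (t - τ) = 0 by ring, Real.exp_zero]
      ring
    have e2 : Real.exp (ω * (t - τ)) * (∫ s in τ..t,
        m * Real.exp (-ω * (t - s)) * (c * Real.exp (-μ * (T - s))) * ‖x s‖)
        = ∫ s in τ..t, h s * φ s := by
      rw [← intervalIntegral.integral_const_mul]
      apply intervalIntegral.integral_congr
      intro s hs
      rw [Set.uIcc_of_le ht.1] at hs
      have hs' : s ∈ Set.Icc τ t₀ := ⟨hs.1, hs.2.trans ht.2⟩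
      show Real.exp (ω * (t - τ)) *
          (m * Real.exp (-ω * (t - s)) * (c * Real.exp (-μ * (T - s))) * ‖x s‖) = h s * φ s
      rw [hφeq s hs']
      show Real.exp (ω * (t - τ)) *
          (m * Real.exp (-ω * (t - s)) * (c * Real.exp (-μ * (T - s))) * ‖x s‖)
          = m * c * Real.exp (-μ * (T - s)) * (Real.exp (ω * (s - τ)) * ‖x s‖)
      rw [show ω * (s - τ) = ω * (t - τ) + -ω * (t - s) by ring, Real.exp_add]
      ring
    calc Real.exp (ω * (t - τ)) * ‖x t‖ ≤ _ := hstep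
      _ = m * ‖x τ‖ + ∫ s in τ..t, h s * φ s := by rw [mul_add, e1, e2]
  have hgron := gronwall_int hφc hhc hh0 hineq t₀ ⟨hτt, le_refl _⟩
  -- compute the integral of h
  have hprim : ∀ s ∈ Set.uIcc τ t₀,
      HasDerivAt (fun r => m * c / μ * Real.exp (-μ * (T - r))) (h s) s := by
    intro s _
    have h1 : HasDerivAt (fun r : ℝ => -μ * (T - r)) μ s := by
      simpa using ((hasDerivAt_id s).const_sub T).const_mul (-μ)
    have h2 := (h1.exp).const_mul (m * c / μ)
    refine h2.congr_deriv ?_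
    rw [hhdef]
    field_simp
  have hΦval := intervalIntegral.integral_eq_sub_of_hasDerivAt hprim (hhc.intervalIntegrable _ _)
  have hΦle : (∫ s in τ..t₀, h s) ≤ m * c / μ := by
    rw [hΦval]
    have e3 : Real.exp (-μ * (T - t₀)) ≤ 1 := by
      rw [show (1:ℝ) = Real.exp 0 by simp]
      exact Real.exp_le_exp.2 (by nlinarith)
    have e4 : 0 < Real.exp (-μ * (T - τ)) := Real.exp_pos _
    have e5 : 0 ≤ m * c / μ := by positivity
    nlinarith
  have h5 : φ t₀ ≤ m * ‖x τ‖ * Real.exp (m * c / μ) :=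
    hgron.trans (mul_le_mul_of_nonneg_left (Real.exp_le_exp.2 hΦle)
      (mul_nonneg hm.le (norm_nonneg _)))
  rw [hφeq t₀ ⟨hτt, le_refl _⟩] at h5
  have h6 := mul_le_mul_of_nonneg_left h5 (Real.exp_pos (-ω * (t₀ - τ))).le
  have e6 : Real.exp (-ω * (t₀ - τ)) * (Real.exp (ω * (t₀ - τ)) * ‖x t₀‖) = ‖x t₀‖ := by
    rw [← mul_assoc, ← Real.exp_add, show -ω * (t₀ - τ) + ω * (t₀ - τ) = 0 by ring,
      Real.exp_zero, one_mul]
  rw [e6] at h6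
  calc ‖x t₀‖ ≤ Real.exp (-ω * (t₀ - τ)) * (m * ‖x τ‖ * Real.exp (m * c / μ)) := h6
    _ = m * Real.exp (m * c / μ) * Real.exp (-ω * (t₀ - τ)) * ‖x τ‖ := by ring
end
end

section
/- Let H, U, Y be complex Hilbert spaces, A : H → H, B : U → H, C : H → Y bounded linear operators, z ∈ H, v ∈ U, and let T > 0. Let P : [0,T] → L(H) be differentiable in operator norm with P(0) = 0 and P′(t) = A*P(t) + P(t)A − P(t)BB*P(t) + C*C for all t, and let w ∈ H satisfy A*w = z and B*w = v. Then for every u ∈ L²([0,T],U) and x₀ ∈ H, the mild solution x(t) = exp(tA)x₀ + ∫₀ᵗ exp((t−s)A) B u(s) ds satisfies the cost decomposition ∫₀^T (‖Cx(t)‖² + ‖u(t)‖² + 2Re⟨z, x(t)⟩ + 2Re⟨v, u(t)⟩) dt = ∫₀^T ‖u(t) + B*P(T−t)x(t)‖² dt + Re⟨P(T)x₀, x₀⟩ + 2Re⟨w, x(T)⟩ − 2Re⟨w, x₀⟩. -/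
open MeasureTheory ContinuousLinearMap
open scoped InnerProductSpace

noncomputable section

variable {H U Y : Type*}
  [NormedAddCommGroup H] [InnerProductSpace ℂ H] [CompleteSpace H]
  [NormedAddCommGroup U] [InnerProductSpace ℂ U] [CompleteSpace U]
  [NormedAddCommGroup Y] [InnerProductSpace ℂ Y] [CompleteSpace Y]

/-! ### Auxiliary material for the proof of the cost decomposition -/

section CDaux

set_option linter.unusedSectionVars false

open Set intervalIntegral

variable {E F G : Type*}
  [NormedAddCommGroup E] [NormedSpace ℝ E] [CompleteSpace E]
  [NormedAddCommGroup F] [NormedSpace ℝ F] [CompleteSpace F]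
  [NormedAddCommGroup G] [NormedSpace ℝ G] [CompleteSpace G]

lemma CD.integrable_bilin (b : E →L[ℝ] F →L[ℝ] G) {T : ℝ}
    {φ : ℝ → E} {ψ : ℝ → F}
    (hφ : IntegrableOn φ (Ioc 0 T)) (hψ : IntegrableOn ψ (Ioc 0 T)) :
    Integrable (fun p : ℝ × ℝ => b (φ p.1) (ψ p.2))
      ((volume.restrict (Ioc 0 T)).prod (volume.restrict (Ioc 0 T))) := by
  have hm : AEStronglyMeasurable (fun p : ℝ × ℝ => b (φ p.1) (ψ p.2))
      ((volume.restrict (Ioc 0 T)).prod (volume.restrict (Ioc 0 T))) := by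
    have h1 := hφ.aestronglyMeasurable.comp_fst (ν := volume.restrict (Ioc 0 T))
    have h2 := hψ.aestronglyMeasurable.comp_snd (μ := volume.restrict (Ioc 0 T))
    exact b.continuous₂.comp_aestronglyMeasurable (h1.prodMk h2)
  refine ((hφ.norm.mul_prod hψ.norm).const_mul ‖b‖).mono' hm ?_
  refine Filter.Eventually.of_forall fun p => ?_
  calc ‖b (φ p.1) (ψ p.2)‖ ≤ ‖b‖ * ‖φ p.1‖ * ‖ψ p.2‖ := b.le_opNorm₂ _ _
    _ ≤ ‖b‖ * (‖φ p.1‖ * ‖ψ p.2‖) := by rw [mul_assoc]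

lemma CD.triangle_swap (b : E →L[ℝ] F →L[ℝ] G) {T : ℝ}
    {φ : ℝ → E} {ψ : ℝ → F}
    (hφ : IntegrableOn φ (Ioc 0 T)) (hψ : IntegrableOn ψ (Ioc 0 T)) :
    (∫ s in Ioc (0:ℝ) T, (∫ σ in Ioc s T, b (φ s) (ψ σ))) =
    ∫ σ in Ioc (0:ℝ) T, (∫ s in Ioc 0 σ, b (φ s) (ψ σ)) := by
  set μ := volume.restrict (Ioc (0:ℝ) T) with hμ
  set K : ℝ × ℝ → G := fun p => if p.1 < p.2 then b (φ p.1) (ψ p.2) else 0 with hK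
  have hKind : K = Set.indicator {p : ℝ × ℝ | p.1 < p.2} (fun p => b (φ p.1) (ψ p.2)) := by
    ext p
    by_cases h : p.1 < p.2 <;> simp [hK, h, Set.indicator_apply, Set.mem_setOf_eq]
  have hKint : Integrable K (μ.prod μ) := by
    rw [hKind]
    exact (CD.integrable_bilin b hφ hψ).indicator
      (measurableSet_lt measurable_fst measurable_snd)
  have h1 : ∀ s ∈ Ioc (0:ℝ) T, (∫ σ in Ioc s T, b (φ s) (ψ σ)) = ∫ σ, K (s, σ) ∂μ := by
    intro s hs
    have : (fun σ => K (s, σ)) = Set.indicator (Ioi s) (fun σ => b (φ s) (ψ σ)) := by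
      ext σ
      by_cases h : s < σ <;> simp [hK, h, Set.indicator_apply, Set.mem_Ioi]
    rw [this, hμ, setIntegral_indicator measurableSet_Ioi]
    rw [Set.Ioc_inter_Ioi, max_eq_right hs.1.le]
  have h2 : ∀ σ ∈ Ioc (0:ℝ) T, (∫ s, K (s, σ) ∂μ) = ∫ s in Ioc (0:ℝ) σ, b (φ s) (ψ σ) := by
    intro σ hσ
    have : (fun s => K (s, σ)) = Set.indicator (Iio σ) (fun s => b (φ s) (ψ σ)) := by
      ext s
      by_cases h : s < σ <;> simp [hK, h, Set.indicator_apply, Set.mem_Iio]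
    rw [this, hμ, setIntegral_indicator measurableSet_Iio]
    have : Ioc (0:ℝ) T ∩ Iio σ = Ioo 0 σ := by
      ext s
      simp only [Set.mem_inter_iff, Set.mem_Ioc, Set.mem_Iio, Set.mem_Ioo]
      exact ⟨fun h => ⟨h.1.1, h.2⟩, fun h => ⟨⟨h.1, h.2.le.trans hσ.2⟩, h.2⟩⟩
    rw [this, ← integral_Ioc_eq_integral_Ioo]
  calc (∫ s in Ioc (0:ℝ) T, (∫ σ in Ioc s T, b (φ s) (ψ σ)))
      = ∫ s, (∫ σ, K (s, σ) ∂μ) ∂μ := setIntegral_congr_fun measurableSet_Ioc h1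
    _ = ∫ σ, (∫ s, K (s, σ) ∂μ) ∂μ := integral_integral_swap hKint
    _ = ∫ σ in Ioc (0:ℝ) T, (∫ s in Ioc 0 σ, b (φ s) (ψ σ)) :=
        setIntegral_congr_fun measurableSet_Ioc h2

/-- Continuity of a function with an integral representation. -/
lemma CD.contOn_of_rep {T : ℝ} {f : ℝ → E} {f' : ℝ → E}
    (hf' : IntegrableOn f' (Ioc 0 T))
    (hf : ∀ t ∈ Icc (0:ℝ) T, f t = f 0 + ∫ s in (0:ℝ)..t, f' s) :
    ContinuousOn f (Icc 0 T) := by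
  have hf'Icc : IntegrableOn f' (Icc 0 T) := by
    rwa [integrableOn_Icc_iff_integrableOn_Ioc]
  have h : ContinuousOn (fun t => f 0 + ∫ s in Ioc (0:ℝ) t, f' s) (Icc 0 T) :=
    continuous_const.continuousOn.add (continuousOn_primitive hf'Icc)
  refine h.congr fun t ht => ?_
  rw [hf t ht, integral_of_le ht.1]

lemma CD.integrable_bilin_right (b : E →L[ℝ] F →L[ℝ] G) {T : ℝ}
    {φ : ℝ → E} {f : ℝ → F}
    (hφ : IntegrableOn φ (Ioc 0 T)) (hfc : ContinuousOn f (Icc 0 T)) :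
    IntegrableOn (fun t => b (φ t) (f t)) (Ioc 0 T) := by
  obtain ⟨Cg, hCg⟩ := isCompact_Icc.exists_bound_of_continuousOn hfc
  have hfm : AEStronglyMeasurable f (volume.restrict (Ioc 0 T)) :=
    (hfc.aestronglyMeasurable measurableSet_Icc).mono_measure
      (Measure.restrict_mono Ioc_subset_Icc_self le_rfl)
  refine ((hφ.norm.const_mul (‖b‖ * Cg)).mono'
    (b.continuous₂.comp_aestronglyMeasurable (hφ.aestronglyMeasurable.prodMk hfm)) ?_)
  filter_upwards [ae_restrict_mem measurableSet_Ioc] with t ht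
  calc ‖b (φ t) (f t)‖ ≤ ‖b‖ * ‖φ t‖ * ‖f t‖ := b.le_opNorm₂ _ _
    _ ≤ ‖b‖ * ‖φ t‖ * Cg :=
        mul_le_mul_of_nonneg_left (hCg t (Ioc_subset_Icc_self ht)) (by positivity)
    _ = ‖b‖ * Cg * ‖φ t‖ := by ring

lemma CD.integrable_bilin_left (b : E →L[ℝ] F →L[ℝ] G) {T : ℝ}
    {f : ℝ → E} {φ : ℝ → F}
    (hfc : ContinuousOn f (Icc 0 T)) (hφ : IntegrableOn φ (Ioc 0 T)) :
    IntegrableOn (fun t => b (f t) (φ t)) (Ioc 0 T) := by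
  obtain ⟨Cf, hCf⟩ := isCompact_Icc.exists_bound_of_continuousOn hfc
  have hfm : AEStronglyMeasurable f (volume.restrict (Ioc 0 T)) :=
    (hfc.aestronglyMeasurable measurableSet_Icc).mono_measure
      (Measure.restrict_mono Ioc_subset_Icc_self le_rfl)
  refine ((hφ.norm.const_mul (‖b‖ * Cf)).mono'
    (b.continuous₂.comp_aestronglyMeasurable (hfm.prodMk hφ.aestronglyMeasurable)) ?_)
  filter_upwards [ae_restrict_mem measurableSet_Ioc] with t ht
  calc ‖b (f t) (φ t)‖ ≤ ‖b‖ * ‖f t‖ * ‖φ t‖ := b.le_opNorm₂ _ _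
    _ ≤ ‖b‖ * Cf * ‖φ t‖ :=
        mul_le_mul_of_nonneg_right
          (mul_le_mul_of_nonneg_left (hCf t (Ioc_subset_Icc_self ht)) (norm_nonneg b))
          (norm_nonneg _)

/-- Bilinear product rule in integral form, for absolutely continuous functions. -/
lemma CD.bilin_rep (b : E →L[ℝ] F →L[ℝ] G) {T : ℝ} (hT : 0 ≤ T)
    {f : ℝ → E} {g : ℝ → F} {f' : ℝ → E} {g' : ℝ → F}
    (hf' : IntegrableOn f' (Ioc 0 T)) (hg' : IntegrableOn g' (Ioc 0 T))
    (hf : ∀ t ∈ Icc (0:ℝ) T, f t = f 0 + ∫ s in (0:ℝ)..t, f' s)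
    (hg : ∀ t ∈ Icc (0:ℝ) T, g t = g 0 + ∫ s in (0:ℝ)..t, g' s) :
    b (f T) (g T) = b (f 0) (g 0) +
      ∫ t in (0:ℝ)..T, (b (f' t) (g t) + b (f t) (g' t)) := by
  have hTmem : T ∈ Icc (0:ℝ) T := ⟨hT, le_rfl⟩
  have hf'i : IntervalIntegrable f' volume 0 T :=
    (intervalIntegrable_iff_integrableOn_Ioc_of_le hT).2 hf'
  have hg'i : IntervalIntegrable g' volume 0 T :=
    (intervalIntegrable_iff_integrableOn_Ioc_of_le hT).2 hg'
  have hf'sub : ∀ t ∈ Icc (0:ℝ) T, IntervalIntegrable f' volume 0 t := fun t ht =>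
    hf'i.mono_set (by rw [uIcc_of_le ht.1, uIcc_of_le hT]; exact Icc_subset_Icc le_rfl ht.2)
  have hg'sub : ∀ t ∈ Icc (0:ℝ) T, IntervalIntegrable g' volume 0 t := fun t ht =>
    hg'i.mono_set (by rw [uIcc_of_le ht.1, uIcc_of_le hT]; exact Icc_subset_Icc le_rfl ht.2)
  have hg'sub2 : ∀ t ∈ Icc (0:ℝ) T, IntervalIntegrable g' volume t T := fun t ht =>
    hg'i.mono_set (by rw [uIcc_of_le ht.2, uIcc_of_le hT]; exact Icc_subset_Icc ht.1 le_rfl)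
  have hfc : ContinuousOn f (Icc 0 T) := CD.contOn_of_rep hf' hf
  have hgc : ContinuousOn g (Icc 0 T) := CD.contOn_of_rep hg' hg
  have I1 : IntegrableOn (fun t => b (f' t) (g t)) (Ioc 0 T) :=
    CD.integrable_bilin_right b hf' hgc
  have I2 : IntegrableOn (fun t => b (f t) (g' t)) (Ioc 0 T) :=
    CD.integrable_bilin_left b hfc hg'
  have I1i : IntervalIntegrable (fun t => b (f' t) (g t)) volume 0 T :=
    (intervalIntegrable_iff_integrableOn_Ioc_of_le hT).2 I1
  have I2i : IntervalIntegrable (fun t => b (f t) (g' t)) volume 0 T :=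
    (intervalIntegrable_iff_integrableOn_Ioc_of_le hT).2 I2
  have Ib1i : IntervalIntegrable (fun t => b (f' t) (g T)) volume 0 T :=
    (intervalIntegrable_iff_integrableOn_Ioc_of_le hT).2 ((b.flip (g T)).integrable_comp hf')
  have Ib2 : IntegrableOn (fun t => b (f 0) (g' t)) (Ioc 0 T) := (b (f 0)).integrable_comp hg'
  have Ib2i : IntervalIntegrable (fun t => b (f 0) (g' t)) volume 0 T :=
    (intervalIntegrable_iff_integrableOn_Ioc_of_le hT).2 Ib2
  have key1 : b (f T) (g T) - b (f 0) (g T) = ∫ t in (0:ℝ)..T, b (f' t) (g T) := by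
    have hsub : f T - f 0 = ∫ s in (0:ℝ)..T, f' s := by
      rw [hf T hTmem]; abel
    calc b (f T) (g T) - b (f 0) (g T)
        = (b.flip (g T)) (f T - f 0) := by simp [ContinuousLinearMap.flip_apply, map_sub]
      _ = (b.flip (g T)) (∫ s in (0:ℝ)..T, f' s) := by rw [hsub]
      _ = ∫ t in (0:ℝ)..T, b (f' t) (g T) := ((b.flip (g T)).intervalIntegral_comp_comm hf'i).symm
  have key2 : b (f 0) (g T) - b (f 0) (g 0) = ∫ t in (0:ℝ)..T, b (f 0) (g' t) := by
    have hsub : g T - g 0 = ∫ s in (0:ℝ)..T, g' s := by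
      rw [hg T hTmem]; abel
    calc b (f 0) (g T) - b (f 0) (g 0)
        = (b (f 0)) (g T - g 0) := by rw [map_sub]
      _ = (b (f 0)) (∫ s in (0:ℝ)..T, g' s) := by rw [hsub]
      _ = ∫ t in (0:ℝ)..T, b (f 0) (g' t) := ((b (f 0)).intervalIntegral_comp_comm hg'i).symm
  have key3 : (∫ t in (0:ℝ)..T, b (f' t) (g T)) =
      (∫ t in (0:ℝ)..T, b (f' t) (g t)) + ∫ t in (0:ℝ)..T, b (f' t) (g T - g t) := by
    have h : (∫ t in (0:ℝ)..T, b (f' t) (g T - g t)) =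
        ∫ t in (0:ℝ)..T, (b (f' t) (g T) - b (f' t) (g t)) :=
      integral_congr fun t _ => by rw [map_sub]
    rw [h, integral_sub Ib1i I1i]
    abel
  have key4 : (∫ t in (0:ℝ)..T, b (f' t) (g T - g t)) =
      (∫ t in (0:ℝ)..T, b (f t) (g' t)) - ∫ t in (0:ℝ)..T, b (f 0) (g' t) := by
    have step1 : (∫ t in (0:ℝ)..T, b (f' t) (g T - g t)) =
        ∫ t in Ioc (0:ℝ) T, (∫ σ in Ioc t T, b (f' t) (g' σ)) := by
      rw [integral_of_le hT]
      refine setIntegral_congr_fun measurableSet_Ioc fun t ht => ?_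
      have htIcc : t ∈ Icc (0:ℝ) T := Ioc_subset_Icc_self ht
      have hgTt : g T - g t = ∫ σ in t..T, g' σ := by
        rw [hg T hTmem, hg t htIcc]
        rw [add_sub_add_left_eq_sub]
        exact integral_interval_sub_left hg'i (hg'sub t htIcc)
      rw [hgTt, ← (b (f' t)).intervalIntegral_comp_comm (hg'sub2 t htIcc),
        integral_of_le htIcc.2]
    have step2 : (∫ t in Ioc (0:ℝ) T, (∫ σ in Ioc t T, b (f' t) (g' σ))) =
        ∫ σ in Ioc (0:ℝ) T, (∫ s in Ioc 0 σ, b (f' s) (g' σ)) :=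
      CD.triangle_swap b hf' hg'
    have step3 : (∫ σ in Ioc (0:ℝ) T, (∫ s in Ioc 0 σ, b (f' s) (g' σ))) =
        ∫ σ in Ioc (0:ℝ) T, (b (f σ) (g' σ) - b (f 0) (g' σ)) := by
      refine setIntegral_congr_fun measurableSet_Ioc fun σ hσ => ?_
      have hσIcc : σ ∈ Icc (0:ℝ) T := Ioc_subset_Icc_self hσ
      have hsub : f σ - f 0 = ∫ s in (0:ℝ)..σ, f' s := by rw [hf σ hσIcc]; abel
      calc (∫ s in Ioc (0:ℝ) σ, b (f' s) (g' σ))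
          = ∫ s in (0:ℝ)..σ, (b.flip (g' σ)) (f' s) := by rw [integral_of_le hσIcc.1]; rfl
        _ = (b.flip (g' σ)) (∫ s in (0:ℝ)..σ, f' s) :=
            (b.flip (g' σ)).intervalIntegral_comp_comm (hf'sub σ hσIcc)
        _ = b (f σ) (g' σ) - b (f 0) (g' σ) := by
            rw [← hsub]; simp [ContinuousLinearMap.flip_apply, map_sub]
    rw [step1, step2, step3, integral_sub I2 Ib2, ← integral_of_le hT, ← integral_of_le hT]
  calc b (f T) (g T)
      = b (f 0) (g 0) + ((b (f T) (g T) - b (f 0) (g T)) + (b (f 0) (g T) - b (f 0) (g 0))) := by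
        abel
    _ = b (f 0) (g 0) + (((∫ t in (0:ℝ)..T, b (f' t) (g t)) +
          ((∫ t in (0:ℝ)..T, b (f t) (g' t)) - ∫ t in (0:ℝ)..T, b (f 0) (g' t))) +
          ∫ t in (0:ℝ)..T, b (f 0) (g' t)) := by
        rw [key1, key2, key3, key4]
    _ = b (f 0) (g 0) + ((∫ t in (0:ℝ)..T, b (f' t) (g t)) +
          (∫ t in (0:ℝ)..T, b (f t) (g' t))) := by abel
    _ = b (f 0) (g 0) + ∫ t in (0:ℝ)..T, (b (f' t) (g t) + b (f t) (g' t)) := by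
        rw [integral_add I1i I2i]

end CDaux

section CDmain

set_option linter.unusedSectionVars false

open Set intervalIntegral

/-- Evaluation of an operator on a vector, as a real-bilinear continuous map. -/
def evalR (H : Type*) [NormedAddCommGroup H] [InnerProductSpace ℂ H] :
    (H →L[ℂ] H) →L[ℝ] H →L[ℝ] H :=
  LinearMap.mkContinuous₂
    (LinearMap.mk₂ ℝ (fun (N : H →L[ℂ] H) (x : H) => N x)
      (fun M N x => ContinuousLinearMap.add_apply M N x)
      (fun c M x => rfl)
      (fun M x y => map_add M x y)
      (fun c M x => M.map_smul_of_tower c x))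
    1 (fun M x => by simpa using M.le_opNorm x)

@[simp] lemma evalR_apply (M : H →L[ℂ] H) (x : H) : evalR H M x = M x := rfl

/-- The real part of the inner product, as a real-bilinear continuous map. -/
def reInner (H : Type*) [NormedAddCommGroup H] [InnerProductSpace ℂ H] :
    H →L[ℝ] H →L[ℝ] ℝ :=
  LinearMap.mkContinuous₂
    (LinearMap.mk₂ ℝ (fun (x y : H) => (⟪x, y⟫_ℂ).re)
      (fun p q y => show (⟪p + q, y⟫_ℂ).re = (⟪p, y⟫_ℂ).re + (⟪q, y⟫_ℂ).re by
        rw [inner_add_left, Complex.add_re])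
      (fun c p y => show (⟪c • p, y⟫_ℂ).re = c • (⟪p, y⟫_ℂ).re by
        rw [← Complex.coe_smul, inner_smul_left]
        simp)
      (fun p q y => show (⟪p, q + y⟫_ℂ).re = (⟪p, q⟫_ℂ).re + (⟪p, y⟫_ℂ).re by
        rw [inner_add_right, Complex.add_re])
      (fun c p y => show (⟪p, c • y⟫_ℂ).re = c • (⟪p, y⟫_ℂ).re by
        rw [← Complex.coe_smul, inner_smul_right]
        simp))
    1 (fun x y => by
      simp only [LinearMap.mk₂_apply, one_mul, Real.norm_eq_abs]
      calc |(⟪x, y⟫_ℂ).re| ≤ ‖⟪x, y⟫_ℂ‖ := Complex.abs_re_le_norm _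
        _ = ‖⟪x, y⟫_ℂ‖ := rfl
        _ ≤ ‖x‖ * ‖y‖ := norm_inner_le_norm x y)

@[simp] lemma reInner_apply (x y : H) : reInner H x y = (⟪x, y⟫_ℂ).re := rfl

lemma re_inner_self_eq (p : H) : (⟪p, p⟫_ℂ).re = ‖p‖ ^ 2 := by
  have := @norm_sq_eq_re_inner ℂ H _ _ _ p
  simpa [RCLike.re_to_complex] using this.symm

/-- Self-adjointness of the Riccati solution, via uniqueness of ODE solutions. -/
lemma riccati_selfadjoint (A : H →L[ℂ] H) (B : U →L[ℂ] H) (C : H →L[ℂ] Y)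
    (T : ℝ) (P : ℝ → (H →L[ℂ] H)) (hP0 : P 0 = 0)
    (hP' : ∀ t ∈ Set.Icc (0:ℝ) T, HasDerivAt P
      ((adjoint A) ∘L (P t) + (P t) ∘L A - (P t) ∘L B ∘L (adjoint B) ∘L (P t) +
        (adjoint C) ∘L C) t) :
    ∀ t ∈ Set.Icc (0:ℝ) T, adjoint (P t) = P t := by
  set A' := adjoint A with hA'
  set D : H →L[ℂ] H := B ∘L adjoint B with hD
  set C' : H →L[ℂ] H := adjoint C ∘L C with hC'
  set v : ℝ → (H →L[ℂ] H) → (H →L[ℂ] H) := fun _ X => A' * X + X * A - X * D * X + C' with hv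
  have hRv : ∀ t, (adjoint A) ∘L (P t) + (P t) ∘L A - (P t) ∘L B ∘L (adjoint B) ∘L (P t) +
      (adjoint C) ∘L C = v t (P t) := fun t => by
    ext xx
    simp [hv, hA', hD, hC', ContinuousLinearMap.mul_apply, ContinuousLinearMap.comp_apply]
  have hPc : ContinuousOn P (Icc 0 T) := fun t ht =>
    ((hP' t ht).continuousAt).continuousWithinAt
  obtain ⟨MP, hMP⟩ := isCompact_Icc.exists_bound_of_continuousOn hPc
  set M := max MP 0 with hM
  have hMnn : 0 ≤ M := le_max_right _ _
  set Kr : ℝ := ‖A'‖ + ‖A‖ + 2 * M * ‖D‖ with hKr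
  have hKrnn : 0 ≤ Kr := by positivity
  have hlip : ∀ t : ℝ, LipschitzOnWith Kr.toNNReal (v t) (Metric.closedBall 0 M) := by
    intro t
    refine LipschitzOnWith.of_dist_le_mul fun X hX Y hY => ?_
    rw [Metric.mem_closedBall, dist_zero_right] at hX hY
    rw [dist_eq_norm, dist_eq_norm]
    have hdiff : v t X - v t Y = A' * (X - Y) + (X - Y) * A -
        ((X - Y) * D * X + Y * D * (X - Y)) := by
      simp only [hv]
      noncomm_ring
    rw [hdiff, Real.coe_toNNReal _ hKrnn]
    calc ‖A' * (X - Y) + (X - Y) * A - ((X - Y) * D * X + Y * D * (X - Y))‖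
        ≤ ‖A' * (X - Y) + (X - Y) * A‖ + ‖(X - Y) * D * X + Y * D * (X - Y)‖ :=
          norm_sub_le _ _
      _ ≤ (‖A' * (X - Y)‖ + ‖(X - Y) * A‖) + (‖(X - Y) * D * X‖ + ‖Y * D * (X - Y)‖) :=
          add_le_add (norm_add_le _ _) (norm_add_le _ _)
      _ ≤ (‖A'‖ * ‖X - Y‖ + ‖X - Y‖ * ‖A‖) + ((‖X - Y‖ * ‖D‖) * ‖X‖ + (‖Y‖ * ‖D‖) * ‖X - Y‖) :=
          add_le_add (add_le_add (norm_mul_le _ _) (norm_mul_le _ _))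
            (add_le_add (le_trans (norm_mul_le _ _)
                (mul_le_mul_of_nonneg_right (norm_mul_le _ _) (norm_nonneg _)))
              (le_trans (norm_mul_le _ _)
                (mul_le_mul_of_nonneg_right (norm_mul_le _ _) (norm_nonneg _))))
      _ ≤ (‖A'‖ * ‖X - Y‖ + ‖X - Y‖ * ‖A‖) + ((‖X - Y‖ * ‖D‖) * M + (M * ‖D‖) * ‖X - Y‖) := by
          refine add_le_add le_rfl (add_le_add ?_ ?_)
          · exact mul_le_mul_of_nonneg_left hX (by positivity)
          · exact mul_le_mul_of_nonneg_right
              (mul_le_mul_of_nonneg_right hY (norm_nonneg _)) (norm_nonneg _)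
      _ = Kr * ‖X - Y‖ := by rw [hKr]; ring
  have hQ' : ∀ t ∈ Icc (0:ℝ) T, HasDerivAt (fun s => star (P s)) (v t (star (P t))) t := by
    intro t ht
    have hder := ((starL' ℝ :
        (H →L[ℂ] H) ≃L[ℝ] (H →L[ℂ] H)).toContinuousLinearMap.hasFDerivAt.comp_hasDerivAt
        t (hP' t ht))
    have hstarR : star ((adjoint A) ∘L (P t) + (P t) ∘L A -
        (P t) ∘L B ∘L (adjoint B) ∘L (P t) + (adjoint C) ∘L C) = v t (star (P t)) := by
      rw [hRv]
      simp only [hv, star_add, star_sub, star_mul]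
      have h1 : star A' = A := by rw [hA', star_eq_adjoint, adjoint_adjoint]
      have h2 : star A = A' := by rw [star_eq_adjoint, hA']
      have h3 : star D = D := by
        rw [star_eq_adjoint, hD, adjoint_comp, adjoint_adjoint]
      have h4 : star C' = C' := by
        rw [star_eq_adjoint, hC', adjoint_comp, adjoint_adjoint]
      rw [h1, h2, h3, h4]
      noncomm_ring
    rw [← hstarR]
    exact hder
  have hQc : ContinuousOn (fun s => star (P s)) (Icc 0 T) :=
    continuous_star.comp_continuousOn hPc
  have hmemP : ∀ t ∈ Ico (0:ℝ) T, P t ∈ Metric.closedBall (0 : H →L[ℂ] H) M := fun t ht => by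
    rw [Metric.mem_closedBall, dist_zero_right]
    exact (hMP t (Ico_subset_Icc_self ht)).trans (le_max_left _ _)
  have hmemQ : ∀ t ∈ Ico (0:ℝ) T, star (P t) ∈ Metric.closedBall (0 : H →L[ℂ] H) M :=
    fun t ht => by
    rw [Metric.mem_closedBall, dist_zero_right, norm_star]
    exact (hMP t (Ico_subset_Icc_self ht)).trans (le_max_left _ _)
  have huniq := ODE_solution_unique_of_mem_Icc_right (fun t _ => hlip t) hPc
    (fun t ht => by
      have h := hP' t (Ico_subset_Icc_self ht)
      rw [hRv t] at h
      exact h.hasDerivWithinAt)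
    hmemP hQc
    (fun t ht => (hQ' t (Ico_subset_Icc_self ht)).hasDerivWithinAt)
    hmemQ (by rw [hP0, star_zero])
  intro t ht
  rw [← star_eq_adjoint]
  exact (huniq ht).symm

lemma pointwise_identity (A : H →L[ℂ] H) (B : U →L[ℂ] H) (C : H →L[ℂ] Y)
    (z : H) (v : U) (w : H) (hw1 : adjoint A w = z) (hw2 : adjoint B w = v)
    (S : H →L[ℂ] H) (hS : adjoint S = S) (x : H) (u : U) :
    ‖C x‖ ^ 2 + ‖u‖ ^ 2 + 2 * (⟪z, x⟫_ℂ).re + 2 * (⟪v, u⟫_ℂ).re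
    = ‖u + adjoint B (S x)‖ ^ 2
      - ((⟪-((adjoint A ∘L S + S ∘L A - S ∘L B ∘L adjoint B ∘L S + adjoint C ∘L C) x)
            + S (A x + B u), x⟫_ℂ).re
         + (⟪S x, A x + B u⟫_ℂ).re)
      + 2 * (⟪w, A x + B u⟫_ℂ).re := by
  have hresym : ∀ (p q : H), (⟪p, q⟫_ℂ).re = (⟪q, p⟫_ℂ).re := fun p q => by
    rw [← inner_conj_symm, Complex.conj_re]
  have hSsym : ∀ (p q : H), (⟪S p, q⟫_ℂ).re = (⟪p, S q⟫_ℂ).re := fun p q => by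
    conv_lhs => rw [← hS]
    rw [adjoint_inner_left]
  have hBre : ∀ (a : U) (y : H), (⟪B a, y⟫_ℂ).re = (⟪a, adjoint B y⟫_ℂ).re := fun a y => by
    rw [adjoint_inner_right]
  have hnorm : ‖u + adjoint B (S x)‖ ^ 2
      = ‖u‖ ^ 2 + 2 * (⟪u, adjoint B (S x)⟫_ℂ).re + ‖adjoint B (S x)‖ ^ 2 := by
    have := @norm_add_sq ℂ U _ _ _ u (adjoint B (S x))
    simpa [RCLike.re_to_complex] using this
  have hA1 : (⟪adjoint A (S x), x⟫_ℂ).re = (⟪S x, A x⟫_ℂ).re := by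
    rw [adjoint_inner_left]
  have hA2 : (⟪S (A x), x⟫_ℂ).re = (⟪S x, A x⟫_ℂ).re := by
    rw [hSsym, hresym]
  have hB1 : (⟪S (B (adjoint B (S x))), x⟫_ℂ).re = ‖adjoint B (S x)‖ ^ 2 := by
    rw [hSsym, hBre, re_inner_self_eq]
  have hC1 : (⟪adjoint C (C x), x⟫_ℂ).re = ‖C x‖ ^ 2 := by
    rw [adjoint_inner_left, re_inner_self_eq]
  have hB2 : (⟪S (B u), x⟫_ℂ).re = (⟪u, adjoint B (S x)⟫_ℂ).re := by
    rw [hSsym, hBre]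
  have hterm2 : (⟪S x, A x + B u⟫_ℂ).re
      = (⟪S x, A x⟫_ℂ).re + (⟪u, adjoint B (S x)⟫_ℂ).re := by
    rw [inner_add_right, Complex.add_re, hresym (S x) (B u), hBre]
  have hterm3 : (⟪w, A x + B u⟫_ℂ).re = (⟪z, x⟫_ℂ).re + (⟪v, u⟫_ℂ).re := by
    rw [inner_add_right, Complex.add_re, ← adjoint_inner_left A, hw1,
      ← ContinuousLinearMap.adjoint_inner_left B, hw2]
  have e1 : (⟪-((adjoint A ∘L S + S ∘L A - S ∘L B ∘L adjoint B ∘L S + adjoint C ∘L C) x)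
            + S (A x + B u), x⟫_ℂ).re
      = -((⟪S x, A x⟫_ℂ).re + (⟪S x, A x⟫_ℂ).re - ‖adjoint B (S x)‖ ^ 2 + ‖C x‖ ^ 2)
        + ((⟪S x, A x⟫_ℂ).re + (⟪u, adjoint B (S x)⟫_ℂ).re) := by
    simp only [ContinuousLinearMap.add_apply, ContinuousLinearMap.sub_apply,
      ContinuousLinearMap.comp_apply, map_add, inner_add_left, inner_sub_left, inner_neg_left,
      Complex.add_re, Complex.sub_re, Complex.neg_re]
    simp only [hA1, hA2, hB1, hC1, hB2]
  rw [hnorm, e1, hterm2, hterm3]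
  ring

end CDmain

set_option maxHeartbeats 4000000 in
set_option synthInstance.maxHeartbeats 1000000 in
/-- the cost decomposition (completion of squares) along mild solutions,
using the differential Riccati solution `P` with `P(0) = 0` and the adjoint steady state
vector `w` with `A* w = z`, `B* w = v`. -/
theorem cost_decomposition
    (A : H →L[ℂ] H) (B : U →L[ℂ] H) (C : H →L[ℂ] Y) (z : H) (v : U)
    (T : ℝ) (hT : 0 < T)
    (P : ℝ → (H →L[ℂ] H)) (hP0 : P 0 = 0)
    (hP' : ∀ t ∈ Set.Icc (0:ℝ) T, HasDerivAt P
      ((adjoint A) ∘L (P t) + (P t) ∘L A - (P t) ∘L B ∘L (adjoint B) ∘L (P t) +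
        (adjoint C) ∘L C) t)
    (w : H) (hw1 : adjoint A w = z) (hw2 : adjoint B w = v)
    (u : ℝ → U) (hu : MemLp u 2 (volume.restrict (Set.Icc 0 T))) (x₀ : H) :
    (∫ t in (0:ℝ)..T,
        (‖C (mildSol A B u x₀ t)‖ ^ 2 + ‖u t‖ ^ 2 +
          2 * (⟪z, mildSol A B u x₀ t⟫_ℂ).re + 2 * (⟪v, u t⟫_ℂ).re)) =
      (∫ t in (0:ℝ)..T, ‖u t + adjoint B (P (T - t) (mildSol A B u x₀ t))‖ ^ 2) +
        (⟪P T x₀, x₀⟫_ℂ).re + 2 * (⟪w, mildSol A B u x₀ T⟫_ℂ).re -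
        2 * (⟪w, x₀⟫_ℂ).re := by
  classical
  have hT' : (0:ℝ) ≤ T := hT.le
  have hTIcc : T ∈ Set.Icc (0:ℝ) T := ⟨hT', le_rfl⟩
  haveI : IsFiniteMeasure (volume.restrict (Set.Icc (0:ℝ) T)) :=
    ⟨by rw [Measure.restrict_apply_univ]; exact measure_Icc_lt_top⟩
  have huI : IntegrableOn u (Set.Icc 0 T) := hu.integrable one_le_two
  have huIoc : IntegrableOn u (Set.Ioc 0 T) := huI.mono_set Set.Ioc_subset_Icc_self
  set x : ℝ → H := mildSol A B u x₀ with hxdef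
  set e : ℝ → H →L[ℂ] H := fun t => NormedSpace.exp (t • A) with hedef
  have he' : ∀ t : ℝ, HasDerivAt e (e t * A) t := fun t => by
    have h := hasDerivAt_exp_smul_const (𝕂 := ℝ) (𝔸 := H →L[ℂ] H) A t
    exact h
  have hec : Continuous e := by
    rw [continuous_iff_continuousAt]
    exact fun t => (he' t).continuousAt
  have he0 : e 0 = 1 := by
    simp [hedef, zero_smul, NormedSpace.exp_zero]
  have headd : ∀ a b : ℝ, e (a + b) = e a * e b := fun a b => by
    simp only [hedef]
    rw [add_smul]
    exact NormedSpace.exp_add_of_commute_of_mem_ball (𝕂 := ℂ)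
      (((Commute.refl A).smul_right b).smul_left a)
      ((NormedSpace.expSeries_radius_eq_top ℂ (H →L[ℂ] H)).symm ▸ edist_lt_top _ _)
      ((NormedSpace.expSeries_radius_eq_top ℂ (H →L[ℂ] H)).symm ▸ edist_lt_top _ _)
  have hees : ∀ s : ℝ, e s * e (-s) = 1 := fun s => by
    rw [← headd]
    simp [he0]
  have hcomm : ∀ s : ℝ, A * e s = e s * A := fun s =>
    (((Commute.refl A).smul_right s).exp_right)
  have hgBu : Integrable (fun s => B (u s)) (volume.restrict (Set.Ioc 0 T)) :=
    B.integrable_comp huIoc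
  set g : ℝ → H := fun s => e (-s) (B (u s)) with hgdef
  have henc : Continuous fun s : ℝ => e (-s) := hec.comp continuous_neg
  obtain ⟨Me, hMe⟩ := isCompact_Icc.exists_bound_of_continuousOn
    (henc.continuousOn : ContinuousOn (fun s : ℝ => e (-s)) (Set.Icc 0 T))
  have hgm : AEStronglyMeasurable g (volume.restrict (Set.Ioc 0 T)) :=
    (evalR H).continuous₂.comp_aestronglyMeasurable
      ((henc.aestronglyMeasurable).prodMk hgBu.aestronglyMeasurable)
  have hgInt : IntegrableOn g (Set.Ioc 0 T) := by
    refine (hgBu.norm.const_mul Me).mono' hgm ?_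
    filter_upwards [ae_restrict_mem measurableSet_Ioc] with s hs
    calc ‖g s‖ ≤ ‖e (-s)‖ * ‖B (u s)‖ := (e (-s)).le_opNorm _
      _ ≤ Me * ‖B (u s)‖ :=
        mul_le_mul_of_nonneg_right (hMe s (Set.Ioc_subset_Icc_self hs)) (norm_nonneg _)
  set y : ℝ → H := fun t => x₀ + ∫ s in (0:ℝ)..t, g s with hydef
  have hy0 : y 0 = x₀ := by simp [hydef]
  have hyrep : ∀ t ∈ Set.Icc (0:ℝ) T, y t = y 0 + ∫ s in (0:ℝ)..t, g s := fun t _ => by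
    rw [hy0]
  have hyc : ContinuousOn y (Set.Icc 0 T) := CD.contOn_of_rep hgInt hyrep
  have hxy : ∀ t ∈ Set.Icc (0:ℝ) T, x t = e t (y t) := by
    intro t ht
    have hgt : IntervalIntegrable g volume 0 t :=
      (intervalIntegrable_iff_integrableOn_Ioc_of_le ht.1).2
        (hgInt.mono_set (Set.Ioc_subset_Ioc le_rfl ht.2))
    have hint : ∀ s : ℝ, NormedSpace.exp ((t - s) • A) (B (u s)) = e t (g s) := fun s => by
      have h2 : e (t - s) = e t * e (-s) := by
        rw [show t - s = t + (-s) by ring, headd]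
      show e (t - s) (B (u s)) = e t (g s)
      rw [h2, ContinuousLinearMap.mul_apply]
    rw [hxdef, mildSol]
    simp only [hint]
    rw [(e t).intervalIntegral_comp_comm hgt]
    exact (map_add (e t) x₀ _).symm
  have hxc : ContinuousOn x (Set.Icc 0 T) :=
    (hec.continuousOn.clm_apply hyc).congr hxy
  have hx0 : x 0 = x₀ := by
    rw [hxdef, mildSol]
    simp [intervalIntegral.integral_same, zero_smul, NormedSpace.exp_zero]
  set h : ℝ → H := fun s => A (x s) + B (u s) with hhdef
  have hhIoc : IntegrableOn h (Set.Ioc 0 T) :=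
    (((A.continuous.comp_continuousOn hxc).integrableOn_compact isCompact_Icc).mono_set
      Set.Ioc_subset_Icc_self).add hgBu
  have hhi : IntervalIntegrable h volume 0 T :=
    (intervalIntegrable_iff_integrableOn_Ioc_of_le hT').2 hhIoc
  have heAc : Continuous fun s : ℝ => e s * A := hec.mul continuous_const
  have hx_rep : ∀ t ∈ Set.Icc (0:ℝ) T, x t = x₀ + ∫ s in (0:ℝ)..t, h s := by
    intro t ht
    have hIeA : IntegrableOn (fun s => e s * A) (Set.Ioc 0 t) :=
      (heAc.continuousOn.integrableOn_compact isCompact_Icc).mono_set Set.Ioc_subset_Icc_self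
    have hgt : IntegrableOn g (Set.Ioc 0 t) := hgInt.mono_set (Set.Ioc_subset_Ioc le_rfl ht.2)
    have herep : ∀ τ ∈ Set.Icc (0:ℝ) t, e τ = e 0 + ∫ s in (0:ℝ)..τ, e s * A := by
      intro τ _
      have hfteq := intervalIntegral.integral_eq_sub_of_hasDerivAt
        (f := e) (fun s _ => he' s) (heAc.intervalIntegrable 0 τ)
      rw [hfteq]
      abel
    have hyrept : ∀ τ ∈ Set.Icc (0:ℝ) t, y τ = y 0 + ∫ s in (0:ℝ)..τ, g s := fun τ _ => by
      rw [hy0]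
    have hkey := CD.bilin_rep (evalR H) ht.1 hIeA hgt herep hyrept
    have hcongr : Set.EqOn
        (fun s => evalR H (e s * A) (y s) + evalR H (e s) (g s)) h (Set.uIcc 0 t) := by
      intro s hs
      rw [Set.uIcc_of_le ht.1] at hs
      have hsT : s ∈ Set.Icc (0:ℝ) T := ⟨hs.1, hs.2.trans ht.2⟩
      have h2 : e s (g s) = B (u s) := by
        show e s (e (-s) (B (u s))) = B (u s)
        rw [← ContinuousLinearMap.mul_apply, hees s, ContinuousLinearMap.one_apply]
      simp only [evalR_apply]
      rw [← hcomm s, ContinuousLinearMap.mul_apply, ← hxy s hsT, h2]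
    rw [intervalIntegral.integral_congr hcongr] at hkey
    rw [hxy t ht]
    calc e t (y t) = evalR H (e t) (y t) := rfl
      _ = evalR H (e 0) (y 0) + ∫ s in (0:ℝ)..t, h s := hkey
      _ = x₀ + ∫ s in (0:ℝ)..t, h s := by rw [he0, hy0]; simp
  -- the Riccati solution side
  have hsa := riccati_selfadjoint A B C T P hP0 hP'
  set R : ℝ → H →L[ℂ] H := fun τ =>
    adjoint A ∘L P τ + P τ ∘L A - P τ ∘L B ∘L adjoint B ∘L P τ + adjoint C ∘L C with hRdef
  have hP'R : ∀ τ ∈ Set.Icc (0:ℝ) T, HasDerivAt P (R τ) τ := hP'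
  have hPc : ContinuousOn P (Set.Icc 0 T) := fun τ hτ =>
    (hP' τ hτ).continuousAt.continuousWithinAt
  have hRc : ContinuousOn R (Set.Icc 0 T) := by
    rw [hRdef]
    refine ContinuousOn.add (ContinuousOn.sub (ContinuousOn.add ?_ ?_) ?_) continuousOn_const
    · exact continuousOn_const.clm_comp hPc
    · exact hPc.clm_comp continuousOn_const
    · exact hPc.clm_comp (continuousOn_const.clm_comp (continuousOn_const.clm_comp hPc))
  have hTmt : ∀ t ∈ Set.Icc (0:ℝ) T, T - t ∈ Set.Icc (0:ℝ) T := fun t ht =>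
    ⟨by linarith [ht.2], by linarith [ht.1]⟩
  have hnegc : Continuous fun τ : ℝ => T - τ := continuous_const.sub continuous_id
  have hSc : ContinuousOn (fun t => P (T - t)) (Set.Icc 0 T) :=
    hPc.comp hnegc.continuousOn (fun t ht => hTmt t ht)
  have hRTc : ContinuousOn (fun s => -(R (T - s))) (Set.Icc 0 T) :=
    (hRc.comp hnegc.continuousOn (fun t ht => hTmt t ht)).neg
  have hS' : ∀ t ∈ Set.Icc (0:ℝ) T, HasDerivAt (fun τ => P (T - τ)) (-(R (T - t))) t := by
    intro t ht
    have h2 : HasDerivAt (fun τ : ℝ => T - τ) (-1) t := by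
      simpa using (hasDerivAt_id t).const_sub T
    have h3 := (hP'R (T - t) (hTmt t ht)).scomp t h2
    simpa [Function.comp_def] using h3
  have hSrep : ∀ t ∈ Set.Icc (0:ℝ) T,
      P (T - t) = P (T - 0) + ∫ s in (0:ℝ)..t, -(R (T - s)) := by
    intro t ht
    have hint : IntervalIntegrable (fun s => -(R (T - s))) volume 0 t := by
      apply ContinuousOn.intervalIntegrable
      rw [Set.uIcc_of_le ht.1]
      exact hRTc.mono (Set.Icc_subset_Icc le_rfl ht.2)
    have hfteq := intervalIntegral.integral_eq_sub_of_hasDerivAt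
      (f := fun τ => P (T - τ))
      (fun s hs => hS' s (by rw [Set.uIcc_of_le ht.1] at hs; exact ⟨hs.1, hs.2.trans ht.2⟩))
      hint
    rw [hfteq]
    abel
  have hSIoc : IntegrableOn (fun s => -(R (T - s))) (Set.Ioc 0 T) :=
    (hRTc.integrableOn_compact isCompact_Icc).mono_set Set.Ioc_subset_Icc_self
  set q' : ℝ → H := fun s => -(R (T - s) (x s)) + P (T - s) (h s) with hq'def
  have hq_rep : ∀ t ∈ Set.Icc (0:ℝ) T,
      P (T - t) (x t) = P (T - 0) (x 0) + ∫ s in (0:ℝ)..t, q' s := by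
    intro t ht
    have hkey := CD.bilin_rep (evalR H) (f := fun τ => P (T - τ)) (g := x)
      (f' := fun s => -(R (T - s))) (g' := h) ht.1
      (hSIoc.mono_set (Set.Ioc_subset_Ioc le_rfl ht.2))
      (hhIoc.mono_set (Set.Ioc_subset_Ioc le_rfl ht.2))
      (fun τ hτ => hSrep τ ⟨hτ.1, hτ.2.trans ht.2⟩)
      (fun τ hτ => by rw [hx_rep τ ⟨hτ.1, hτ.2.trans ht.2⟩, hx0])
    have hcongr : Set.EqOn
        (fun s => evalR H (-(R (T - s))) (x s) + evalR H (P (T - s)) (h s)) q'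
        (Set.uIcc 0 t) := fun s _ => by
      simp only [hq'def, evalR_apply, ContinuousLinearMap.neg_apply]
    rw [intervalIntegral.integral_congr hcongr] at hkey
    exact hkey
  have hqc : ContinuousOn (fun t => P (T - t) (x t)) (Set.Icc 0 T) := hSc.clm_apply hxc
  have hq'Ioc : IntegrableOn q' (Set.Ioc 0 T) := by
    have p1 : IntegrableOn (fun s => -(R (T - s) (x s))) (Set.Ioc 0 T) :=
      ((((hRc.comp hnegc.continuousOn (fun t ht => hTmt t ht)).clm_apply
        hxc).neg).integrableOn_compact isCompact_Icc).mono_set Set.Ioc_subset_Icc_self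
    have p2 : IntegrableOn (fun s => P (T - s) (h s)) (Set.Ioc 0 T) :=
      CD.integrable_bilin_left (evalR H) hSc hhIoc
    exact p1.add p2
  have hψ := CD.bilin_rep (reInner H) (f := fun t => P (T - t) (x t)) (g := x)
    (f' := q') (g' := h) hT' hq'Ioc hhIoc
    (fun t ht => hq_rep t ht)
    (fun t ht => by rw [hx_rep t ht, hx0])
  have hwrep : (⟪w, x T⟫_ℂ).re = (⟪w, x₀⟫_ℂ).re + ∫ t in (0:ℝ)..T, (⟪w, h t⟫_ℂ).re := by
    have h1 := hx_rep T hTIcc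
    have h2 : (reInner H w) (x T) = (reInner H w) x₀ + ∫ t in (0:ℝ)..T, (reInner H w) (h t) := by
      rw [h1, map_add, (reInner H w).intervalIntegral_comp_comm hhi]
    simpa using h2
  -- integrability of the three pieces
  have hsq : IntervalIntegrable
      (fun t => ‖u t + adjoint B (P (T - t) (x t))‖ ^ 2) volume 0 T := by
    have hBqc : ContinuousOn (fun t => adjoint B (P (T - t) (x t))) (Set.Icc 0 T) :=
      continuousOn_const.clm_apply hqc
    obtain ⟨Mq, hMq⟩ := isCompact_Icc.exists_bound_of_continuousOn hBqc
    have hBqm : MemLp (fun t => adjoint B (P (T - t) (x t))) 2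
        (volume.restrict (Set.Icc 0 T)) :=
      MemLp.of_bound (hBqc.aestronglyMeasurable measurableSet_Icc) Mq
        (by filter_upwards [ae_restrict_mem measurableSet_Icc] with t ht using hMq t ht)
    have hsum := hu.add hBqm
    have hint2 : Integrable (fun t => ‖u t + adjoint B (P (T - t) (x t))‖ ^ 2)
        (volume.restrict (Set.Icc 0 T)) :=
      (memLp_two_iff_integrable_sq_norm hsum.aestronglyMeasurable).1 hsum
    have hint3 : IntegrableOn (fun t => ‖u t + adjoint B (P (T - t) (x t))‖ ^ 2)
        (Set.Icc 0 T) := hint2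
    exact (intervalIntegrable_iff_integrableOn_Ioc_of_le hT').2
      (hint3.mono_set Set.Ioc_subset_Icc_self)
  have hmid : IntervalIntegrable
      (fun t => reInner H (q' t) (x t) + reInner H (P (T - t) (x t)) (h t)) volume 0 T :=
    (intervalIntegrable_iff_integrableOn_Ioc_of_le hT').2
      ((CD.integrable_bilin_right (reInner H) hq'Ioc hxc).add
        (CD.integrable_bilin_left (reInner H) hqc hhIoc))
  have hwint : IntervalIntegrable (fun t => (⟪w, h t⟫_ℂ).re) volume 0 T :=
    (intervalIntegrable_iff_integrableOn_Ioc_of_le hT').2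
      ((reInner H w).integrable_comp hhIoc)
  -- the pointwise completion of squares
  have hkeyfun : Set.EqOn
      (fun t => ‖C (x t)‖ ^ 2 + ‖u t‖ ^ 2 + 2 * (⟪z, x t⟫_ℂ).re + 2 * (⟪v, u t⟫_ℂ).re)
      (fun t => ‖u t + adjoint B (P (T - t) (x t))‖ ^ 2
        - (reInner H (q' t) (x t) + reInner H (P (T - t) (x t)) (h t))
        + 2 * (⟪w, h t⟫_ℂ).re) (Set.uIcc 0 T) := by
    intro t ht
    rw [Set.uIcc_of_le hT'] at ht
    have hid := pointwise_identity A B C z v w hw1 hw2 (P (T - t))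
      (hsa (T - t) (hTmt t ht)) (x t) (u t)
    simp only [reInner_apply, hq'def, hRdef, hhdef]
    exact hid
  -- evaluating the ψ identity
  have hL0 : reInner H (P (T - T) (x T)) (x T) = 0 := by
    rw [sub_self, hP0]
    simp
  have hR0 : reInner H (P (T - 0) (x 0)) (x 0) = (⟪P T x₀, x₀⟫_ℂ).re := by
    rw [sub_zero, hx0]
    simp
  rw [hL0, hR0] at hψ
  have hmid_val : (∫ t in (0:ℝ)..T,
      (reInner H (q' t) (x t) + reInner H (P (T - t) (x t)) (h t)))
      = -(⟪P T x₀, x₀⟫_ℂ).re := by linarith [hψ]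
  calc (∫ t in (0:ℝ)..T,
        (‖C (x t)‖ ^ 2 + ‖u t‖ ^ 2 + 2 * (⟪z, x t⟫_ℂ).re + 2 * (⟪v, u t⟫_ℂ).re))
      = ∫ t in (0:ℝ)..T, (‖u t + adjoint B (P (T - t) (x t))‖ ^ 2
          - (reInner H (q' t) (x t) + reInner H (P (T - t) (x t)) (h t))
          + 2 * (⟪w, h t⟫_ℂ).re) := intervalIntegral.integral_congr hkeyfun
    _ = (∫ t in (0:ℝ)..T, ‖u t + adjoint B (P (T - t) (x t))‖ ^ 2)
        - (∫ t in (0:ℝ)..T,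
            (reInner H (q' t) (x t) + reInner H (P (T - t) (x t)) (h t)))
        + 2 * ∫ t in (0:ℝ)..T, (⟪w, h t⟫_ℂ).re := by
        rw [intervalIntegral.integral_add (hsq.sub hmid) (hwint.const_mul 2),
          intervalIntegral.integral_sub hsq hmid, intervalIntegral.integral_const_mul]
    _ = (∫ t in (0:ℝ)..T, ‖u t + adjoint B (P (T - t) (x t))‖ ^ 2) +
        (⟪P T x₀, x₀⟫_ℂ).re + 2 * (⟪w, x T⟫_ℂ).re - 2 * (⟪w, x₀⟫_ℂ).re := by
        rw [hmid_val]
        have : (∫ t in (0:ℝ)..T, (⟪w, h t⟫_ℂ).re)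
            = (⟪w, x T⟫_ℂ).re - (⟪w, x₀⟫_ℂ).re := by linarith [hwrep]
        rw [this]
        ring
end
end

section
/- Let H, U, Y be complex Hilbert spaces, A : H → H, B : U → H, C : H → Y bounded linear operators, z ∈ H, v ∈ U, T > 0. Let P : [0,T] → L(H) be differentiable in operator norm with P(0) = 0 and P′(t) = A*P(t) + P(t)A − P(t)BB*P(t) + C*C, and let w ∈ H satisfy A*w = z, B*w = v. Let z_w : [0,T] → H be the solution of ż_w(t) = (A* − P(t)BB*) z_w(t), z_w(0) = w. Fix x₀ ∈ H, let x* : [0,T] → H solve ẋ*(t) = (A − BB*P(T−t)) x*(t) − BB* z_w(T−t), x*(0) = x₀, and define u*(t) := −B*P(T−t)x*(t) − B* z_w(T−t). Then x* is the mild solution of ẋ = Ax + Bu* with x(0) = x₀, and u* is optimal: J_T(u*) ≤ J_T(u) for every u ∈ L²([0,T],U), where J_T(u) = ∫₀^T (‖Cx(t)‖² + ‖u(t)‖² + 2Re⟨z,x(t)⟩ + 2Re⟨v,u(t)⟩) dt with x the mild solution for u with x(0) = x₀. -/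
open MeasureTheory ContinuousLinearMap
open scoped InnerProductSpace

set_option maxHeartbeats 1000000
set_option synthInstance.maxHeartbeats 200000

noncomputable section

variable {H U Y : Type*}
  [NormedAddCommGroup H] [InnerProductSpace ℂ H] [CompleteSpace H]
  [NormedAddCommGroup U] [InnerProductSpace ℂ U] [CompleteSpace U]
  [NormedAddCommGroup Y] [InnerProductSpace ℂ Y] [CompleteSpace Y]

local notation "E[" G "," t "]" => NormedSpace.exp (t • G)

lemma hasDerivAt_clm_apply' {F G' : Type*} [NormedAddCommGroup F] [NormedSpace ℂ F]
    [NormedAddCommGroup G'] [NormedSpace ℂ G']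
    {c : ℝ → (F →L[ℂ] G')} {u : ℝ → F} {c' : F →L[ℂ] G'} {u' : F} {t : ℝ}
    (hc : HasDerivAt c c' t) (hu : HasDerivAt u u' t) :
    HasDerivAt (fun r => c r (u r)) (c' (u t) + c t u') t := by
  have hc2 : HasDerivAt (fun r => (c r).restrictScalars ℝ) (c'.restrictScalars ℝ) t :=
    ((ContinuousLinearMap.restrictScalarsL ℂ F G' ℝ ℝ).hasFDerivAt).comp_hasDerivAt t hc
  exact hc2.clm_apply hu

lemma continuousAt_clm_apply' {F G' : Type*} [NormedAddCommGroup F] [NormedSpace ℂ F]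
    [NormedAddCommGroup G'] [NormedSpace ℂ G']
    {c : ℝ → (F →L[ℂ] G')} {u : ℝ → F} {t : ℝ}
    (hc : ContinuousAt c t) (hu : ContinuousAt u t) :
    ContinuousAt (fun r => c r (u r)) t := by
  have hb : Continuous fun p : (F →L[ℂ] G') × F => p.1 p.2 :=
    (isBoundedBilinearMap_apply (𝕜 := ℂ)).continuous
  exact (hb.continuousAt).comp (hc.prodMk hu)

lemma expDeriv (G : H →L[ℂ] H) (t : ℝ) :
    HasDerivAt (fun t : ℝ => NormedSpace.exp (t • G)) (NormedSpace.exp (t • G) * G) t := by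
  exact hasDerivAt_exp_smul_const G t

lemma expCont (G : H →L[ℂ] H) : Continuous (fun t : ℝ => NormedSpace.exp (t • G)) :=
  continuous_iff_continuousAt.2 fun t => (expDeriv G t).continuousAt

lemma expMul (G : H →L[ℂ] H) (a b : ℝ) :
    NormedSpace.exp (a • G) * NormedSpace.exp (b • G) = NormedSpace.exp ((a + b) • G) := by
  rw [add_smul]
  exact (NormedSpace.exp_add_of_commute_of_mem_ball (𝕂 := ℂ) (((Commute.refl G).smul_left a).smul_right b)
    (by simp [NormedSpace.expSeries_radius_eq_top]) (by simp [NormedSpace.expSeries_radius_eq_top])).symm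

lemma expApp (G : H →L[ℂ] H) (a b : ℝ) (x : H) :
    NormedSpace.exp (a • G) (NormedSpace.exp (b • G) x)
      = NormedSpace.exp ((a + b) • G) x := by
  rw [← expMul]; rfl

lemma expCancel (G : H →L[ℂ] H) (t : ℝ) (x : H) :
    NormedSpace.exp (t • G) (NormedSpace.exp (t • -G) x) = x := by
  have : t • -G = (-t) • G := by rw [smul_neg, neg_smul]
  rw [this, expApp, add_neg_cancel, zero_smul, NormedSpace.exp_zero, one_apply_eq_self]

lemma mild_forward (G : H →L[ℂ] H) {f y : ℝ → H} {T : ℝ}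
    (hf : ∀ t ∈ Set.Icc (0:ℝ) T, ContinuousAt f t)
    (hy : ∀ t ∈ Set.Icc (0:ℝ) T, HasDerivAt y (G (y t) + f t) t) :
    ∀ t ∈ Set.Icc (0:ℝ) T,
      y t = NormedSpace.exp (t • G) (y 0) +
        ∫ s in (0:ℝ)..t, NormedSpace.exp ((t - s) • G) (f s) := by
  intro t ht
  have hIcc : Set.Icc (0:ℝ) t ⊆ Set.Icc 0 T := Set.Icc_subset_Icc le_rfl ht.2
  have key : ∀ s ∈ Set.Icc (0:ℝ) t, HasDerivAt (fun r => NormedSpace.exp (r • -G) (y r))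
      (NormedSpace.exp (s • -G) (f s)) s := by
    intro s hs
    have h1 := hasDerivAt_clm_apply' (expDeriv (-G) s) (hy s (hIcc hs))
    convert h1 using 1
    simp only [mul_apply_eq_comp, neg_apply, map_add, map_neg]
    abel
  have hcont : ContinuousOn (fun s => NormedSpace.exp (s • -G) (f s)) (Set.Icc 0 t) := by
    intro s hs
    exact (continuousAt_clm_apply' ((expCont (-G)).continuousAt) (hf s (hIcc hs))).continuousWithinAt
  have hint : IntervalIntegrable (fun s => NormedSpace.exp (s • -G) (f s)) volume 0 t := by
    apply ContinuousOn.intervalIntegrable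
    rwa [Set.uIcc_of_le ht.1]
  have FTC := intervalIntegral.integral_eq_sub_of_hasDerivAt
    (f := fun r => NormedSpace.exp (r • -G) (y r)) (fun s hs => key s (by rwa [Set.uIcc_of_le ht.1] at hs)) hint
  have h0 : NormedSpace.exp ((0:ℝ) • -G) (y 0) = y 0 := by
    rw [zero_smul, NormedSpace.exp_zero, one_apply_eq_self]
  rw [h0] at FTC
  have step : NormedSpace.exp (t • -G) (y t)
      = y 0 + ∫ s in (0:ℝ)..t, NormedSpace.exp (s • -G) (f s) := by
    rw [FTC]; abel
  have := congrArg (fun x => NormedSpace.exp (t • G) x) step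
  rw [expCancel] at this
  rw [this, map_add, ← ContinuousLinearMap.intervalIntegral_comp_comm _ hint]
  congr 1
  apply intervalIntegral.integral_congr
  intro s _
  show NormedSpace.exp (t • G) (NormedSpace.exp (s • -G) (f s)) = _
  rw [show s • -G = (-s) • G by rw [smul_neg, neg_smul], expApp, ← sub_eq_add_neg]

lemma mild_backward (G : H →L[ℂ] H) {g p : ℝ → H} {T : ℝ}
    (hg : ∀ t ∈ Set.Icc (0:ℝ) T, ContinuousAt g t)
    (hp : ∀ t ∈ Set.Icc (0:ℝ) T, HasDerivAt p (-(G (p t)) - g t) t)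
    (hpT : p T = 0) :
    ∀ s ∈ Set.Icc (0:ℝ) T,
      p s = ∫ t in s..T, NormedSpace.exp ((t - s) • G) (g t) := by
  intro s hs
  have hIcc : Set.Icc s T ⊆ Set.Icc 0 T := Set.Icc_subset_Icc hs.1 le_rfl
  have key : ∀ r ∈ Set.Icc s T, HasDerivAt (fun r => NormedSpace.exp (r • G) (p r))
      (-(NormedSpace.exp (r • G) (g r))) r := by
    intro r hr
    have h1 := hasDerivAt_clm_apply' (expDeriv G r) (hp r (hIcc hr))
    convert h1 using 1
    simp only [mul_apply_eq_comp, map_sub, map_neg]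
    abel
  have hcont : ContinuousOn (fun r => NormedSpace.exp (r • G) (g r)) (Set.Icc s T) :=
    fun r hr => (continuousAt_clm_apply' ((expCont G).continuousAt) (hg r (hIcc hr))).continuousWithinAt
  have hint : IntervalIntegrable (fun r => NormedSpace.exp (r • G) (g r)) volume s T := by
    apply ContinuousOn.intervalIntegrable
    rwa [Set.uIcc_of_le hs.2]
  have FTC := intervalIntegral.integral_eq_sub_of_hasDerivAt
    (f := fun r => NormedSpace.exp (r • G) (p r))
    (fun r hr => key r (by rwa [Set.uIcc_of_le hs.2] at hr)) hint.neg
  simp only [hpT, map_zero, intervalIntegral.integral_neg] at FTC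
  have step : NormedSpace.exp (s • G) (p s)
      = ∫ r in s..T, NormedSpace.exp (r • G) (g r) := by
    have := neg_eq_iff_eq_neg.1 FTC
    rw [this]; abel
  have hcancel := expCancel (-G) s (p s)
  rw [neg_neg] at hcancel
  have := congrArg (fun x => NormedSpace.exp (s • -G) x) step
  rw [hcancel] at this
  rw [this, ← ContinuousLinearMap.intervalIntegral_comp_comm _ hint]
  apply intervalIntegral.integral_congr
  intro r _
  show NormedSpace.exp (s • -G) (NormedSpace.exp (r • G) (g r)) = _
  rw [show s • -G = (-s) • G by rw [smul_neg, neg_smul], expApp, neg_add_eq_sub]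

section helpers

variable {F G' : Type*} [NormedAddCommGroup F] [NormedSpace ℂ F]
  [NormedAddCommGroup G'] [NormedSpace ℂ G']

lemma integrableOn_clm_apply {φ : ℝ → (F →L[ℂ] G')} {h : ℝ → F} {a b : ℝ}
    (hφ : ContinuousOn φ (Set.Icc a b)) (hh : IntegrableOn h (Set.Icc a b)) :
    IntegrableOn (fun s => φ s (h s)) (Set.Icc a b) := by
  obtain ⟨M, hM⟩ := IsCompact.exists_bound_of_continuousOn isCompact_Icc hφ
  have hmeas : AEStronglyMeasurable (fun s => φ s (h s)) (volume.restrict (Set.Icc a b)) := by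
    have hb : Continuous fun p : (F →L[ℂ] G') × F => p.1 p.2 :=
      (isBoundedBilinearMap_apply (𝕜 := ℂ)).continuous
    exact hb.comp_aestronglyMeasurable
      (((hφ.aestronglyMeasurable measurableSet_Icc)).prodMk hh.aestronglyMeasurable)
  refine Integrable.mono' (hh.norm.const_mul M) hmeas ?_
  filter_upwards [ae_restrict_mem measurableSet_Icc] with s hs
  calc ‖φ s (h s)‖ ≤ ‖φ s‖ * ‖h s‖ := ContinuousLinearMap.le_opNorm _ _
    _ ≤ M * ‖h s‖ := by
        have := hM s hs
        exact mul_le_mul_of_nonneg_right this (norm_nonneg _)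

end helpers

lemma intervalIntegrable_of_integrableOn_Icc {F : Type*} [NormedAddCommGroup F]
    {h : ℝ → F} {a b : ℝ} (hab : a ≤ b)
    (hh : IntegrableOn h (Set.Icc a b)) : IntervalIntegrable h volume a b := by
  rw [intervalIntegrable_iff_integrableOn_Ioc_of_le hab]
  exact hh.mono_set Set.Ioc_subset_Icc_self

lemma intervalIntegrable_kernel (A : H →L[ℂ] H) {h : ℝ → H} {T t : ℝ}
    (hh : IntegrableOn h (Set.Icc 0 T)) (ht : t ∈ Set.Icc (0:ℝ) T) (c : ℝ) :
    IntervalIntegrable (fun s => NormedSpace.exp ((c - s) • A) (h s)) volume 0 t := by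
  apply intervalIntegrable_of_integrableOn_Icc ht.1
  apply integrableOn_clm_apply
  · exact (Continuous.comp (expCont A) (by fun_prop)).continuousOn
  · exact hh.mono_set (Set.Icc_subset_Icc le_rfl ht.2)

lemma intervalIntegrable_kernel' (A : H →L[ℂ] H) {h : ℝ → H} {T t : ℝ}
    (hh : IntegrableOn h (Set.Icc 0 T)) (ht : t ∈ Set.Icc (0:ℝ) T) :
    IntervalIntegrable (fun s => NormedSpace.exp (s • -A) (h s)) volume 0 t := by
  apply intervalIntegrable_of_integrableOn_Icc ht.1
  apply integrableOn_clm_apply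
  · exact (Continuous.comp (expCont (-A)) (by fun_prop)).continuousOn
  · exact hh.mono_set (Set.Icc_subset_Icc le_rfl ht.2)

lemma kernel_factor (A : H →L[ℂ] H) {h : ℝ → H} {t : ℝ}
    (hint : IntervalIntegrable (fun s => NormedSpace.exp (s • -A) (h s)) volume 0 t) :
    ∫ s in (0:ℝ)..t, NormedSpace.exp ((t - s) • A) (h s)
      = NormedSpace.exp (t • A) (∫ s in (0:ℝ)..t, NormedSpace.exp (s • -A) (h s)) := by
  rw [← ContinuousLinearMap.intervalIntegral_comp_comm _ hint]
  apply intervalIntegral.integral_congr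
  intro s _
  show _ = NormedSpace.exp (t • A) (NormedSpace.exp (s • -A) (h s))
  rw [show s • -A = (-s) • A by rw [smul_neg, neg_smul], expApp, ← sub_eq_add_neg]

lemma continuousOn_kernelIntegral (A : H →L[ℂ] H) {h : ℝ → H} {T : ℝ} (hT : 0 ≤ T)
    (hh : IntegrableOn h (Set.Icc 0 T)) :
    ContinuousOn (fun t => ∫ s in (0:ℝ)..t, NormedSpace.exp ((t - s) • A) (h s))
      (Set.Icc 0 T) := by
  have hI : IntegrableOn (fun s => NormedSpace.exp (s • -A) (h s)) (Set.Icc 0 T) := by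
    apply integrableOn_clm_apply
    · exact (Continuous.comp (expCont (-A)) (by fun_prop)).continuousOn
    · exact hh
  have hK : ContinuousOn (fun t => ∫ s in (0:ℝ)..t, NormedSpace.exp (s • -A) (h s))
      (Set.Icc 0 T) := by
    have := intervalIntegral.continuousOn_primitive_interval
      (a := (0:ℝ)) (b := T) (μ := volume) (f := fun s => NormedSpace.exp (s • -A) (h s))
      (by rwa [Set.uIcc_of_le hT])
    rwa [Set.uIcc_of_le hT] at this
  have heq : Set.EqOn (fun t => ∫ s in (0:ℝ)..t, NormedSpace.exp ((t - s) • A) (h s))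
      (fun t => NormedSpace.exp (t • A)
        (∫ s in (0:ℝ)..t, NormedSpace.exp (s • -A) (h s))) (Set.Icc 0 T) := by
    intro t ht
    exact kernel_factor A (intervalIntegrable_kernel' A hh ht)
  exact (((expCont A).continuousOn).clm_apply hK).congr heq

lemma inner_re_symm'' {E : Type*} [NormedAddCommGroup E] [InnerProductSpace ℂ E] (x y : E) :
    (⟪x, y⟫_ℂ).re = (⟪y, x⟫_ℂ).re := by
  rw [← inner_conj_symm x y, Complex.conj_re]

lemma expAdj (G : H →L[ℂ] H) (r : ℝ) :
    adjoint (NormedSpace.exp (r • G)) = NormedSpace.exp (r • adjoint G) := by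
  rw [← ContinuousLinearMap.star_eq_adjoint, NormedSpace.star_exp, star_smul, star_trivial,
    ContinuousLinearMap.star_eq_adjoint]

lemma triangle_swap (A : H →L[ℂ] H) (B : U →L[ℂ] H) {T : ℝ} (hT : 0 ≤ T)
    {g : ℝ → H} (hg : ContinuousOn g (Set.Icc 0 T))
    {d : ℝ → U} (hd : Integrable d (volume.restrict (Set.Icc 0 T))) :
    ∫ t in (0:ℝ)..T, (⟪g t, ∫ s in (0:ℝ)..t, NormedSpace.exp ((t - s) • A) (B (d s))⟫_ℂ).re
    = ∫ s in (0:ℝ)..T,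
        (⟪∫ t in s..T, NormedSpace.exp ((t - s) • adjoint A) (g t), B (d s)⟫_ℂ).re := by
  set κ : ℝ → ℝ → H := fun t s => NormedSpace.exp ((t - s) • A) (B (d s)) with hκ
  set ψ : ℝ → ℝ → ℝ := fun t s => (⟪g t, κ t s⟫_ℂ).re with hψ
  set μ := volume.restrict (Set.Ioc (0:ℝ) T) with hμ
  haveI : IsFiniteMeasure μ := by
    constructor
    rw [hμ, Measure.restrict_apply_univ]
    exact measure_Ioc_lt_top
  have hBd : Integrable (fun s => B (d s)) (volume.restrict (Set.Icc 0 T)) :=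
    ContinuousLinearMap.integrable_comp B hd
  have hdμ : Integrable d μ :=
    hd.mono_measure (Measure.restrict_mono Set.Ioc_subset_Icc_self le_rfl)
  have hgμ : AEStronglyMeasurable g μ :=
    (hg.mono Set.Ioc_subset_Icc_self).aestronglyMeasurable (μ := volume) measurableSet_Ioc
  -- bounds
  obtain ⟨M₁, hM₁⟩ := IsCompact.exists_bound_of_continuousOn isCompact_Icc hg
  have hexpc : Continuous (fun r : ℝ => NormedSpace.exp (r • A)) := expCont A
  obtain ⟨M₂, hM₂⟩ := IsCompact.exists_bound_of_continuousOn (isCompact_Icc (a := -T) (b := T))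
    hexpc.continuousOn
  set M₀ : ℝ := M₁ * M₂ * ‖B‖ with hM₀
  have hψ_bound : ∀ t ∈ Set.Ioc (0:ℝ) T, ∀ s ∈ Set.Ioc (0:ℝ) T, |ψ t s| ≤ M₀ * ‖d s‖ := by
    intro t ht s hs
    have h1 : |ψ t s| ≤ ‖g t‖ * ‖κ t s‖ := by
      calc |ψ t s| ≤ ‖(⟪g t, κ t s⟫_ℂ)‖ := by
            exact Complex.abs_re_le_norm _
        _ ≤ ‖g t‖ * ‖κ t s‖ := norm_inner_le_norm _ _
    have h2 : ‖κ t s‖ ≤ M₂ * (‖B‖ * ‖d s‖) := by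
      calc ‖κ t s‖ ≤ ‖NormedSpace.exp ((t - s) • A)‖ * ‖B (d s)‖ :=
            ContinuousLinearMap.le_opNorm _ _
        _ ≤ M₂ * (‖B‖ * ‖d s‖) := by
            apply mul_le_mul
            · exact hM₂ (t - s) (by constructor <;> [linarith [ht.1, ht.2, hs.1, hs.2];
                linarith [ht.1, ht.2, hs.1, hs.2]])
            · exact ContinuousLinearMap.le_opNorm _ _
            · exact norm_nonneg _
            · exact (norm_nonneg _).trans (hM₂ 0 (by constructor <;> linarith))
    have hg1 : ‖g t‖ ≤ M₁ := hM₁ t (Set.Ioc_subset_Icc_self ht)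
    have hM₁0 : 0 ≤ M₁ := (norm_nonneg _).trans hg1
    calc |ψ t s| ≤ ‖g t‖ * ‖κ t s‖ := h1
      _ ≤ M₁ * (M₂ * (‖B‖ * ‖d s‖)) := by
          apply mul_le_mul hg1 h2 (norm_nonneg _) hM₁0
      _ = M₀ * ‖d s‖ := by rw [hM₀]; ring
  have hM₀nn : 0 ≤ M₀ := by
    have h2 : (0:ℝ) ≤ M₂ := (norm_nonneg _).trans (hM₂ 0 (by constructor <;> linarith))
    have h1 : (0:ℝ) ≤ M₁ := (norm_nonneg _).trans (hM₁ 0 ⟨le_rfl, hT⟩)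
    rw [hM₀]; positivity
  set Φ : ℝ × ℝ → ℝ := fun q => if q.2 ≤ q.1 then ψ q.1 q.2 else 0 with hΦ
  have hΦm : AEStronglyMeasurable Φ (μ.prod μ) := by
    have hb : Continuous fun p : (H →L[ℂ] H) × H => p.1 p.2 :=
      (isBoundedBilinearMap_apply (𝕜 := ℂ)).continuous
    have h1 : AEStronglyMeasurable (fun q : ℝ × ℝ => NormedSpace.exp ((q.1 - q.2) • A))
        (μ.prod μ) :=
      (hexpc.comp (continuous_fst.sub continuous_snd)).aestronglyMeasurable
    have h2 : AEStronglyMeasurable (fun q : ℝ × ℝ => B (d q.2)) (μ.prod μ) :=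
      (B.continuous.comp_aestronglyMeasurable hdμ.1).comp_snd
    have hκm : AEStronglyMeasurable (fun q : ℝ × ℝ => κ q.1 q.2) (μ.prod μ) :=
      hb.comp_aestronglyMeasurable (h1.prodMk h2)
    have hψm : AEStronglyMeasurable (fun q : ℝ × ℝ => ψ q.1 q.2) (μ.prod μ) := by
      have hcre : Continuous fun p : H × H => (⟪p.1, p.2⟫_ℂ).re :=
        Complex.continuous_re.comp continuous_inner
      exact hcre.comp_aestronglyMeasurable (hgμ.comp_fst.prodMk hκm)
    have hΦeq : Φ = Set.indicator {q : ℝ × ℝ | q.2 ≤ q.1} (fun q => ψ q.1 q.2) := by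
      funext q
      simp [hΦ, Set.indicator_apply, Set.mem_setOf_eq]
    rw [hΦeq]
    exact hψm.indicator (measurableSet_le measurable_snd measurable_fst)
  have hslice : ∀ t ∈ Set.Ioc (0:ℝ) T, ∀ᵐ s ∂μ, ‖Φ (t, s)‖ ≤ M₀ * ‖d s‖ := by
    intro t ht
    filter_upwards [ae_restrict_mem measurableSet_Ioc] with s hs
    by_cases h : s ≤ t
    · have := hψ_bound t ht s hs
      simpa [hΦ, h, Real.norm_eq_abs] using this
    · simp only [hΦ, if_neg h, norm_zero]
      positivity
  have hΦint : Integrable Φ (μ.prod μ) := by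
    refine (integrable_prod_iff hΦm).2 ⟨?_, ?_⟩
    · filter_upwards [hΦm.prodMk_left, ae_restrict_mem measurableSet_Ioc] with t hmeas ht
      exact Integrable.mono' (hdμ.norm.const_mul M₀) hmeas (hslice t ht)
    · refine Integrable.mono' (integrable_const (M₀ * ∫ s, ‖d s‖ ∂μ))
        hΦm.norm.integral_prod_right' ?_
      filter_upwards [ae_restrict_mem measurableSet_Ioc] with t ht
      have hb := hslice t ht
      have h0 : 0 ≤ ∫ s, ‖Φ (t, s)‖ ∂μ := integral_nonneg fun s => norm_nonneg _
      rw [Real.norm_eq_abs, abs_of_nonneg h0]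
      calc ∫ s, ‖Φ (t, s)‖ ∂μ ≤ ∫ s, M₀ * ‖d s‖ ∂μ := by
            refine integral_mono_of_nonneg ?_ (hdμ.norm.const_mul M₀) hb
            exact Filter.Eventually.of_forall fun s => norm_nonneg _
        _ = M₀ * ∫ s, ‖d s‖ ∂μ := integral_const_mul _ _
  have hswap := MeasureTheory.integral_integral_swap (f := fun t s => Φ (t, s))
    (μ := μ) (ν := μ) hΦint
  have hLHS : (∫ t in (0:ℝ)..T, (⟪g t, ∫ s in (0:ℝ)..t, κ t s⟫_ℂ).re)
      = ∫ t, (∫ s, Φ (t, s) ∂μ) ∂μ := by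
    rw [hμ, intervalIntegral.integral_of_le hT]
    apply setIntegral_congr_fun measurableSet_Ioc
    intro t ht
    simp only
    have ht' : t ∈ Set.Icc (0:ℝ) T := Set.Ioc_subset_Icc_self ht
    have hIcct : IntegrableOn (fun s => κ t s) (Set.Icc 0 t) volume := by
      apply integrableOn_clm_apply
      · exact (hexpc.comp (by fun_prop)).continuousOn
      · exact hBd.mono_measure (Measure.restrict_mono (Set.Icc_subset_Icc le_rfl ht'.2) le_rfl)
    have hIoct : IntegrableOn (fun s => κ t s) (Set.Ioc 0 t) volume :=
      hIcct.mono_set Set.Ioc_subset_Icc_self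
    have hinner_int : Integrable (fun s => (⟪g t, κ t s⟫_ℂ))
        (volume.restrict (Set.Ioc 0 t)) :=
      ContinuousLinearMap.integrable_comp (innerSL ℂ (g t)) hIoct
    rw [intervalIntegral.integral_of_le ht'.1, ← integral_inner hIoct (g t)]
    have hre : (∫ s in Set.Ioc (0:ℝ) t, (⟪g t, κ t s⟫_ℂ)).re
        = ∫ s in Set.Ioc (0:ℝ) t, (⟪g t, κ t s⟫_ℂ).re := by
      have := integral_re (𝕜 := ℂ) (μ := volume.restrict (Set.Ioc 0 t)) hinner_int
      simpa using this.symm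
    rw [hre]
    have hset : Set.Ioc (0:ℝ) T ∩ Set.Iic t = Set.Ioc 0 t := by
      ext s
      simp only [Set.mem_inter_iff, Set.mem_Iic, Set.mem_Ioc]
      constructor
      · rintro ⟨⟨h2, h3⟩, h1⟩; exact ⟨h2, h1⟩
      · rintro ⟨h1, h2⟩; exact ⟨⟨h1, h2.trans ht'.2⟩, h2⟩
    have : ∫ s, Φ (t, s) ∂μ
        = ∫ s in Set.Ioc (0:ℝ) T, Set.indicator (Set.Iic t) (fun s => ψ t s) s := by
      rw [hμ]
      apply setIntegral_congr_fun measurableSet_Ioc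
      intro s _
      simp [hΦ, Set.indicator_apply, Set.mem_Iic]
    rw [this, setIntegral_indicator measurableSet_Iic, hset]
  have hRHS : (∫ s in (0:ℝ)..T,
        (⟪∫ t in s..T, NormedSpace.exp ((t - s) • adjoint A) (g t), B (d s)⟫_ℂ).re)
      = ∫ s, (∫ t, Φ (t, s) ∂μ) ∂μ := by
    rw [hμ, intervalIntegral.integral_of_le hT]
    apply setIntegral_congr_fun measurableSet_Ioc
    intro s hs
    simp only
    have hs' : s ∈ Set.Icc (0:ℝ) T := Set.Ioc_subset_Icc_self hs
    set q : ℝ → H := fun t => NormedSpace.exp ((t - s) • adjoint A) (g t) with hq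
    have hqIcc : IntegrableOn q (Set.Icc s T) volume := by
      apply integrableOn_clm_apply
      · exact ((expCont (adjoint A)).comp (by fun_prop)).continuousOn
      · exact (hg.mono (Set.Icc_subset_Icc hs'.1 le_rfl)).integrableOn_Icc
    have hqIoc : IntegrableOn q (Set.Ioc s T) volume := hqIcc.mono_set Set.Ioc_subset_Icc_self
    have hψq : ∀ t, ψ t s = (⟪B (d s), q t⟫_ℂ).re := by
      intro t
      rw [hψ, hq]
      simp only
      rw [← ContinuousLinearMap.adjoint_inner_left (NormedSpace.exp ((t - s) • A)) (B (d s)) (g t)]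
      rw [expAdj]
      exact inner_re_symm'' _ _
    have hset : Set.Ioc (0:ℝ) T ∩ Set.Ici s = Set.Icc s T := by
      ext t
      simp only [Set.mem_inter_iff, Set.mem_Ici, Set.mem_Ioc, Set.mem_Icc]
      constructor
      · rintro ⟨⟨_, h3⟩, h1⟩; exact ⟨h1, h3⟩
      · rintro ⟨h1, h2⟩; exact ⟨⟨hs.1.trans_le h1, h2⟩, h1⟩
    have hstep1 : ∫ t, Φ (t, s) ∂μ = ∫ t in Set.Ioc s T, ψ t s := by
      rw [hμ]
      have : ∫ t in Set.Ioc (0:ℝ) T, Φ (t, s)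
          = ∫ t in Set.Ioc (0:ℝ) T, Set.indicator (Set.Ici s) (fun t => ψ t s) t := by
        apply setIntegral_congr_fun measurableSet_Ioc
        intro t _
        simp [hΦ, Set.indicator_apply, Set.mem_Ici]
      rw [this, setIntegral_indicator measurableSet_Ici, hset, integral_Icc_eq_integral_Ioc]
    have hinner_int : Integrable (fun t => (⟪B (d s), q t⟫_ℂ))
        (volume.restrict (Set.Ioc s T)) :=
      ContinuousLinearMap.integrable_comp (innerSL ℂ (B (d s))) hqIoc
    have hstep2 : ∫ t in Set.Ioc s T, ψ t s
        = (⟪∫ t in Set.Ioc s T, q t, B (d s)⟫_ℂ).re := by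
      have h1 : ∫ t in Set.Ioc s T, ψ t s = ∫ t in Set.Ioc s T, (⟪B (d s), q t⟫_ℂ).re := by
        apply setIntegral_congr_fun measurableSet_Ioc
        intro t _
        exact hψq t
      have h2 : (∫ t in Set.Ioc s T, (⟪B (d s), q t⟫_ℂ)).re
          = ∫ t in Set.Ioc s T, (⟪B (d s), q t⟫_ℂ).re := by
        have := integral_re (𝕜 := ℂ) (μ := volume.restrict (Set.Ioc s T)) hinner_int
        simpa using this.symm
      rw [h1, ← h2, integral_inner hqIoc (B (d s))]
      exact inner_re_symm'' _ _
    rw [hstep1, hstep2, intervalIntegral.integral_of_le hs'.2]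
  rw [hLHS, hRHS]
  exact hswap

lemma norm_add_sq'' {E : Type*} [NormedAddCommGroup E] [InnerProductSpace ℂ E] (x y : E) :
    ‖x + y‖ ^ 2 = ‖x‖ ^ 2 + 2 * (⟪x, y⟫_ℂ).re + ‖y‖ ^ 2 := by
  have := norm_add_sq (𝕜 := ℂ) x y
  simpa [RCLike.re_to_complex] using this

lemma integrable_re_inner_cont_mul_int {E : Type*} [NormedAddCommGroup E]
    [InnerProductSpace ℂ E] [CompleteSpace E] {f h : ℝ → E} {a b : ℝ}
    (hf : ContinuousOn f (Set.Icc a b))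
    (hh : Integrable h (volume.restrict (Set.Icc a b))) :
    Integrable (fun t => (⟪f t, h t⟫_ℂ).re) (volume.restrict (Set.Icc a b)) := by
  have hφ : ContinuousOn (fun t => (innerSL ℂ (f t) : E →L[ℂ] ℂ)) (Set.Icc a b) :=
    (innerSL ℂ).continuous.comp_continuousOn hf
  have h1 : IntegrableOn (fun t => (innerSL ℂ (f t) : E →L[ℂ] ℂ) (h t)) (Set.Icc a b) volume :=
    integrableOn_clm_apply hφ hh
  have h2 := ContinuousLinearMap.integrable_comp Complex.reCLM h1
  simpa using h2

lemma costate_deriv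
    (A : H →L[ℂ] H) (B : U →L[ℂ] H) (C : H →L[ℂ] Y) (z : H)
    (T : ℝ) (P : ℝ → (H →L[ℂ] H))
    (hP' : ∀ t ∈ Set.Icc (0:ℝ) T, HasDerivAt P
      ((adjoint A) ∘L (P t) + (P t) ∘L A - (P t) ∘L B ∘L (adjoint B) ∘L (P t) +
        (adjoint C) ∘L C) t)
    (w : H) (hw1 : adjoint A w = z)
    (zw : ℝ → H)
    (hzw : ∀ t ∈ Set.Icc (0:ℝ) T, HasDerivAt zw
      ((adjoint A - (P t) ∘L B ∘L (adjoint B)) (zw t)) t)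
    (xstar : ℝ → H)
    (hxstar : ∀ t ∈ Set.Icc (0:ℝ) T, HasDerivAt xstar
      ((A - B ∘L (adjoint B) ∘L (P (T - t))) (xstar t) - (B ∘L (adjoint B)) (zw (T - t))) t) :
    ∀ s ∈ Set.Icc (0:ℝ) T, HasDerivAt (fun r => P (T - r) (xstar r) + zw (T - r) - w)
      (-((adjoint A) ((P (T - s)) (xstar s) + zw (T - s) - w))
        - ((adjoint C) (C (xstar s)) + z)) s := by
  intro s hs
  have hmem : T - s ∈ Set.Icc (0:ℝ) T := ⟨by linarith [hs.2], by linarith [hs.1]⟩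
  have hsub : HasDerivAt (fun r : ℝ => T - r) (-1 : ℝ) s := by
    simpa using (hasDerivAt_id s).const_sub T
  have hPc : HasDerivAt (fun r => P (T - r))
      ((-1 : ℝ) • ((adjoint A) ∘L (P (T - s)) + (P (T - s)) ∘L A -
        (P (T - s)) ∘L B ∘L (adjoint B) ∘L (P (T - s)) + (adjoint C) ∘L C)) s :=
    HasDerivAt.scomp s (hP' (T - s) hmem) hsub
  have hzc : HasDerivAt (fun r => zw (T - r))
      ((-1 : ℝ) • ((adjoint A - (P (T - s)) ∘L B ∘L (adjoint B)) (zw (T - s)))) s :=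
    HasDerivAt.scomp s (hzw (T - s) hmem) hsub
  have hPx := hasDerivAt_clm_apply' hPc (hxstar s hs)
  have htot := (hPx.add hzc).sub_const w
  refine htot.congr_deriv ?_
  simp only [neg_smul, one_smul, ContinuousLinearMap.add_apply, ContinuousLinearMap.comp_apply,
    ContinuousLinearMap.sub_apply, ContinuousLinearMap.neg_apply, map_add, map_sub, map_neg,
    ContinuousLinearMap.smul_apply]
  rw [← hw1]
  abel

/-- explicit solution of the generalized LQ problem: the feedback control
`u*(t) = −B* P(T−t) x*(t) − B* z_w(T−t)` (with `z_w` solving the adjoint closed-loop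
equation starting from the adjoint steady state `w`) generates the mild solution `x*`
and is optimal for the cost `J_T`. -/
theorem optimal_control_feedback
    (A : H →L[ℂ] H) (B : U →L[ℂ] H) (C : H →L[ℂ] Y) (z : H) (v : U)
    (T : ℝ) (hT : 0 < T) (x₀ : H)
    (P : ℝ → (H →L[ℂ] H)) (hP0 : P 0 = 0)
    (hP' : ∀ t ∈ Set.Icc (0:ℝ) T, HasDerivAt P
      ((adjoint A) ∘L (P t) + (P t) ∘L A - (P t) ∘L B ∘L (adjoint B) ∘L (P t) +
        (adjoint C) ∘L C) t)
    (w : H) (hw1 : adjoint A w = z) (hw2 : adjoint B w = v)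
    (zw : ℝ → H) (hzw0 : zw 0 = w)
    (hzw : ∀ t ∈ Set.Icc (0:ℝ) T, HasDerivAt zw
      ((adjoint A - (P t) ∘L B ∘L (adjoint B)) (zw t)) t)
    (xstar : ℝ → H) (hxstar0 : xstar 0 = x₀)
    (hxstar : ∀ t ∈ Set.Icc (0:ℝ) T, HasDerivAt xstar
      ((A - B ∘L (adjoint B) ∘L (P (T - t))) (xstar t) - (B ∘L (adjoint B)) (zw (T - t))) t)
    (ustar : ℝ → U)
    (hustar : ∀ t : ℝ, ustar t = -(adjoint B) (P (T - t) (xstar t)) - (adjoint B) (zw (T - t))) :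
    (∀ t ∈ Set.Icc (0:ℝ) T, xstar t = mildSol A B ustar x₀ t) ∧
    (∀ u : ℝ → U, MemLp u 2 (volume.restrict (Set.Icc 0 T)) →
      (∫ t in (0:ℝ)..T,
        (‖C (mildSol A B ustar x₀ t)‖ ^ 2 + ‖ustar t‖ ^ 2 +
          2 * (⟪z, mildSol A B ustar x₀ t⟫_ℂ).re + 2 * (⟪v, ustar t⟫_ℂ).re)) ≤
      (∫ t in (0:ℝ)..T,
        (‖C (mildSol A B u x₀ t)‖ ^ 2 + ‖u t‖ ^ 2 +
          2 * (⟪z, mildSol A B u x₀ t⟫_ℂ).re + 2 * (⟪v, u t⟫_ℂ).re))) := by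
  have hT' : (0:ℝ) ≤ T := hT.le
  have hmemT : ∀ t ∈ Set.Icc (0:ℝ) T, T - t ∈ Set.Icc (0:ℝ) T := fun t ht =>
    ⟨by linarith [ht.2], by linarith [ht.1]⟩
  have hxc : ∀ t ∈ Set.Icc (0:ℝ) T, ContinuousAt xstar t := fun t ht =>
    (hxstar t ht).continuousAt
  have hPcont : ∀ t ∈ Set.Icc (0:ℝ) T, ContinuousAt P t := fun t ht => (hP' t ht).continuousAt
  have hzwc : ∀ t ∈ Set.Icc (0:ℝ) T, ContinuousAt zw t := fun t ht => (hzw t ht).continuousAt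
  have hsubc : Continuous (fun r : ℝ => T - r) := continuous_const.sub continuous_id
  have huc : ∀ t ∈ Set.Icc (0:ℝ) T, ContinuousAt ustar t := by
    intro t ht
    have h1 : ContinuousAt (fun r => P (T - r)) t :=
      (hPcont (T - t) (hmemT t ht)).comp hsubc.continuousAt
    have h2 : ContinuousAt (fun r => zw (T - r)) t :=
      (hzwc (T - t) (hmemT t ht)).comp hsubc.continuousAt
    have h3 : ContinuousAt (fun r => P (T - r) (xstar r)) t :=
      continuousAt_clm_apply' h1 (hxc t ht)
    have h4 : ContinuousAt (fun r =>
        -(adjoint B) (P (T - r) (xstar r)) - (adjoint B) (zw (T - r))) t :=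
      (((adjoint B).continuous.continuousAt.comp h3).neg).sub
        ((adjoint B).continuous.continuousAt.comp h2)
    have hueq : ustar = fun r => -(adjoint B) (P (T - r) (xstar r)) - (adjoint B) (zw (T - r)) :=
      funext hustar
    rw [hueq]
    exact h4
  have part1 : ∀ t ∈ Set.Icc (0:ℝ) T, xstar t = mildSol A B ustar x₀ t := by
    have hf : ∀ t ∈ Set.Icc (0:ℝ) T, ContinuousAt (fun r => B (ustar r)) t := fun t ht =>
      B.continuous.continuousAt.comp (huc t ht)
    have hy : ∀ t ∈ Set.Icc (0:ℝ) T, HasDerivAt xstar (A (xstar t) + B (ustar t)) t := by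
      intro t ht
      have h0 := hxstar t ht
      convert h0 using 1
      rw [hustar t]
      simp only [ContinuousLinearMap.sub_apply, ContinuousLinearMap.comp_apply, map_sub, map_neg]
      abel
    intro t ht
    have := mild_forward A hf hy t ht
    rw [hxstar0] at this
    exact this
  refine ⟨part1, ?_⟩
  intro u hu
  haveI : IsFiniteMeasure (volume.restrict (Set.Icc (0:ℝ) T)) := by
    constructor
    rw [Measure.restrict_apply_univ]
    exact measure_Icc_lt_top
  set d : ℝ → U := fun s => u s - ustar s with hd_def
  have hus_contOn : ContinuousOn ustar (Set.Icc 0 T) := fun t ht =>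
    (huc t ht).continuousWithinAt
  have hxs_contOn : ContinuousOn xstar (Set.Icc 0 T) := fun t ht =>
    (hxc t ht).continuousWithinAt
  have hu_int : Integrable u (volume.restrict (Set.Icc 0 T)) := hu.integrable one_le_two
  have hus_int : Integrable ustar (volume.restrict (Set.Icc 0 T)) :=
    hus_contOn.integrableOn_Icc
  have hd_int : Integrable d (volume.restrict (Set.Icc 0 T)) := hu_int.sub hus_int
  have hBus : IntegrableOn (fun s => B (ustar s)) (Set.Icc 0 T) volume :=
    B.integrable_comp hus_int
  have hBd : IntegrableOn (fun s => B (d s)) (Set.Icc 0 T) volume :=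
    B.integrable_comp hd_int
  set e : ℝ → H := fun t => ∫ s in (0:ℝ)..t, NormedSpace.exp ((t - s) • A) (B (d s))
    with he_def
  have he_cont : ContinuousOn e (Set.Icc 0 T) := continuousOn_kernelIntegral A hT' hBd
  have hXs_cont : ContinuousOn (fun t => mildSol A B ustar x₀ t) (Set.Icc 0 T) := by
    apply ContinuousOn.add
    · exact (Continuous.clm_apply (expCont A) continuous_const).continuousOn
    · exact continuousOn_kernelIntegral A hT' hBus
  have hdecomp : ∀ t ∈ Set.Icc (0:ℝ) T, mildSol A B u x₀ t = xstar t + e t := by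
    intro t ht
    have h1 : IntervalIntegrable (fun s => NormedSpace.exp ((t - s) • A) (B (ustar s)))
        volume 0 t := intervalIntegrable_kernel A hBus ht t
    have h2 : IntervalIntegrable (fun s => NormedSpace.exp ((t - s) • A) (B (d s)))
        volume 0 t := intervalIntegrable_kernel A hBd ht t
    have hsplit : (fun s => NormedSpace.exp ((t - s) • A) (B (u s)))
        = fun s => NormedSpace.exp ((t - s) • A) (B (ustar s))
            + NormedSpace.exp ((t - s) • A) (B (d s)) := by
      funext s
      have : u s = ustar s + d s := by simp [hd_def]
      rw [this, map_add, map_add]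
    show NormedSpace.exp (t • A) x₀
        + (∫ s in (0:ℝ)..t, NormedSpace.exp ((t - s) • A) (B (u s))) = _
    rw [hsplit, intervalIntegral.integral_add h1 h2, part1 t ht]
    show _ = NormedSpace.exp (t • A) x₀
        + (∫ s in (0:ℝ)..t, NormedSpace.exp ((t - s) • A) (B (ustar s))) + e t
    rw [he_def]
    abel
  -- MemLp facts
  have hus2 : MemLp ustar 2 (volume.restrict (Set.Icc 0 T)) := by
    obtain ⟨M, hM⟩ := IsCompact.exists_bound_of_continuousOn isCompact_Icc hus_contOn
    refine MemLp.of_bound (hus_contOn.aestronglyMeasurable measurableSet_Icc) M ?_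
    filter_upwards [ae_restrict_mem measurableSet_Icc] with s hs
    exact hM s hs
  have hd2 : MemLp d 2 (volume.restrict (Set.Icc 0 T)) := hu.sub hus2
  have hd_sq_int : Integrable (fun t => ‖d t‖ ^ 2) (volume.restrict (Set.Icc 0 T)) := by
    have h := hd2.integrable_norm_rpow (by norm_num) (by norm_num)
    have heq : (fun t => ‖d t‖ ^ ((2:ENNReal).toReal)) = fun t => ‖d t‖ ^ 2 := by
      funext t
      rw [show ((2:ENNReal).toReal) = ((2:ℕ):ℝ) by norm_num, Real.rpow_natCast]
    rwa [heq] at h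
  -- costate
  set g : ℝ → H := fun t => adjoint C (C (xstar t)) + z with hg_def
  have hg_contAt : ∀ t ∈ Set.Icc (0:ℝ) T, ContinuousAt g t := by
    intro t ht
    exact (((adjoint C).continuous.comp C.continuous).continuousAt.comp (hxc t ht)).add
      continuousAt_const
  have hg_cont : ContinuousOn g (Set.Icc 0 T) := fun t ht => (hg_contAt t ht).continuousWithinAt
  set p : ℝ → H := fun r => P (T - r) (xstar r) + zw (T - r) - w with hp_def
  have hp' : ∀ s ∈ Set.Icc (0:ℝ) T, HasDerivAt p (-((adjoint A) (p s)) - g s) s :=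
    costate_deriv A B C z T P hP' w hw1 zw hzw xstar hxstar
  have hpT : p T = 0 := by
    rw [hp_def]
    simp only [sub_self, hP0, hzw0, ContinuousLinearMap.zero_apply]
    abel
  have hprep : ∀ s ∈ Set.Icc (0:ℝ) T,
      p s = ∫ t in s..T, NormedSpace.exp ((t - s) • adjoint A) (g t) :=
    mild_backward (adjoint A) hg_contAt hp' hpT
  have hBp : ∀ s : ℝ, adjoint B (p s) = -(ustar s + v) := by
    intro s
    rw [hp_def]
    simp only [map_add, map_sub, hw2, hustar s]
    abel
  -- cross term
  have hswap := triangle_swap A B hT' hg_cont hd_int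
  have hc1 : (∫ t in (0:ℝ)..T, (⟪g t, e t⟫_ℂ).re)
      = ∫ s in (0:ℝ)..T, -(⟪ustar s + v, d s⟫_ℂ).re := by
    rw [he_def]
    rw [hswap]
    apply intervalIntegral.integral_congr
    intro s hs
    rw [Set.uIcc_of_le hT'] at hs
    simp only
    rw [← hprep s hs, ← ContinuousLinearMap.adjoint_inner_left B (d s) (p s), hBp s,
      inner_neg_left]
    simp
    rw [inner_add_left, Complex.add_re]; ring
  -- pointwise expansion
  have hexpand : ∀ t ∈ Set.Icc (0:ℝ) T,
      ‖C (mildSol A B u x₀ t)‖ ^ 2 + ‖u t‖ ^ 2 +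
          2 * (⟪z, mildSol A B u x₀ t⟫_ℂ).re + 2 * (⟪v, u t⟫_ℂ).re
      = (‖C (mildSol A B ustar x₀ t)‖ ^ 2 + ‖ustar t‖ ^ 2 +
          2 * (⟪z, mildSol A B ustar x₀ t⟫_ℂ).re + 2 * (⟪v, ustar t⟫_ℂ).re)
        + (‖C (e t)‖ ^ 2 + ‖d t‖ ^ 2) + 2 * (⟪g t, e t⟫_ℂ).re
        + 2 * (⟪ustar t + v, d t⟫_ℂ).re := by
    intro t ht
    have hX := hdecomp t ht
    have hXs : mildSol A B ustar x₀ t = xstar t := (part1 t ht).symm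
    have hut : u t = ustar t + d t := by simp [hd_def]
    rw [hX, hXs, hut]
    rw [map_add C, norm_add_sq'' (C (xstar t)) (C (e t)), norm_add_sq'' (ustar t) (d t)]
    rw [inner_add_right z, inner_add_right v, Complex.add_re, Complex.add_re]
    rw [hg_def]
    simp only [inner_add_left, Complex.add_re,
      ContinuousLinearMap.adjoint_inner_left]
    ring
  -- interval integrabilities
  have hre_c2_int : Integrable (fun t => (⟪ustar t + v, d t⟫_ℂ).re)
      (volume.restrict (Set.Icc 0 T)) :=
    integrable_re_inner_cont_mul_int (hus_contOn.add continuousOn_const) hd_int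
  have hI_lstar : IntervalIntegrable (fun t =>
      ‖C (mildSol A B ustar x₀ t)‖ ^ 2 + ‖ustar t‖ ^ 2 +
        2 * (⟪z, mildSol A B ustar x₀ t⟫_ℂ).re + 2 * (⟪v, ustar t⟫_ℂ).re) volume 0 T := by
    apply ContinuousOn.intervalIntegrable
    rw [Set.uIcc_of_le hT']
    have h1 : ContinuousOn (fun t => C (mildSol A B ustar x₀ t)) (Set.Icc 0 T) :=
      C.continuous.comp_continuousOn hXs_cont
    exact (((h1.norm.pow 2).add (hus_contOn.norm.pow 2)).add
      (continuousOn_const.mul (Complex.continuous_re.comp_continuousOn (continuousOn_const.inner hXs_cont)))).add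
      (continuousOn_const.mul (Complex.continuous_re.comp_continuousOn (continuousOn_const.inner hus_contOn)))
  have hI_q : IntervalIntegrable (fun t => ‖C (e t)‖ ^ 2 + ‖d t‖ ^ 2) volume 0 T := by
    apply IntervalIntegrable.add
    · apply ContinuousOn.intervalIntegrable
      rw [Set.uIcc_of_le hT']
      exact (C.continuous.comp_continuousOn he_cont).norm.pow 2
    · exact intervalIntegrable_of_integrableOn_Icc hT' hd_sq_int
  have hI_c1 : IntervalIntegrable (fun t => 2 * (⟪g t, e t⟫_ℂ).re) volume 0 T := by
    apply ContinuousOn.intervalIntegrable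
    rw [Set.uIcc_of_le hT']
    exact continuousOn_const.mul (Complex.continuous_re.comp_continuousOn (hg_cont.inner he_cont))
  have hI_c1' : IntervalIntegrable (fun t => (⟪g t, e t⟫_ℂ).re) volume 0 T := by
    apply ContinuousOn.intervalIntegrable
    rw [Set.uIcc_of_le hT']
    exact Complex.continuous_re.comp_continuousOn (hg_cont.inner he_cont)
  have hI_c2 : IntervalIntegrable (fun t => 2 * (⟪ustar t + v, d t⟫_ℂ).re) volume 0 T :=
    (intervalIntegrable_of_integrableOn_Icc hT' hre_c2_int).const_mul 2
  have hI_c2' : IntervalIntegrable (fun t => (⟪ustar t + v, d t⟫_ℂ).re) volume 0 T :=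
    intervalIntegrable_of_integrableOn_Icc hT' hre_c2_int
  -- split the integral
  have hsplit : (∫ t in (0:ℝ)..T,
        (‖C (mildSol A B u x₀ t)‖ ^ 2 + ‖u t‖ ^ 2 +
          2 * (⟪z, mildSol A B u x₀ t⟫_ℂ).re + 2 * (⟪v, u t⟫_ℂ).re))
      = (∫ t in (0:ℝ)..T,
          (‖C (mildSol A B ustar x₀ t)‖ ^ 2 + ‖ustar t‖ ^ 2 +
            2 * (⟪z, mildSol A B ustar x₀ t⟫_ℂ).re + 2 * (⟪v, ustar t⟫_ℂ).re))
        + (∫ t in (0:ℝ)..T, (‖C (e t)‖ ^ 2 + ‖d t‖ ^ 2))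
        + (∫ t in (0:ℝ)..T, 2 * (⟪g t, e t⟫_ℂ).re)
        + (∫ t in (0:ℝ)..T, 2 * (⟪ustar t + v, d t⟫_ℂ).re) := by
    rw [intervalIntegral.integral_congr (g := fun t =>
        (‖C (mildSol A B ustar x₀ t)‖ ^ 2 + ‖ustar t‖ ^ 2 +
          2 * (⟪z, mildSol A B ustar x₀ t⟫_ℂ).re + 2 * (⟪v, ustar t⟫_ℂ).re)
        + (‖C (e t)‖ ^ 2 + ‖d t‖ ^ 2) + 2 * (⟪g t, e t⟫_ℂ).re
        + 2 * (⟪ustar t + v, d t⟫_ℂ).re)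
      (by rw [Set.uIcc_of_le hT']; exact fun t ht => hexpand t ht)]
    rw [intervalIntegral.integral_add ((hI_lstar.add hI_q).add hI_c1) hI_c2]
    rw [intervalIntegral.integral_add (hI_lstar.add hI_q) hI_c1]
    rw [intervalIntegral.integral_add hI_lstar hI_q]
  have hzero : (∫ t in (0:ℝ)..T, 2 * (⟪g t, e t⟫_ℂ).re)
      + (∫ t in (0:ℝ)..T, 2 * (⟪ustar t + v, d t⟫_ℂ).re) = 0 := by
    rw [intervalIntegral.integral_const_mul, intervalIntegral.integral_const_mul, hc1,
      intervalIntegral.integral_neg]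
    ring
  have hqnn : 0 ≤ ∫ t in (0:ℝ)..T, (‖C (e t)‖ ^ 2 + ‖d t‖ ^ 2) := by
    apply intervalIntegral.integral_nonneg hT'
    intro t _
    positivity
  rw [hsplit]
  linarith
end
end
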